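/- arXiv:1506.04225 — 3 statements merged into one kernel-verified Lean document; each statement's English description precedes it below -/
import Mathlib

section
/- For every natural number k there exists a 3-critical graph J_k with exactly 8k + 9 vertices and 11k + 12 edges; consequently there is an infinite sequence of 3-critical graphs whose average degrees approach 2 + 3/4 from below. -/
/-- A proper edge coloring of `G` with `n` colors: edges sharing an endpoint
get distinct colors. -/
def EdgeColorable {V : Type*} (G : SimpleGraph V) (n : ℕ) : Prop :=
  ∃ C : G.edgeSet → Fin n, ∀ e₁ e₂ : G.edgeSet, e₁ ≠ e₂ →
    (∃ v, v ∈ (e₁ : Sym2 V) ∧ v ∈ (e₂ : Sym2 V)) → C e₁ ≠ C e₂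

/-- The chromatic index (edge chromatic number) of `G`. -/
noncomputable def chromIndex {V : Type*} (G : SimpleGraph V) : ℕ :=
  sInf {n | EdgeColorable G n}

/-- The degree of a vertex. -/
noncomputable def deg {V : Type*} (G : SimpleGraph V) (v : V) : ℕ :=
  (G.neighborSet v).ncard

/-- A graph with maximum degree `k` is `k`-critical if `χ'(G) = k + 1` and
`χ'(G - e) = k` for every edge `e`. -/
def IsCritical {V : Type*} (k : ℕ) (G : SimpleGraph V) : Prop :=
  (∀ v, deg G v ≤ k) ∧ (∃ v, deg G v = k) ∧
  chromIndex G = k + 1 ∧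
  ∀ e ∈ G.edgeSet, chromIndex (G.deleteEdges {e}) = k

/-- The Hajós join of `G₁` and `G₂` along edges `v₁v₂` and `v₃v₄`: delete the
two edges, identify `v₁` with `v₃`, and add the edge `v₂v₄`. -/
def hajosJoin {V₁ V₂ : Type*} (G₁ : SimpleGraph V₁) (G₂ : SimpleGraph V₂)
    (v₁ v₂ : V₁) (v₃ v₄ : V₂) :
    SimpleGraph (V₁ ⊕ {x : V₂ // x ≠ v₃}) :=
  SimpleGraph.fromRel fun a b =>
    match a, b with
    | Sum.inl x, Sum.inl y => G₁.Adj x y ∧ s(x, y) ≠ s(v₁, v₂)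
    | Sum.inl x, Sum.inr y => (x = v₁ ∧ G₂.Adj v₃ y.1 ∧ y.1 ≠ v₄) ∨ (x = v₂ ∧ y.1 = v₄)
    | Sum.inr _, Sum.inl _ => False
    | Sum.inr x, Sum.inr y => G₂.Adj x.1 y.1 ∧ s(x.1, y.1) ≠ s(v₃, v₄)

/-- `G` is a Hajós join of `G₁` and `G₂`. -/
def IsHajosJoin {W V₁ V₂ : Type*} (G : SimpleGraph W)
    (G₁ : SimpleGraph V₁) (G₂ : SimpleGraph V₂) : Prop :=
  ∃ (v₁ v₂ : V₁) (v₃ v₄ : V₂), G₁.Adj v₁ v₂ ∧ G₂.Adj v₃ v₄ ∧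
    Nonempty (G ≃g hajosJoin G₁ G₂ v₁ v₂ v₃ v₄)

/-- Vertices of the Petersen graph: 2-element subsets of a 5-element set. -/
abbrev KVert : Type := {s : Finset (Fin 5) // s.card = 2}

/-- The Petersen graph, as the Kneser graph K(5,2). -/
def Petersen : SimpleGraph KVert where
  Adj a b := Disjoint a.1 b.1
  symm := ⟨fun a b h => h.symm⟩
  loopless := ⟨fun a h => by
    have h2 := a.2
    have h' : (a.1 : Finset (Fin 5)) = ∅ := disjoint_self.mp h
    rw [h'] at h2
    simp at h2⟩

/-- A fixed vertex of the Petersen graph. -/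
def pstarV : KVert := ⟨{0, 1}, by decide⟩

/-- The vertex set of the Petersen graph minus one vertex. -/
abbrev PV : Type := {x : KVert // x ≠ pstarV}

/-- `P*`: the Petersen graph with one vertex deleted. -/
def PStar : SimpleGraph PV where
  Adj a b := Petersen.Adj a.1 b.1
  symm := ⟨fun a b h => Petersen.adj_symm h⟩
  loopless := ⟨fun a h => Petersen.irrefl h⟩

instance : DecidableRel Petersen.Adj := fun a b =>
  inferInstanceAs (Decidable (Disjoint a.1 b.1))
instance : DecidableRel PStar.Adj := fun a b =>
  inferInstanceAs (Decidable (Disjoint a.1.1 b.1.1))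

def mkv (a b : Fin 5) (h : ({a,b}:Finset (Fin 5)).card = 2 := by decide)
    (h2 : (⟨{a,b},h⟩:KVert) ≠ pstarV := by decide) : PV := ⟨⟨{a,b},h⟩, h2⟩

/-- list of all edges of PStar -/
def pedges : List (Sym2 PV) := [s((mkv 0 2), (mkv 1 3)), s((mkv 0 2), (mkv 1 4)), s((mkv 0 2), (mkv 3 4)), s((mkv 0 3), (mkv 1 2)), s((mkv 0 3), (mkv 1 4)), s((mkv 0 3), (mkv 2 4)), s((mkv 0 4), (mkv 1 2)), s((mkv 0 4), (mkv 1 3)), s((mkv 0 4), (mkv 2 3)), s((mkv 1 2), (mkv 3 4)), s((mkv 1 3), (mkv 2 4)), s((mkv 1 4), (mkv 2 3))]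

lemma pedges_nodup : pedges.Nodup := by decide

lemma pedges_complete : ∀ s, s ∈ PStar.edgeSet ↔ s ∈ pedges := by
  intro s
  induction s using Sym2.ind with
  | _ x y =>
    rw [SimpleGraph.mem_edgeSet]
    revert x y
    decide

section listec
variable {V : Type*} [DecidableEq V] (G : SimpleGraph V)

lemma ec_of_fn (L : List (Sym2 V))
    (hL : ∀ s, s ∈ G.edgeSet ↔ s ∈ L) {n : ℕ} (col : ℕ → Fin n)
    (h : ∀ i j : Fin L.length, L.get i ≠ L.get j →
      (∃ v, v ∈ L.get i ∧ v ∈ L.get j) → col i.1 ≠ col j.1) :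
    EdgeColorable G n := by
  refine ⟨fun e => col (List.idxOf e.1 L), ?_⟩
  intro e f hne hsh
  have gi : L.get ⟨List.idxOf e.1 L, List.idxOf_lt_length_iff.2 ((hL _).1 e.2)⟩ = e.1 := by
    simp [List.get_eq_getElem, List.getElem_idxOf]
  have gj : L.get ⟨List.idxOf f.1 L, List.idxOf_lt_length_iff.2 ((hL _).1 f.2)⟩ = f.1 := by
    simp [List.get_eq_getElem, List.getElem_idxOf]
  apply h ⟨List.idxOf e.1 L, List.idxOf_lt_length_iff.2 ((hL _).1 e.2)⟩
    ⟨List.idxOf f.1 L, List.idxOf_lt_length_iff.2 ((hL _).1 f.2)⟩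
  · rw [gi, gj]; exact fun hh => hne (Subtype.ext hh)
  · rw [gi, gj]; exact hsh

end listec

/-- backtracking search for proper 3-colorings -/
def extendable (conf : ℕ → ℕ → Bool) : List ℕ → List (ℕ × Fin 3) → Bool
  | [], _ => true
  | i :: rest, acc =>
      (List.finRange 3).any fun c =>
        (acc.all fun p => !(conf i p.1) || p.2 != c) && extendable conf rest ((i, c) :: acc)

lemma extendable_of_proper (conf : ℕ → ℕ → Bool) (N : ℕ) (f : ℕ → Fin 3)
    (hf : ∀ i j, i < N → j < N → i ≠ j → conf i j = true → f i ≠ f j) :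
    ∀ (L : List ℕ) (acc : List (ℕ × Fin 3)),
      (∀ i ∈ L, i < N) → (∀ p ∈ acc, p.1 < N ∧ p.2 = f p.1) →
      (L ++ acc.map Prod.fst).Nodup →
      extendable conf L acc = true := by
  intro L
  induction L with
  | nil => intro acc _ _ _; rfl
  | cons i rest ih =>
    intro acc hLN hacc hnd
    have hiN : i < N := hLN i (by simp)
    have hnd0 : (i :: (rest ++ acc.map Prod.fst)).Nodup := hnd
    have hnd' : (rest ++ ((i, f i) :: acc).map Prod.fst).Nodup := by
      simp only [List.map_cons]
      exact (List.Perm.nodup_iff List.perm_middle).2 hnd0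
    simp only [extendable, List.any_eq_true]
    refine ⟨f i, List.mem_finRange _, ?_⟩
    rw [Bool.and_eq_true]
    constructor
    · rw [List.all_eq_true]
      intro p hp
      have hpN := (hacc p hp).1
      have hpv := (hacc p hp).2
      have hip : i ≠ p.1 := by
        intro hh
        exact (List.nodup_cons.1 hnd0).1
          (List.mem_append.2 (Or.inr (hh ▸ List.mem_map_of_mem (f := Prod.fst) hp)))
      by_cases hc : conf i p.1 = true
      · have hne := hf i p.1 hiN hpN hip hc
        simp only [hc, Bool.not_true, Bool.false_or, bne_iff_ne, ne_eq, hpv]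
        exact fun hh => hne hh.symm
      · simp [hc]
    · refine ih ((i, f i) :: acc) (fun j hj => hLN j (by simp [hj])) ?_ hnd'
      intro p hp
      rcases List.mem_cons.1 hp with rfl | hp'
      · exact ⟨hiN, rfl⟩
      · exact hacc p hp'

lemma not_ec3_of_search {V : Type*} [DecidableEq V] (G : SimpleGraph V) (L : List (Sym2 V))
    (hL : ∀ s, s ∈ G.edgeSet ↔ s ∈ L) (hnd : L.Nodup) (conf : ℕ → ℕ → Bool)
    (hconf : ∀ i j : Fin L.length, conf i.1 j.1 = true →
      (∃ v, v ∈ L.get i ∧ v ∈ L.get j))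
    (hsearch : extendable conf (List.range L.length) [] = false) :
    ¬ EdgeColorable G 3 := by
  rintro ⟨C, hC⟩
  classical
  set f : ℕ → Fin 3 := fun i =>
    if h : i < L.length then C ⟨L.get ⟨i, h⟩, (hL _).2 (L.get_mem _)⟩ else 0 with hfdef
  have hf : ∀ i j, i < L.length → j < L.length → i ≠ j → conf i j = true → f i ≠ f j := by
    intro i j hi hj hij hc
    have hget : L.get ⟨i, hi⟩ ≠ L.get ⟨j, hj⟩ := by
      intro hh
      exact hij (congrArg Fin.val ((List.nodup_iff_injective_get.1 hnd) hh))
    simp only [hfdef, dif_pos hi, dif_pos hj]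
    exact hC _ _ (fun hh => hget (congrArg Subtype.val hh)) (hconf ⟨i, hi⟩ ⟨j, hj⟩ hc)
  have := extendable_of_proper conf L.length f hf (List.range L.length) []
    (fun i hi => List.mem_range.1 hi) (by simp) (by simp [List.nodup_range])
  rw [hsearch] at this
  exact Bool.false_ne_true this

def ptbl : List (List Bool) := [[false, true, true, false, false, false, false, true, false, false, true, false],
  [true, false, true, false, true, false, false, false, false, false, false, true],
  [true, true, false, false, false, false, false, false, false, true, false, false],
  [false, false, false, false, true, true, true, false, false, true, false, false],
  [false, true, false, true, false, true, false, false, false, false, false, true],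
  [false, false, false, true, true, false, false, false, false, false, true, false],
  [false, false, false, true, false, false, false, true, true, true, false, false],
  [true, false, false, false, false, false, true, false, true, false, true, false],
  [false, false, false, false, false, false, true, true, false, false, false, true],
  [false, false, true, true, false, false, true, false, false, false, false, false],
  [true, false, false, false, false, true, false, true, false, false, false, false],
  [false, true, false, false, true, false, false, false, true, false, false, false]]

def pconf : ℕ → ℕ → Bool := fun i j => ((ptbl.getD i []).getD j false)

lemma pstar_not_ec3 : ¬ EdgeColorable PStar 3 := by
  refine not_ec3_of_search PStar pedges pedges_complete pedges_nodup pconf ?_ (by decide)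
  decide

lemma edgelist_delete {V : Type*} [DecidableEq V] (G : SimpleGraph V) (L : List (Sym2 V))
    (hL : ∀ s, s ∈ G.edgeSet ↔ s ∈ L) (hnd : L.Nodup) (d : Sym2 V) :
    ∀ s, s ∈ (G.deleteEdges {d}).edgeSet ↔ s ∈ L.erase d := by
  intro s
  rw [SimpleGraph.edgeSet_deleteEdges, hnd.mem_erase_iff]
  simp only [Set.mem_diff, Set.mem_singleton_iff, hL s]
  tauto

/-- named constants in PV -/
def pA : PV := mkv 2 4
def pB : PV := mkv 0 3
def pC : PV := mkv 2 3
def pD : PV := mkv 0 4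
def pU : PV := mkv 1 4
def pN : PV := mkv 1 3
def pM1 : PV := mkv 1 2
def pO1 : PV := mkv 0 2
def pO2 : PV := mkv 1 2

lemma pstar_ec4 : EdgeColorable PStar 4 := by
  refine ec_of_fn PStar pedges pedges_complete
    (fun m => ([0, 1, 2, 0, 2, 1, 1, 2, 0, 3, 3, 3] : List (Fin 4)).getD m 0) (by decide)

def pcols3 : List (List (Fin 3)) := [[0, 1, 0, 1, 2, 1, 2, 0, 2, 0, 2], [0, 1, 0, 1, 2, 1, 2, 0, 2, 1, 2], [0, 1, 1, 0, 2, 0, 2, 1, 2, 1, 2], [0, 1, 2, 0, 1, 2, 1, 0, 0, 2, 2], [0, 1, 2, 0, 1, 2, 1, 0, 1, 2, 2], [0, 1, 2, 1, 0, 2, 1, 0, 0, 2, 2], [0, 1, 2, 0, 2, 1, 1, 2, 1, 2, 0], [0, 1, 2, 0, 2, 1, 2, 1, 1, 2, 0], [0, 1, 2, 0, 2, 1, 2, 1, 1, 2, 0], [0, 1, 2, 1, 0, 2, 0, 2, 1, 1, 2], [0, 1, 2, 1, 0, 2, 2, 1, 0, 0, 2], [0, 1, 2, 0, 2, 1, 2,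 1, 0, 1, 2]]

lemma pstar_del : ∀ e ∈ PStar.edgeSet, EdgeColorable (PStar.deleteEdges {e}) 3 := by
  intro e he
  have he' : e ∈ pedges := (pedges_complete e).1 he
  have key : ∀ k : Fin pedges.length,
      ∀ i j : Fin (pedges.erase (pedges.get k)).length,
        (pedges.erase (pedges.get k)).get i ≠ (pedges.erase (pedges.get k)).get j →
        (∃ v, v ∈ (pedges.erase (pedges.get k)).get i ∧
          v ∈ (pedges.erase (pedges.get k)).get j) →
        (pcols3.getD k.1 []).getD i.1 0 ≠ (pcols3.getD k.1 []).getD j.1 0 := by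
    decide
  have hlt : List.idxOf e pedges < pedges.length := List.idxOf_lt_length_iff.2 he'
  have he2 : pedges.get ⟨List.idxOf e pedges, hlt⟩ = e := by
    simp [List.get_eq_getElem, List.getElem_idxOf]
  have h := key ⟨List.idxOf e pedges, hlt⟩
  rw [he2] at h
  exact ec_of_fn _ (pedges.erase e)
    (edgelist_delete PStar pedges pedges_complete pedges_nodup e)
    (fun m => (pcols3.getD (List.idxOf e pedges) []).getD m 0) h

/-- P* local structure facts -/
lemma adj_pA : ∀ q, PStar.Adj pA q ↔ q = pB ∨ q = pN := by decide
lemma adj_pB : ∀ q, PStar.Adj pB q ↔ q = pA ∨ q = pM1 ∨ q = pU := by decide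
lemma adj_pC : ∀ q, PStar.Adj pC q ↔ q = pD ∨ q = pU := by decide
lemma adj_pD : ∀ q, PStar.Adj pD q ↔ q = pC ∨ q = pM1 ∨ q = pN := by decide
lemma pstar_deg_le : ∀ q, (PStar.neighborFinset q).card ≤ 3 := by decide
lemma pstar_deg3 : (PStar.neighborFinset pO1).card = 3 ∧
    (PStar.neighborFinset pO2).card = 3 ∧ (PStar.neighborFinset pD).card = 3 := by decide

/-! ### The family J_k -/

abbrev PV' : Type := {q : PV // q ≠ pC}
abbrev VT (k : ℕ) : Type := PV ⊕ (Fin k × PV')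

def emb (k : ℕ) : VT k → VT (k+1)
  | Sum.inl p => Sum.inl p
  | Sum.inr (i, q) => Sum.inr (i.castSucc, q)

lemma emb_inj (k : ℕ) : Function.Injective (emb k) := by
  rintro (x|⟨i,q⟩) (y|⟨j,r⟩) h <;> simp [emb] at h ⊢
  · exact h
  · exact h

def mkL (k : ℕ) (q : PV') : VT (k+1) := Sum.inr (Fin.last k, q)

def cst (p : PV') : (k : ℕ) → VT k
  | 0 => Sum.inl p.1
  | (k+1) => mkL k p

lemma cst_inj {p q : PV'} {k : ℕ} (h : cst p k = cst q k) : p = q := by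
  cases k with
  | zero =>
    simp only [cst, Sum.inl.injEq] at h
    exact Subtype.ext h
  | succ k =>
    simp only [cst, mkL, Sum.inr.injEq, Prod.mk.injEq, true_and] at h
    exact h

def pA' : PV' := ⟨pA, by decide⟩
def pB' : PV' := ⟨pB, by decide⟩
def pN' : PV' := ⟨pN, by decide⟩
def pM1' : PV' := ⟨pM1, by decide⟩
def pU' : PV' := ⟨pU, by decide⟩

def A (k : ℕ) : VT k := cst pA' k
def B (k : ℕ) : VT k := cst pB' k
def N (k : ℕ) : VT k := cst pN' k
def M1 (k : ℕ) : VT k := cst pM1' k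
def M2 (k : ℕ) : VT k := cst pU' k

def kap (k : ℕ) (q : PV) : VT (k+1) :=
  if h : q = pC then emb k (A k) else Sum.inr (Fin.last k, ⟨q, h⟩)

lemma kap_pC (k : ℕ) : kap k pC = emb k (A k) := dif_pos rfl
lemma kap_of_ne (k : ℕ) {q : PV} (h : q ≠ pC) : kap k q = Sum.inr (Fin.last k, ⟨q, h⟩) :=
  dif_neg h

lemma emb_ne_kap (k : ℕ) (x : VT k) {q : PV} (hq : q ≠ pC) : emb k x ≠ kap k q := by
  rw [kap_of_ne k hq]
  rcases x with p | ⟨i, r⟩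
  · simp [emb]
  · simp only [emb, ne_eq, Sum.inr.injEq, Prod.mk.injEq, not_and]
    intro h
    exact absurd h (Fin.castSucc_lt_last i).ne

lemma kap_inj (k : ℕ) : Function.Injective (kap k) := by
  intro p q h
  by_cases hp : p = pC <;> by_cases hq : q = pC
  · rw [hp, hq]
  · rw [hp, kap_pC] at h; exact absurd h (emb_ne_kap k _ hq)
  · rw [hq, kap_pC] at h; exact absurd h.symm (emb_ne_kap k _ hp)
  · rw [kap_of_ne k hp, kap_of_ne k hq] at h
    simp only [Sum.inr.injEq, Prod.mk.injEq, Subtype.mk.injEq] at h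
    exact h.2

def e0 : VT 0 ≃ PV where
  toFun := Sum.elim id (fun p => (p.1.elim0))
  invFun := Sum.inl
  left_inv := by
    rintro (x | ⟨i, q⟩)
    · rfl
    · exact i.elim0
  right_inv := fun q => rfl

def J : (k : ℕ) → SimpleGraph (VT k)
  | 0 => PStar.comap e0
  | (k+1) =>
    { Adj := fun u v =>
        (∃ x y, u = emb k x ∧ v = emb k y ∧ (J k).Adj x y ∧ s(x,y) ≠ s(A k, B k)) ∨
        (∃ p q, u = kap k p ∧ v = kap k q ∧ PStar.Adj p q ∧ s(p,q) ≠ s(pC, pD)) ∨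
        (u = emb k (B k) ∧ v = kap k pD) ∨ (v = emb k (B k) ∧ u = kap k pD)
      symm := by
        refine ⟨?_⟩
        rintro u v (⟨x, y, h1, h2, h3, h4⟩ | ⟨p, q, h1, h2, h3, h4⟩ | ⟨h1, h2⟩ | ⟨h1, h2⟩)
        · exact Or.inl ⟨y, x, h2, h1, h3.symm, by rwa [Sym2.eq_swap]⟩
        · exact Or.inr (Or.inl ⟨q, p, h2, h1, h3.symm, by rwa [Sym2.eq_swap]⟩)
        · exact Or.inr (Or.inr (Or.inr ⟨h1, h2⟩))
        · exact Or.inr (Or.inr (Or.inl ⟨h1, h2⟩))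
      loopless := by
        refine ⟨?_⟩
        rintro u (⟨x, y, h1, h2, h3, h4⟩ | ⟨p, q, h1, h2, h3, h4⟩ | ⟨h1, h2⟩ | ⟨h1, h2⟩)
        · obtain rfl := emb_inj k (h1.symm.trans h2); exact (J k).loopless.irrefl _ h3
        · obtain rfl := kap_inj k (h1.symm.trans h2); exact PStar.loopless.irrefl _ h3
        · exact emb_ne_kap k (B k) (by decide) (h1.symm.trans h2)
        · exact emb_ne_kap k (B k) (by decide) (h1.symm.trans h2) }

lemma J_succ_adj (k : ℕ) (u v : VT (k+1)) : (J (k+1)).Adj u v ↔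
    ((∃ x y, u = emb k x ∧ v = emb k y ∧ (J k).Adj x y ∧ s(x,y) ≠ s(A k, B k)) ∨
     (∃ p q, u = kap k p ∧ v = kap k q ∧ PStar.Adj p q ∧ s(p,q) ≠ s(pC, pD)) ∨
     (u = emb k (B k) ∧ v = kap k pD) ∨ (v = emb k (B k) ∧ u = kap k pD)) := Iff.rfl

lemma cst_ne_cst {p q : PV'} {k : ℕ} (h : p ≠ q) : cst p k ≠ cst q k :=
  fun hh => h (cst_inj hh)

lemma A_ne_B (k : ℕ) : A k ≠ B k := cst_ne_cst (by decide)
lemma N_ne_B (k : ℕ) : N k ≠ B k := cst_ne_cst (by decide)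
lemma N_ne_A (k : ℕ) : N k ≠ A k := cst_ne_cst (by decide)
lemma M1_ne_A (k : ℕ) : M1 k ≠ A k := cst_ne_cst (by decide)
lemma M2_ne_A (k : ℕ) : M2 k ≠ A k := cst_ne_cst (by decide)
lemma M1_ne_M2 (k : ℕ) : M1 k ≠ M2 k := cst_ne_cst (by decide)
lemma M1_ne_B (k : ℕ) : M1 k ≠ B k := cst_ne_cst (by decide)
lemma M2_ne_B (k : ℕ) : M2 k ≠ B k := cst_ne_cst (by decide)

lemma adj_emb_emb {k : ℕ} {x y : VT k} : (J (k+1)).Adj (emb k x) (emb k y) ↔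
    ((J k).Adj x y ∧ s(x,y) ≠ s(A k, B k)) := by
  rw [J_succ_adj]
  constructor
  · rintro (⟨x', y', h1, h2, h3, h4⟩ | ⟨p, q, h1, h2, h3, h4⟩ | ⟨h1, h2⟩ | ⟨h1, h2⟩)
    · rw [emb_inj k h1, emb_inj k h2]; exact ⟨h3, h4⟩
    · by_cases hp : p = pC
      · by_cases hq : q = pC
        · exact absurd (hq ▸ hp ▸ rfl : p = q) h3.ne
        · exact absurd h2 (emb_ne_kap k y hq)
      · exact absurd h1 (emb_ne_kap k x hp)
    · exact absurd h2 (emb_ne_kap k y (by decide))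
    · exact absurd h2 (emb_ne_kap k x (by decide))
  · rintro ⟨h1, h2⟩
    exact Or.inl ⟨x, y, rfl, rfl, h1, h2⟩

lemma adj_kap_kap {k : ℕ} {p q : PV} : (J (k+1)).Adj (kap k p) (kap k q) ↔
    (PStar.Adj p q ∧ s(p,q) ≠ s(pC, pD)) := by
  rw [J_succ_adj]
  constructor
  · rintro (⟨x, y, h1, h2, h3, h4⟩ | ⟨p', q', h1, h2, h3, h4⟩ | ⟨h1, h2⟩ | ⟨h1, h2⟩)
    · by_cases hp : p = pC
      · by_cases hq : q = pC
        · subst hp; subst hq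
          obtain rfl := emb_inj k (h1.symm.trans h2)
          exact absurd h3 ((J k).loopless.irrefl _)
        · exact absurd h2.symm (emb_ne_kap k y hq)
      · exact absurd h1.symm (emb_ne_kap k x hp)
    · rw [kap_inj k h1, kap_inj k h2]; exact ⟨h3, h4⟩
    · by_cases hp : p = pC
      · subst hp; rw [kap_pC] at h1
        exact absurd (emb_inj k h1.symm) (Ne.symm (A_ne_B k))
      · exact absurd h1.symm (emb_ne_kap k (B k) hp)
    · by_cases hq : q = pC
      · subst hq; rw [kap_pC] at h1
        exact absurd (emb_inj k h1.symm) (Ne.symm (A_ne_B k))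
      · exact absurd h1.symm (emb_ne_kap k (B k) hq)
  · rintro ⟨h1, h2⟩
    exact Or.inr (Or.inl ⟨p, q, rfl, rfl, h1, h2⟩)

lemma adj_emb_kap {k : ℕ} {x : VT k} {q : PV} (hq : q ≠ pC) :
    (J (k+1)).Adj (emb k x) (kap k q) ↔ ((x = A k ∧ q = pU) ∨ (x = B k ∧ q = pD)) := by
  rw [J_succ_adj]
  constructor
  · rintro (⟨x', y', h1, h2, h3, h4⟩ | ⟨p', q', h1, h2, h3, h4⟩ | ⟨h1, h2⟩ | ⟨h1, h2⟩)
    · exact absurd h2.symm (emb_ne_kap k y' hq)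
    · by_cases hp : p' = pC
      · subst hp
        rw [kap_pC] at h1
        obtain rfl := emb_inj k h1
        obtain rfl := kap_inj k h2
        rcases (adj_pC q).1 h3 with rfl | rfl
        · exact absurd rfl h4
        · exact Or.inl ⟨rfl, rfl⟩
      · exact absurd h1 (emb_ne_kap k x hp)
    · obtain rfl := emb_inj k h1
      obtain rfl := kap_inj k h2
      exact Or.inr ⟨rfl, rfl⟩
    · exact absurd h2 (emb_ne_kap k x (by decide))
  · rintro (⟨rfl, rfl⟩ | ⟨rfl, rfl⟩)
    · refine Or.inr (Or.inl ⟨pC, pU, (kap_pC k).symm, rfl, by decide, by decide⟩)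
    · exact Or.inr (Or.inr (Or.inl ⟨rfl, rfl⟩))

lemma vt_cases {k : ℕ} (v : VT (k+1)) :
    (∃ x, v = emb k x) ∨ (∃ (q : PV) (h : q ≠ pC), v = kap k q) := by
  rcases v with p | ⟨i, q⟩
  · exact Or.inl ⟨Sum.inl p, rfl⟩
  · by_cases hi : i = Fin.last k
    · subst hi
      exact Or.inr ⟨q.1, q.2, by rw [kap_of_ne k q.2]⟩
    · exact Or.inl ⟨Sum.inr (i.castPred hi, q), by simp [emb, Fin.castSucc_castPred]⟩

/-- last-copy constants as kap images -/
lemma cst_succ (p : PV') (k : ℕ) : cst p (k+1) = kap k p.1 := by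
  rw [kap_of_ne k p.2]; rfl
lemma A_succ (k : ℕ) : A (k+1) = kap k pA := cst_succ pA' k
lemma B_succ (k : ℕ) : B (k+1) = kap k pB := cst_succ pB' k
lemma N_succ (k : ℕ) : N (k+1) = kap k pN := cst_succ pN' k
lemma M1_succ (k : ℕ) : M1 (k+1) = kap k pM1 := cst_succ pM1' k
lemma M2_succ (k : ℕ) : M2 (k+1) = kap k pU := cst_succ pU' k

lemma sym2_ne_of_ne {α : Type*} {x y a b : α} (h1 : x ≠ a) (h2 : x ≠ b) :
    s(x,y) ≠ s(a,b) := by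
  intro h
  rcases Sym2.eq_iff.1 h with ⟨ha, -⟩ | ⟨hb, -⟩
  · exact h1 ha
  · exact h2 hb

lemma nbhd_emb {k : ℕ} {x : VT k} (hxA : x ≠ A k) (hxB : x ≠ B k) :
    (J (k+1)).neighborSet (emb k x) = emb k '' ((J k).neighborSet x) := by
  ext w
  simp only [SimpleGraph.mem_neighborSet, Set.mem_image]
  constructor
  · intro h
    rcases vt_cases w with ⟨y, rfl⟩ | ⟨q, hq, rfl⟩
    · rw [adj_emb_emb] at h; exact ⟨y, h.1, rfl⟩
    · rw [adj_emb_kap hq] at h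
      rcases h with ⟨h1, -⟩ | ⟨h1, -⟩
      · exact absurd h1 hxA
      · exact absurd h1 hxB
  · rintro ⟨y, hy, rfl⟩
    exact adj_emb_emb.2 ⟨hy, sym2_ne_of_ne hxA hxB⟩

lemma nbhd_emb_A {k : ℕ} (hnA : (J k).neighborSet (A k) = {B k, N k}) :
    (J (k+1)).neighborSet (emb k (A k)) = {emb k (N k), kap k pU} := by
  ext w
  simp only [SimpleGraph.mem_neighborSet, Set.mem_insert_iff, Set.mem_singleton_iff]
  constructor
  · intro h
    rcases vt_cases w with ⟨y, rfl⟩ | ⟨q, hq, rfl⟩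
    · rw [adj_emb_emb] at h
      obtain ⟨h1, h2⟩ := h
      have hy : y ∈ (J k).neighborSet (A k) := h1
      rw [hnA] at hy
      rcases hy with rfl | rfl
      · exact absurd rfl h2
      · exact Or.inl rfl
    · rw [adj_emb_kap hq] at h
      rcases h with ⟨-, rfl⟩ | ⟨h1, -⟩
      · exact Or.inr rfl
      · exact absurd h1 (A_ne_B k)
  · rintro (rfl | rfl)
    · refine adj_emb_emb.2 ⟨?_, ?_⟩
      · have : N k ∈ ({B k, N k} : Set (VT k)) := Or.inr rfl
        rw [← hnA] at this; exact this
      · intro hh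
        rcases Sym2.eq_iff.1 hh with ⟨-, h2⟩ | ⟨h1, -⟩
        · exact N_ne_B k h2
        · exact A_ne_B k h1
    · exact (adj_emb_kap (by decide)).2 (Or.inl ⟨rfl, rfl⟩)

lemma nbhd_emb_B {k : ℕ} (hnB : (J k).neighborSet (B k) = {A k, M1 k, M2 k}) :
    (J (k+1)).neighborSet (emb k (B k)) = {emb k (M1 k), emb k (M2 k), kap k pD} := by
  ext w
  simp only [SimpleGraph.mem_neighborSet, Set.mem_insert_iff, Set.mem_singleton_iff]
  constructor
  · intro h
    rcases vt_cases w with ⟨y, rfl⟩ | ⟨q, hq, rfl⟩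
    · rw [adj_emb_emb] at h
      obtain ⟨h1, h2⟩ := h
      have hy : y ∈ (J k).neighborSet (B k) := h1
      rw [hnB] at hy
      rcases hy with rfl | rfl | rfl
      · exact absurd (Sym2.eq_swap) h2
      · exact Or.inl rfl
      · exact Or.inr (Or.inl rfl)
    · rw [adj_emb_kap hq] at h
      rcases h with ⟨h1, -⟩ | ⟨-, rfl⟩
      · exact absurd h1.symm (A_ne_B k)
      · exact Or.inr (Or.inr rfl)
  · rintro (rfl | rfl | rfl)
    · refine adj_emb_emb.2 ⟨?_, ?_⟩
      · have : M1 k ∈ ({A k, M1 k, M2 k} : Set (VT k)) := Or.inr (Or.inl rfl)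
        rw [← hnB] at this; exact this
      · intro hh
        rcases Sym2.eq_iff.1 hh with ⟨h1, -⟩ | ⟨-, h2⟩
        · exact A_ne_B k h1.symm
        · exact M1_ne_A k h2
    · refine adj_emb_emb.2 ⟨?_, ?_⟩
      · have : M2 k ∈ ({A k, M1 k, M2 k} : Set (VT k)) := Or.inr (Or.inr rfl)
        rw [← hnB] at this; exact this
      · intro hh
        rcases Sym2.eq_iff.1 hh with ⟨h1, -⟩ | ⟨-, h2⟩
        · exact A_ne_B k h1.symm
        · exact M2_ne_A k h2
    · exact (adj_emb_kap (by decide)).2 (Or.inr ⟨rfl, rfl⟩)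

lemma nbhd_kap {k : ℕ} {q : PV} (hqC : q ≠ pC) (hqD : q ≠ pD) :
    (J (k+1)).neighborSet (kap k q) = kap k '' (PStar.neighborSet q) := by
  ext w
  simp only [SimpleGraph.mem_neighborSet, Set.mem_image]
  constructor
  · intro h
    rcases vt_cases w with ⟨y, rfl⟩ | ⟨p, hp, rfl⟩
    · rw [SimpleGraph.adj_comm, adj_emb_kap hqC] at h
      rcases h with ⟨rfl, rfl⟩ | ⟨-, h2⟩
      · exact ⟨pC, by decide, (kap_pC k).symm⟩
      · exact absurd h2 hqD
    · rw [adj_kap_kap] at h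
      exact ⟨p, h.1, rfl⟩
  · rintro ⟨p, hp, rfl⟩
    refine adj_kap_kap.2 ⟨hp, ?_⟩
    intro hh
    rcases Sym2.eq_iff.1 hh with ⟨h1, -⟩ | ⟨h1, -⟩
    · exact hqC h1
    · exact hqD h1

lemma nbhd_kap_pD {k : ℕ} :
    (J (k+1)).neighborSet (kap k pD) = {kap k pM1, kap k pN, emb k (B k)} := by
  ext w
  simp only [SimpleGraph.mem_neighborSet, Set.mem_insert_iff, Set.mem_singleton_iff]
  constructor
  · intro h
    rcases vt_cases w with ⟨y, rfl⟩ | ⟨p, hp, rfl⟩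
    · rw [SimpleGraph.adj_comm, adj_emb_kap (by decide)] at h
      rcases h with ⟨-, h2⟩ | ⟨rfl, -⟩
      · exact absurd h2 (by decide)
      · exact Or.inr (Or.inr rfl)
    · rw [adj_kap_kap] at h
      obtain ⟨h1, h2⟩ := h
      rcases (adj_pD p).1 h1 with rfl | rfl | rfl
      · exact absurd Sym2.eq_swap h2
      · exact Or.inl rfl
      · exact Or.inr (Or.inl rfl)
  · rintro (rfl | rfl | rfl)
    · exact adj_kap_kap.2 ⟨by decide, by decide⟩
    · exact adj_kap_kap.2 ⟨by decide, by decide⟩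
    · exact ((adj_emb_kap (by decide)).2 (Or.inr ⟨rfl, rfl⟩)).symm

lemma deg_eq_card {W : Type*} (G : SimpleGraph W) (v : W) [Fintype (G.neighborSet v)] :
    deg G v = (G.neighborFinset v).card := by
  unfold SimpleGraph.neighborFinset
  exact Set.ncard_eq_toFinset_card' _

lemma ncard_triple {α : Type*} {a b c : α} (h1 : a ≠ b) (h2 : a ≠ c) (h3 : b ≠ c) :
    ({a, b, c} : Set α).ncard = 3 := by
  rw [Set.ncard_insert_of_notMem (by simp [h1, h2]) (Set.toFinite _),
      Set.ncard_pair h3]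

lemma pstar_deg : ∀ q, deg PStar q ≤ 3 := by
  intro q
  rw [deg_eq_card]
  exact pstar_deg_le q

lemma edge_decomp (k : ℕ) :
    (J (k+1)).edgeSet =
      (Sym2.map (emb k) '' ((J k).edgeSet \ {s(A k, B k)})) ∪
      (Sym2.map (kap k) '' (PStar.edgeSet \ {s(pC, pD)})) ∪
      {s(emb k (B k), kap k pD)} := by
  ext s
  induction s using Sym2.ind with
  | _ u v =>
    simp only [SimpleGraph.mem_edgeSet, Set.mem_union, Set.mem_image, Set.mem_diff,
      Set.mem_singleton_iff]
    constructor
    · intro h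
      rw [J_succ_adj] at h
      rcases h with ⟨x, y, rfl, rfl, h3, h4⟩ | ⟨p, q, rfl, rfl, h3, h4⟩ | ⟨rfl, rfl⟩ | ⟨rfl, rfl⟩
      · exact Or.inl (Or.inl ⟨s(x,y), ⟨h3, h4⟩, rfl⟩)
      · exact Or.inl (Or.inr ⟨s(p,q), ⟨h3, h4⟩, rfl⟩)
      · exact Or.inr rfl
      · exact Or.inr Sym2.eq_swap
    · intro h
      rcases h with (⟨e, ⟨he, hne⟩, hmap⟩ | ⟨e, ⟨he, hne⟩, hmap⟩) | h
      · induction e using Sym2.ind with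
        | _ x y =>
          rw [Sym2.map_pair_eq] at hmap
          rcases Sym2.eq_iff.1 hmap with ⟨rfl, rfl⟩ | ⟨rfl, rfl⟩
          · exact adj_emb_emb.2 ⟨he, hne⟩
          · exact (adj_emb_emb.2 ⟨(SimpleGraph.mem_edgeSet _).1 he, hne⟩).symm
      · induction e using Sym2.ind with
        | _ p q =>
          rw [Sym2.map_pair_eq] at hmap
          rcases Sym2.eq_iff.1 hmap with ⟨rfl, rfl⟩ | ⟨rfl, rfl⟩
          · exact adj_kap_kap.2 ⟨he, hne⟩
          · exact (adj_kap_kap.2 ⟨(SimpleGraph.mem_edgeSet _).1 he, hne⟩).symm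
      · rcases Sym2.eq_iff.1 h with ⟨rfl, rfl⟩ | ⟨rfl, rfl⟩
        · exact (adj_emb_kap (by decide)).2 (Or.inr ⟨rfl, rfl⟩)
        · exact ((adj_emb_kap (by decide)).2 (Or.inr ⟨rfl, rfl⟩)).symm

lemma pstar_edge_ncard : PStar.edgeSet.ncard = 12 := by
  rw [Set.ncard_eq_toFinset_card']
  decide

lemma mem_map_emb {k : ℕ} {s : Set (Sym2 (VT k))} {w : VT (k+1)} {t : Sym2 (VT (k+1))}
    (ht : t ∈ Sym2.map (emb k) '' s) (hw : w ∈ t) : ∃ x, w = emb k x := by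
  obtain ⟨e, -, rfl⟩ := ht
  obtain ⟨x, -, rfl⟩ := Sym2.mem_map.1 hw
  exact ⟨x, rfl⟩

lemma edge_count (k : ℕ) (hAB : s(A k, B k) ∈ (J k).edgeSet)
    (hcount : (J k).edgeSet.ncard = 11*k+12) :
    (J (k+1)).edgeSet.ncard = 11*(k+1)+12 := by
  rw [edge_decomp k]
  have hd1 : Disjoint (Sym2.map (emb k) '' ((J k).edgeSet \ {s(A k, B k)}))
      (Sym2.map (kap k) '' (PStar.edgeSet \ {s(pC, pD)})) := by
    rw [Set.disjoint_left]
    rintro t ht1 ht2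
    obtain ⟨e, ⟨he, -⟩, rfl⟩ := ht2
    induction e using Sym2.ind with
    | _ p q =>
      have hpq : p ≠ q := ((SimpleGraph.mem_edgeSet _).1 he).ne
      by_cases hp : p = pC
      · have hq : q ≠ pC := fun hh => hpq (hp.trans hh.symm)
        have : kap k q ∈ Sym2.map (kap k) s(p,q) := Sym2.mem_mk_right _ _  -- membership
        obtain ⟨x, hx⟩ := mem_map_emb ht1 this
        exact emb_ne_kap k x hq hx.symm
      · have : kap k p ∈ Sym2.map (kap k) s(p,q) := Sym2.mem_mk_left _ _
        obtain ⟨x, hx⟩ := mem_map_emb ht1 this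
        exact emb_ne_kap k x hp hx.symm
  have hd2 : Disjoint ((Sym2.map (emb k) '' ((J k).edgeSet \ {s(A k, B k)})) ∪
      (Sym2.map (kap k) '' (PStar.edgeSet \ {s(pC, pD)})))
      ({s(emb k (B k), kap k pD)} : Set (Sym2 (VT (k+1)))) := by
    rw [Set.disjoint_right]
    rintro t rfl
    rintro (ht | ht)
    · have : kap k pD ∈ s(emb k (B k), kap k pD) := Sym2.mem_mk_right _ _
      obtain ⟨x, hx⟩ := mem_map_emb ht this
      exact emb_ne_kap k x (by decide) hx.symm
    · obtain ⟨e, ⟨he, -⟩, hmap⟩ := ht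
      induction e using Sym2.ind with
      | _ p q =>
        rw [Sym2.map_pair_eq] at hmap
        have hpq : p ≠ q := ((SimpleGraph.mem_edgeSet _).1 he).ne
        rcases Sym2.eq_iff.1 hmap with ⟨h1, h2⟩ | ⟨h1, h2⟩
        · by_cases hp : p = pC
          · subst hp; rw [kap_pC] at h1
            exact A_ne_B k (emb_inj k h1)
          · exact emb_ne_kap k (B k) hp h1.symm
        · by_cases hq : q = pC
          · subst hq; rw [kap_pC] at h2
            exact A_ne_B k (emb_inj k h2)
          · exact emb_ne_kap k (B k) hq h2.symm
  rw [Set.ncard_union_eq hd2 (Set.toFinite _) (Set.toFinite _),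
      Set.ncard_union_eq hd1 (Set.toFinite _) (Set.toFinite _),
      Set.ncard_image_of_injective _ (Sym2.map.injective (emb_inj k)),
      Set.ncard_image_of_injective _ (Sym2.map.injective (kap_inj k)),
      Set.ncard_diff_singleton_of_mem hAB,
      Set.ncard_diff_singleton_of_mem ((SimpleGraph.mem_edgeSet _).2 (by decide)),
      Set.ncard_singleton, hcount, pstar_edge_ncard]
  omega

section general
variable {V : Type*} {G : SimpleGraph V} {n : ℕ}

/-- properness for a total coloring function on a set of edges -/
def ProperOn (G : SimpleGraph V) (g : Sym2 V → Fin n) (S : Set (Sym2 V)) : Prop :=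
  ∀ e f, e ∈ S → f ∈ S → e ≠ f → (∃ v, v ∈ e ∧ v ∈ f) → g e ≠ g f

lemma ec_of_total (g : Sym2 V → Fin n) (h : ProperOn G g G.edgeSet) :
    EdgeColorable G n :=
  ⟨fun e => g e.1, fun e f hne hsh =>
    h e.1 f.1 e.2 f.2 (fun hh => hne (Subtype.ext hh)) hsh⟩

lemma total_of_ec (hn : 0 < n) (h : EdgeColorable G n) :
    ∃ g : Sym2 V → Fin n, ProperOn G g G.edgeSet := by
  classical
  obtain ⟨C, hC⟩ := h
  refine ⟨fun s => if hs : s ∈ G.edgeSet then C ⟨s, hs⟩ else ⟨0, hn⟩, ?_⟩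
  intro e f he hf hne hsh
  simp only [dif_pos he, dif_pos hf]
  exact hC ⟨e, he⟩ ⟨f, hf⟩ (fun hh => hne (congrArg Subtype.val hh)) hsh

lemma ec_mono {m : ℕ} (h : EdgeColorable G m) (hmn : m ≤ n) : EdgeColorable G n := by
  obtain ⟨C, hC⟩ := h
  exact ⟨fun e => Fin.castLE hmn (C e), fun e f hne hsh hh =>
    hC e f hne hsh (Fin.castLE_injective hmn hh)⟩

lemma chromIndex_eq {n : ℕ} (h1 : EdgeColorable G (n+1)) (h2 : ¬ EdgeColorable G n) :
    chromIndex G = n + 1 := by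
  refine le_antisymm (Nat.sInf_le h1) (le_csInf ⟨n+1, h1⟩ ?_)
  intro m hm
  by_contra hlt
  exact h2 (ec_mono hm (by omega))

/-- no 2-edge-coloring if some vertex has three distinct incident edges -/
lemma not_ec_two {v a b c : V} (ha : G.Adj v a) (hb : G.Adj v b) (hc : G.Adj v c)
    (hab : a ≠ b) (hac : a ≠ c) (hbc : b ≠ c) : ¬ EdgeColorable G 2 := by
  rintro ⟨C, hC⟩
  have key : ∀ (x y : V) (hx : G.Adj v x) (hy : G.Adj v y), x ≠ y →
      C ⟨s(v,x), hx⟩ ≠ C ⟨s(v,y), hy⟩ := by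
    intro x y hx hy hxy
    refine hC _ _ (fun hh => ?_) ⟨v, by simp, by simp⟩
    have h2 := congrArg Subtype.val hh
    simp only [Sym2.eq, Sym2.rel_iff', Prod.mk.injEq, Prod.swap_prod_mk] at h2
    rcases h2 with ⟨-, h2⟩ | ⟨h1, h2⟩
    · exact hxy h2
    · exact hxy (h2.trans h1)
  exact (by decide : ∀ x y z : Fin 2, x ≠ y → x ≠ z → y ≠ z → False) _ _ _
    (key a b ha hb hab) (key a c ha hc hac) (key b c hb hc hbc)

end general

section transfer
variable {V W : Type*} (e : V ≃ W) (G : SimpleGraph W) {n : ℕ}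

lemma comap_mem_edgeSet (s : Sym2 V) :
    s ∈ (G.comap e).edgeSet ↔ Sym2.map e s ∈ G.edgeSet := by
  induction s using Sym2.ind with
  | _ x y => simp [SimpleGraph.mem_edgeSet]

lemma sym2_map_equiv_injective : Function.Injective (Sym2.map (e : V → W)) :=
  Sym2.map.injective e.injective

lemma ec_comap_iff : EdgeColorable (G.comap e) n ↔ EdgeColorable G n := by
  constructor
  · rintro ⟨C, hC⟩
    refine ⟨fun f => C ⟨Sym2.map e.symm f.1, ?_⟩, ?_⟩
    · rw [comap_mem_edgeSet]
      have : Sym2.map (⇑e) (Sym2.map (⇑e.symm) f.1) = f.1 := by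
        rw [Sym2.map_map]
        simp [Function.comp_def]
      rw [this]; exact f.2
    · intro f₁ f₂ hne ⟨v, hv1, hv2⟩
      refine hC _ _ (fun hh => hne ?_) ⟨e.symm v, ?_, ?_⟩
      · have := congrArg Subtype.val hh
        simp only at this
        have := sym2_map_equiv_injective e.symm this
        exact Subtype.ext this
      · exact Sym2.mem_map.mpr ⟨_, hv1, rfl⟩
      · exact Sym2.mem_map.mpr ⟨_, hv2, rfl⟩
  · rintro ⟨C, hC⟩
    refine ⟨fun f => C ⟨Sym2.map e f.1, (comap_mem_edgeSet e G f.1).1 f.2⟩, ?_⟩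
    intro f₁ f₂ hne ⟨v, hv1, hv2⟩
    refine hC _ _ (fun hh => hne ?_) ⟨e v, ?_, ?_⟩
    · have := congrArg Subtype.val hh
      simp only at this
      exact Subtype.ext (sym2_map_equiv_injective e this)
    · exact Sym2.mem_map.mpr ⟨_, hv1, rfl⟩
    · exact Sym2.mem_map.mpr ⟨_, hv2, rfl⟩

lemma chromIndex_comap : chromIndex (G.comap e) = chromIndex G := by
  unfold chromIndex
  congr 1
  ext n
  exact ec_comap_iff e G

lemma deg_comap (v : V) : deg (G.comap e) v = deg G (e v) := by
  unfold deg
  have : (G.comap e).neighborSet v = ⇑e.symm '' (G.neighborSet (e v)) := by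
    ext w
    simp only [SimpleGraph.mem_neighborSet, SimpleGraph.comap_adj, Set.mem_image]
    constructor
    · intro h; exact ⟨e w, h, by simp⟩
    · rintro ⟨u, hu, rfl⟩; simpa using hu
  rw [this, Set.ncard_image_of_injective _ e.symm.injective]

lemma comap_deleteEdges (d : Sym2 V) :
    (G.comap e).deleteEdges {d} = (G.deleteEdges {Sym2.map e d}).comap e := by
  ext x y
  simp only [SimpleGraph.deleteEdges_adj, SimpleGraph.comap_adj, Set.mem_singleton_iff]
  constructor
  · rintro ⟨h1, h2⟩
    refine ⟨h1, fun hh => h2 ?_⟩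
    have : Sym2.map e s(x,y) = Sym2.map e d := by simpa using hh
    exact sym2_map_equiv_injective e this
  · rintro ⟨h1, h2⟩
    refine ⟨h1, fun hh => h2 ?_⟩
    subst hh
    simp

lemma edgeSet_ncard_comap : (G.comap e).edgeSet.ncard = G.edgeSet.ncard := by
  have himg : Sym2.map ⇑e '' (G.comap e).edgeSet = G.edgeSet := by
    ext s
    simp only [Set.mem_image]
    constructor
    · rintro ⟨t, ht, rfl⟩; exact (comap_mem_edgeSet e G t).1 ht
    · intro hs
      refine ⟨Sym2.map e.symm s, ?_, ?_⟩
      · rw [comap_mem_edgeSet, Sym2.map_map]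
        simpa [Function.comp_def] using hs
      · rw [Sym2.map_map]; simp [Function.comp_def]
  rw [← himg, Set.ncard_image_of_injective _ (sym2_map_equiv_injective e)]

end transfer

/-! ### degrees in J (k+1) -/

lemma deg_succ_emb {k : ℕ} {x : VT k} (hxA : x ≠ A k) (hxB : x ≠ B k) :
    deg (J (k+1)) (emb k x) = deg (J k) x := by
  unfold deg
  rw [nbhd_emb hxA hxB, Set.ncard_image_of_injective _ (emb_inj k)]

lemma deg_succ_A {k : ℕ} (hnA : (J k).neighborSet (A k) = {B k, N k}) :
    deg (J (k+1)) (emb k (A k)) = 2 := by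
  unfold deg
  rw [nbhd_emb_A hnA]
  exact Set.ncard_pair (emb_ne_kap k (N k) (by decide))

lemma deg_succ_B {k : ℕ} (hnB : (J k).neighborSet (B k) = {A k, M1 k, M2 k}) :
    deg (J (k+1)) (emb k (B k)) = 3 := by
  unfold deg
  rw [nbhd_emb_B hnB]
  exact ncard_triple (fun h => M1_ne_M2 k (emb_inj k h))
    (emb_ne_kap k (M1 k) (by decide)) (emb_ne_kap k (M2 k) (by decide))

lemma deg_succ_kap {k : ℕ} {q : PV} (hqC : q ≠ pC) (hqD : q ≠ pD) :
    deg (J (k+1)) (kap k q) = deg PStar q := by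
  unfold deg
  rw [nbhd_kap hqC hqD, Set.ncard_image_of_injective _ (kap_inj k)]

lemma deg_succ_pD {k : ℕ} : deg (J (k+1)) (kap k pD) = 3 := by
  unfold deg
  rw [nbhd_kap_pD]
  refine ncard_triple (fun h => ?_) (fun h => emb_ne_kap k (B k) (by decide) h.symm)
    (fun h => emb_ne_kap k (B k) (by decide) h.symm)
  have := kap_inj k h
  exact absurd this (by decide)

/-! ### incident edges at the special vertices -/

lemma edge_at {W : Type*} {G : SimpleGraph W} {e : Sym2 W} {v : W}
    (he : e ∈ G.edgeSet) (hv : v ∈ e) : ∃ w, G.Adj v w ∧ e = s(v, w) := by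
  induction e using Sym2.ind with
  | _ a b =>
    rcases Sym2.mem_iff.1 hv with rfl | rfl
    · exact ⟨b, he, rfl⟩
    · exact ⟨a, ((SimpleGraph.mem_edgeSet _).1 he).symm, Sym2.eq_swap.symm⟩

lemma edge_at_A {k : ℕ} (hnA : (J k).neighborSet (A k) = {B k, N k}) {e : Sym2 (VT k)}
    (he : e ∈ (J k).edgeSet) (hv : A k ∈ e) :
    e = s(A k, B k) ∨ e = s(A k, N k) := by
  obtain ⟨w, hw, rfl⟩ := edge_at he hv
  have : w ∈ (J k).neighborSet (A k) := hw
  rw [hnA] at this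
  rcases this with rfl | rfl
  · exact Or.inl rfl
  · exact Or.inr rfl

lemma edge_at_B {k : ℕ} (hnB : (J k).neighborSet (B k) = {A k, M1 k, M2 k}) {e : Sym2 (VT k)}
    (he : e ∈ (J k).edgeSet) (hv : B k ∈ e) :
    e = s(A k, B k) ∨ e = s(B k, M1 k) ∨ e = s(B k, M2 k) := by
  obtain ⟨w, hw, rfl⟩ := edge_at he hv
  have : w ∈ (J k).neighborSet (B k) := hw
  rw [hnB] at this
  rcases this with rfl | rfl | rfl
  · exact Or.inl Sym2.eq_swap
  · exact Or.inr (Or.inl rfl)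
  · exact Or.inr (Or.inr rfl)

lemma AB_mem {k : ℕ} (hnA : (J k).neighborSet (A k) = {B k, N k}) :
    s(A k, B k) ∈ (J k).edgeSet := by
  rw [SimpleGraph.mem_edgeSet]
  have : B k ∈ (J k).neighborSet (A k) := by rw [hnA]; exact Or.inl rfl
  exact this

lemma AN_mem {k : ℕ} (hnA : (J k).neighborSet (A k) = {B k, N k}) :
    s(A k, N k) ∈ (J k).edgeSet := by
  rw [SimpleGraph.mem_edgeSet]
  have : N k ∈ (J k).neighborSet (A k) := by rw [hnA]; exact Or.inr rfl
  exact this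

lemma BM1_mem {k : ℕ} (hnB : (J k).neighborSet (B k) = {A k, M1 k, M2 k}) :
    s(B k, M1 k) ∈ (J k).edgeSet := by
  rw [SimpleGraph.mem_edgeSet]
  have : M1 k ∈ (J k).neighborSet (B k) := by rw [hnB]; exact Or.inr (Or.inl rfl)
  exact this

lemma BM2_mem {k : ℕ} (hnB : (J k).neighborSet (B k) = {A k, M1 k, M2 k}) :
    s(B k, M2 k) ∈ (J k).edgeSet := by
  rw [SimpleGraph.mem_edgeSet]
  have : M2 k ∈ (J k).neighborSet (B k) := by rw [hnB]; exact Or.inr (Or.inr rfl)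
  exact this

lemma card_VT (k : ℕ) : Fintype.card (VT k) = 8 * k + 9 := by
  have h1 : Fintype.card PV = 9 := by decide
  have h2 : Fintype.card PV' = 8 := by decide
  simp [Fintype.card_sum, Fintype.card_prod, h1, h2]
  ring

/-! ### the master gluing lemma -/

lemma emb_eq_kap {k : ℕ} {x : VT k} {p : PV} (h : emb k x = kap k p) :
    p = pC ∧ x = A k := by
  by_cases hp : p = pC
  · subst hp
    rw [kap_pC] at h
    exact ⟨rfl, emb_inj k h⟩
  · exact absurd h (emb_ne_kap k x hp)

lemma kap_ne_embB {k : ℕ} (p : PV) : kap k p ≠ emb k (B k) := by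
  intro h
  obtain ⟨-, hAB⟩ := emb_eq_kap h.symm
  exact A_ne_B k hAB.symm

lemma nbhd_pC : PStar.neighborSet pC = {pD, pU} := by
  ext q
  simpa using adj_pC q

lemma nbhd_pD : PStar.neighborSet pD = {pC, pM1, pN} := by
  ext q
  simpa using adj_pD q

lemma edge_at_pC {f : Sym2 PV} (hf : f ∈ PStar.edgeSet) (h : pC ∈ f) :
    f = s(pC, pD) ∨ f = s(pC, pU) := by
  obtain ⟨w, hw, rfl⟩ := edge_at hf h
  have : w ∈ PStar.neighborSet pC := hw
  rw [nbhd_pC] at this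
  rcases this with rfl | rfl
  · exact Or.inl rfl
  · exact Or.inr rfl

lemma edge_at_pD {f : Sym2 PV} (hf : f ∈ PStar.edgeSet) (h : pD ∈ f) :
    f = s(pC, pD) ∨ f = s(pD, pM1) ∨ f = s(pD, pN) := by
  obtain ⟨w, hw, rfl⟩ := edge_at hf h
  have : w ∈ PStar.neighborSet pD := hw
  rw [nbhd_pD] at this
  rcases this with rfl | rfl | rfl
  · exact Or.inl Sym2.eq_swap
  · exact Or.inr (Or.inl rfl)
  · exact Or.inr (Or.inr rfl)

lemma map_emb_ne_dedge {k : ℕ} (e : Sym2 (VT k)) :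
    Sym2.map (emb k) e ≠ s(emb k (B k), kap k pD) := by
  intro h
  have : kap k pD ∈ Sym2.map (emb k) e := by rw [h]; exact Sym2.mem_mk_right _ _
  obtain ⟨x, -, hx⟩ := Sym2.mem_map.1 this
  exact emb_ne_kap k x (by decide) hx

lemma map_kap_ne_dedge {k : ℕ} {p q : PV} (hpq : p ≠ q) :
    Sym2.map (kap k) s(p, q) ≠ s(emb k (B k), kap k pD) := by
  rw [Sym2.map_pair_eq]
  intro h
  rcases Sym2.eq_iff.1 h with ⟨h1, -⟩ | ⟨-, h2⟩
  · exact kap_ne_embB p h1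
  · exact kap_ne_embB q h2

lemma map_kap_ne_map_emb {k : ℕ} {p q : PV} (hpq : p ≠ q) (e : Sym2 (VT k)) :
    Sym2.map (emb k) e ≠ Sym2.map (kap k) s(p, q) := by
  intro h
  by_cases hp : p = pC
  · have hq : q ≠ pC := fun hh => hpq (hp.trans hh.symm)
    have : kap k q ∈ Sym2.map (emb k) e := by
      rw [h, Sym2.map_pair_eq]; exact Sym2.mem_mk_right _ _
    obtain ⟨x, -, hx⟩ := Sym2.mem_map.1 this
    exact emb_ne_kap k x hq hx
  · have : kap k p ∈ Sym2.map (emb k) e := by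
      rw [h, Sym2.map_pair_eq]; exact Sym2.mem_mk_left _ _
    obtain ⟨x, -, hx⟩ := Sym2.mem_map.1 this
    exact emb_ne_kap k x hp hx

section glue
variable {k n : ℕ} (c1 : Sym2 (VT k) → Fin n) (c2 : Sym2 PV → Fin n) (δ : Fin n)

open Classical in
noncomputable def Fglue : Sym2 (VT (k+1)) → Fin n := fun s =>
  if s = s(emb k (B k), kap k pD) then δ
  else if h : ∃ e, Sym2.map (emb k) e = s then c1 h.choose
  else if h2 : ∃ e, Sym2.map (kap k) e = s then c2 h2.choose
  else δ

lemma Fglue_emb (e : Sym2 (VT k)) : Fglue c1 c2 δ (Sym2.map (emb k) e) = c1 e := by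
  unfold Fglue
  rw [if_neg (map_emb_ne_dedge e)]
  have h : ∃ e', Sym2.map (emb k) e' = Sym2.map (emb k) e := ⟨e, rfl⟩
  rw [dif_pos h, Sym2.map.injective (emb_inj k) h.choose_spec]

lemma Fglue_kap {p q : PV} (hpq : p ≠ q) :
    Fglue c1 c2 δ (Sym2.map (kap k) s(p, q)) = c2 s(p, q) := by
  unfold Fglue
  rw [if_neg (by rw [Sym2.map_pair_eq]; exact (Sym2.map_pair_eq _ _ _ ▸ map_kap_ne_dedge hpq))]
  rw [dif_neg (fun ⟨e, he⟩ => map_kap_ne_map_emb hpq e he)]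
  have h : ∃ e', Sym2.map (kap k) e' = Sym2.map (kap k) s(p, q) := ⟨s(p, q), rfl⟩
  rw [dif_pos h, Sym2.map.injective (kap_inj k) h.choose_spec]

lemma Fglue_dedge : Fglue c1 c2 δ (s(emb k (B k), kap k pD)) = δ := if_pos rfl

end glue

lemma glue_master {k n : ℕ} (c1 : Sym2 (VT k) → Fin n) (c2 : Sym2 PV → Fin n) (δ : Fin n)
    (D : Set (Sym2 (VT (k+1))))
    (hnA : (J k).neighborSet (A k) = {B k, N k})
    (hnB : (J k).neighborSet (B k) = {A k, M1 k, M2 k})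
    (hold : ∀ e f, e ∈ (J k).edgeSet → f ∈ (J k).edgeSet →
      e ≠ s(A k, B k) → f ≠ s(A k, B k) →
      Sym2.map (emb k) e ∉ D → Sym2.map (emb k) f ∉ D →
      e ≠ f → (∃ v, v ∈ e ∧ v ∈ f) → c1 e ≠ c1 f)
    (hnew : ∀ e f, e ∈ PStar.edgeSet → f ∈ PStar.edgeSet →
      e ≠ s(pC, pD) → f ≠ s(pC, pD) →
      Sym2.map (kap k) e ∉ D → Sym2.map (kap k) f ∉ D →
      e ≠ f → (∃ v, v ∈ e ∧ v ∈ f) → c2 e ≠ c2 f)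
    (hAN : Sym2.map (emb k) s(A k, N k) ∉ D → Sym2.map (kap k) s(pC, pU) ∉ D →
      c1 s(A k, N k) ≠ c2 s(pC, pU))
    (hBM : ∀ x, (x = M1 k ∨ x = M2 k) → Sym2.map (emb k) s(B k, x) ∉ D →
      s(emb k (B k), kap k pD) ∉ D → c1 s(B k, x) ≠ δ)
    (hDM : ∀ p, (p = pM1 ∨ p = pN) → Sym2.map (kap k) s(pD, p) ∉ D →
      s(emb k (B k), kap k pD) ∉ D → c2 s(pD, p) ≠ δ) :
    EdgeColorable ((J (k+1)).deleteEdges D) n := by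
  apply ec_of_total (Fglue c1 c2 δ)
  intro t u ht hu htu ⟨v, hvt, hvu⟩
  rw [SimpleGraph.edgeSet_deleteEdges, Set.mem_diff] at ht hu
  obtain ⟨ht1, htD⟩ := ht
  obtain ⟨hu1, huD⟩ := hu
  rw [edge_decomp] at ht1 hu1
  -- helper: the three one-sided mixed cases
  -- emb vs kap
  have case12 : ∀ (e : Sym2 (VT k)) (f : Sym2 PV),
      e ∈ (J k).edgeSet → e ≠ s(A k, B k) → Sym2.map (emb k) e ∉ D →
      f ∈ PStar.edgeSet → f ≠ s(pC, pD) → Sym2.map (kap k) f ∉ D →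
      (∃ v, v ∈ Sym2.map (emb k) e ∧ v ∈ Sym2.map (kap k) f) →
      Fglue c1 c2 δ (Sym2.map (emb k) e) ≠ Fglue c1 c2 δ (Sym2.map (kap k) f) := by
    intro e f he heab heD hf hfcd hfD ⟨w, hw1, hw2⟩
    induction f using Sym2.ind with
    | _ p q =>
      have hpq : p ≠ q := ((SimpleGraph.mem_edgeSet _).1 hf).ne
      rw [Fglue_emb, Fglue_kap _ _ _ hpq]
      obtain ⟨x, hxe, rfl⟩ := Sym2.mem_map.1 hw1
      rw [Sym2.map_pair_eq] at hw2
      have hCe : pC ∈ s(p, q) ∧ A k ∈ e := by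
        rcases Sym2.mem_iff.1 hw2 with hx | hx
        · obtain ⟨hp, hA⟩ := emb_eq_kap hx
          exact ⟨hp ▸ Sym2.mem_mk_left _ _, hA ▸ hxe⟩
        · obtain ⟨hq, hA⟩ := emb_eq_kap hx
          exact ⟨hq ▸ Sym2.mem_mk_right _ _, hA ▸ hxe⟩
      rcases edge_at_A hnA he hCe.2 with hA | hA
      · exact absurd hA heab
      · rcases edge_at_pC hf hCe.1 with hcase | hcase
        · exact absurd hcase hfcd
        · rw [hA, hcase]
          exact hAN (hA ▸ heD) (hcase ▸ hfD)
  -- emb vs dedge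
  have case13 : ∀ (e : Sym2 (VT k)),
      e ∈ (J k).edgeSet → e ≠ s(A k, B k) → Sym2.map (emb k) e ∉ D →
      s(emb k (B k), kap k pD) ∉ D →
      (∃ v, v ∈ Sym2.map (emb k) e ∧ v ∈ s(emb k (B k), kap k pD)) →
      Fglue c1 c2 δ (Sym2.map (emb k) e) ≠ Fglue c1 c2 δ (s(emb k (B k), kap k pD)) := by
    intro e he heab heD hdD ⟨w, hw1, hw2⟩
    rw [Fglue_emb, Fglue_dedge]
    obtain ⟨x, hxe, rfl⟩ := Sym2.mem_map.1 hw1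
    have hBe : B k ∈ e := by
      rcases Sym2.mem_iff.1 hw2 with hx | hx
      · exact emb_inj k hx ▸ hxe
      · exact absurd hx (emb_ne_kap k x (by decide))
    rcases edge_at_B hnB he hBe with hcase | hcase | hcase
    · exact absurd hcase heab
    · rw [hcase]; exact hBM (M1 k) (Or.inl rfl) (hcase ▸ heD) hdD
    · rw [hcase]; exact hBM (M2 k) (Or.inr rfl) (hcase ▸ heD) hdD
  -- kap vs dedge
  have case23 : ∀ (f : Sym2 PV),
      f ∈ PStar.edgeSet → f ≠ s(pC, pD) → Sym2.map (kap k) f ∉ D →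
      s(emb k (B k), kap k pD) ∉ D →
      (∃ v, v ∈ Sym2.map (kap k) f ∧ v ∈ s(emb k (B k), kap k pD)) →
      Fglue c1 c2 δ (Sym2.map (kap k) f) ≠ Fglue c1 c2 δ (s(emb k (B k), kap k pD)) := by
    intro f hf hfcd hfD hdD ⟨w, hw1, hw2⟩
    induction f using Sym2.ind with
    | _ p q =>
      have hpq : p ≠ q := ((SimpleGraph.mem_edgeSet _).1 hf).ne
      rw [Fglue_kap _ _ _ hpq, Fglue_dedge]
      obtain ⟨x, hxf, rfl⟩ := Sym2.mem_map.1 hw1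
      have hDf : pD ∈ s(p, q) := by
        rcases Sym2.mem_iff.1 hw2 with hx | hx
        · exact absurd hx (kap_ne_embB x)
        · exact kap_inj k hx ▸ hxf
      rcases edge_at_pD hf hDf with hcase | hcase | hcase
      · exact absurd hcase hfcd
      · rw [hcase]; exact hDM pM1 (Or.inl rfl) (hcase ▸ hfD) hdD
      · rw [hcase]; exact hDM pN (Or.inr rfl) (hcase ▸ hfD) hdD
  -- now dispatch the 9 cases
  rcases ht1 with (⟨e, ⟨he, heab⟩, rfl⟩ | ⟨e, ⟨he, hecd⟩, rfl⟩) | ht1 <;>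
    rcases hu1 with (⟨f, ⟨hf, hfab⟩, rfl⟩ | ⟨f, ⟨hf, hfcd⟩, rfl⟩) | hu1
  · -- emb emb
    rw [Fglue_emb, Fglue_emb]
    obtain ⟨x, hxe, rfl⟩ := Sym2.mem_map.1 hvt
    obtain ⟨y, hyf, hy⟩ := Sym2.mem_map.1 hvu
    have hxy : y = x := emb_inj k hy
    exact hold e f he hf heab hfab htD huD (fun hh => htu (by rw [hh])) ⟨x, hxe, hxy ▸ hyf⟩
  · exact case12 e f he heab htD hf hfcd huD ⟨v, hvt, hvu⟩
  · rw [Set.mem_singleton_iff] at hu1; subst hu1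
    exact case13 e he heab htD huD ⟨v, hvt, hvu⟩
  · exact (case12 f e hf hfab huD he hecd htD ⟨v, hvu, hvt⟩).symm
  · -- kap kap
    induction e using Sym2.ind with
    | _ p q =>
      induction f using Sym2.ind with
      | _ p' q' =>
        have hpq : p ≠ q := ((SimpleGraph.mem_edgeSet _).1 he).ne
        have hpq' : p' ≠ q' := ((SimpleGraph.mem_edgeSet _).1 hf).ne
        rw [Fglue_kap _ _ _ hpq, Fglue_kap _ _ _ hpq']
        obtain ⟨x, hxe, rfl⟩ := Sym2.mem_map.1 hvt
        obtain ⟨y, hyf, hy⟩ := Sym2.mem_map.1 hvu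
        have hxy : y = x := kap_inj k hy
        exact hnew _ _ he hf hecd hfcd htD huD (fun hh => htu (by rw [hh])) ⟨x, hxe, hxy ▸ hyf⟩
  · rw [Set.mem_singleton_iff] at hu1; subst hu1
    exact case23 e he hecd htD huD ⟨v, hvt, hvu⟩
  · rw [Set.mem_singleton_iff] at ht1; subst ht1
    exact (case13 f hf hfab huD htD ⟨v, hvu, hvt⟩).symm
  · rw [Set.mem_singleton_iff] at ht1; subst ht1
    exact (case23 f hf hfcd huD htD ⟨v, hvu, hvt⟩).symm
  · rw [Set.mem_singleton_iff] at ht1 hu1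
    exact absurd (ht1.trans hu1.symm) htu
lemma fin3_succ_ne : ∀ a : Fin 3, a + 1 ≠ a := by decide
lemma perm3_a : ∀ (α α₀ β₁ β₂ γ : Fin 3), α ≠ α₀ → β₁ ≠ β₂ →
    ∃ π : Fin 3 → Fin 3, Function.Injective π ∧ π γ ≠ α₀ ∧ π β₁ ≠ α ∧ π β₂ ≠ α := by decide
lemma perm3_b : ∀ (γ ζ α₀ μ₁ μ₂ : Fin 3), γ ≠ ζ →
    ∃ π : Fin 3 → Fin 3, Function.Injective π ∧ π γ ≠ α₀ ∧ π ζ ≠ μ₁ ∧ π ζ ≠ μ₂ := by decide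
lemma perm3_c : ∀ (γ α₀ : Fin 3), ∃ π : Fin 3 → Fin 3, Function.Injective π ∧ π γ ≠ α₀ := by
  decide
set_option maxRecDepth 10000 in
lemma perm4 : ∀ (ζ γ α α₀ : Fin 4), γ ≠ ζ →
    ∃ π : Fin 4 → Fin 4, Function.Injective π ∧ π ζ = α ∧ π γ ≠ α₀ := by decide

lemma mem_del {W : Type*} {G : SimpleGraph W} {d e : Sym2 W} :
    e ∈ (G.deleteEdges {d}).edgeSet ↔ e ∈ G.edgeSet ∧ e ≠ d := by
  rw [SimpleGraph.edgeSet_deleteEdges]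
  simp [Set.mem_diff]

lemma sBx_ne_AB {k : ℕ} {x : VT k} (hx : x ≠ A k) : s(B k, x) ≠ s(A k, B k) := by
  intro h
  rcases Sym2.eq_iff.1 h with ⟨h1, -⟩ | ⟨-, h2⟩
  · exact A_ne_B k h1.symm
  · exact hx h2

lemma AB_ne_AN (k : ℕ) : s(A k, B k) ≠ s(A k, N k) := by
  intro h
  rcases Sym2.eq_iff.1 h with ⟨-, h2⟩ | ⟨h1, -⟩
  · exact N_ne_B k h2.symm
  · exact N_ne_A k h1.symm

lemma pCD_mem : s(pC, pD) ∈ PStar.edgeSet := (SimpleGraph.mem_edgeSet _).2 (by decide)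
lemma pCU_mem : s(pC, pU) ∈ PStar.edgeSet := (SimpleGraph.mem_edgeSet _).2 (by decide)
lemma pDM1_mem : s(pD, pM1) ∈ PStar.edgeSet := (SimpleGraph.mem_edgeSet _).2 (by decide)
lemma pDN_mem : s(pD, pN) ∈ PStar.edgeSet := (SimpleGraph.mem_edgeSet _).2 (by decide)
lemma pCU_ne_pCD : s(pC, pU) ≠ s(pC, pD) := by decide
lemma pDM1_ne_pCD : s(pD, pM1) ≠ s(pC, pD) := by decide
lemma pDN_ne_pCD : s(pD, pN) ≠ s(pC, pD) := by decide
lemma pDM1_ne_pDN : s(pD, pM1) ≠ s(pD, pN) := by decide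

lemma step_del (k : ℕ)
    (hnA : (J k).neighborSet (A k) = {B k, N k})
    (hnB : (J k).neighborSet (B k) = {A k, M1 k, M2 k})
    (ihdel : ∀ e ∈ (J k).edgeSet, EdgeColorable ((J k).deleteEdges {e}) 3) :
    ∀ d ∈ (J (k+1)).edgeSet, EdgeColorable ((J (k+1)).deleteEdges {d}) 3 := by
  intro d hd
  rw [edge_decomp] at hd
  have hABmem := AB_mem hnA
  have hANmem := AN_mem hnA
  have hBM1mem := BM1_mem hnB
  have hBM2mem := BM2_mem hnB
  rcases hd with (⟨e₀, ⟨he₀, he₀ab⟩, rfl⟩ | ⟨f₀, ⟨hf₀, hf₀cd⟩, rfl⟩) | hd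
  · -- CASE I : d is an old edge
    rw [Set.mem_singleton_iff] at he₀ab
    obtain ⟨g1, hg1⟩ := total_of_ec (by omega) (ihdel e₀ he₀)
    obtain ⟨g2, hg2⟩ := total_of_ec (by omega) (pstar_del s(pC, pD) pCD_mem)
    set α := g1 s(A k, B k) with hα_def
    set α₀ := if s(A k, N k) = e₀ then α + 1 else g1 s(A k, N k) with hα₀_def
    set γ := g2 s(pC, pU) with hγ_def
    set β₁ := g2 s(pD, pM1) with hβ₁_def
    set β₂ := g2 s(pD, pN) with hβ₂_def
    have hABmem' : s(A k, B k) ∈ ((J k).deleteEdges {e₀}).edgeSet :=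
      mem_del.2 ⟨hABmem, Ne.symm he₀ab⟩
    have hαα₀ : α ≠ α₀ := by
      by_cases hh : s(A k, N k) = e₀
      · rw [hα₀_def, if_pos hh]
        exact (fin3_succ_ne α).symm
      · rw [hα₀_def, if_neg hh]
        exact hg1 _ _ hABmem' (mem_del.2 ⟨hANmem, hh⟩) (AB_ne_AN k)
          ⟨A k, Sym2.mem_mk_left _ _, Sym2.mem_mk_left _ _⟩
    have hβ : β₁ ≠ β₂ :=
      hg2 _ _ (mem_del.2 ⟨pDM1_mem, pDM1_ne_pCD⟩) (mem_del.2 ⟨pDN_mem, pDN_ne_pCD⟩)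
        pDM1_ne_pDN ⟨pD, Sym2.mem_mk_left _ _, Sym2.mem_mk_left _ _⟩
    obtain ⟨π, hπinj, hπγ, hπβ₁, hπβ₂⟩ := perm3_a α α₀ β₁ β₂ γ hαα₀ hβ
    refine glue_master g1 (fun s => π (g2 s)) α {Sym2.map (emb k) e₀} hnA hnB
      ?_ ?_ ?_ ?_ ?_
    · intro e f he hf heab hfab heD hfD hef hsh
      refine hg1 e f (mem_del.2 ⟨he, ?_⟩) (mem_del.2 ⟨hf, ?_⟩) hef hsh
      · exact fun hh => heD (by rw [hh]; exact rfl)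
      · exact fun hh => hfD (by rw [hh]; exact rfl)
    · intro e f he hf hecd hfcd heD hfD hef hsh hh
      exact hg2 e f (mem_del.2 ⟨he, hecd⟩) (mem_del.2 ⟨hf, hfcd⟩) hef hsh (hπinj hh)
    · intro hAN_D hPU_D
      have hANne : s(A k, N k) ≠ e₀ := fun hh => hAN_D (by rw [hh]; exact rfl)
      intro hh
      apply hπγ
      rw [hα₀_def, if_neg hANne]
      exact hh.symm
    · rintro x (rfl | rfl) hBx_D hd_D <;>
      · refine hg1 _ _ (mem_del.2 ⟨?_, fun hh => hBx_D (by rw [hh]; exact rfl)⟩)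
          hABmem' (sBx_ne_AB (by first | exact M1_ne_A k | exact M2_ne_A k))
          ⟨B k, Sym2.mem_mk_left _ _, Sym2.mem_mk_right _ _⟩
        first | exact hBM1mem | exact hBM2mem
    · rintro p (rfl | rfl) hDp_D hd_D
      · exact hπβ₁
      · exact hπβ₂
  · -- CASE II : d is a new-copy edge
    rw [Set.mem_singleton_iff] at hf₀cd
    obtain ⟨g1, hg1⟩ := total_of_ec (by omega) (ihdel s(A k, B k) hABmem)
    obtain ⟨g2, hg2⟩ := total_of_ec (by omega) (pstar_del f₀ hf₀)
    set α₀ := g1 s(A k, N k) with hα₀_def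
    set μ₁ := g1 s(B k, M1 k) with hμ₁_def
    set μ₂ := g1 s(B k, M2 k) with hμ₂_def
    set ζ := g2 s(pC, pD) with hζ_def
    set γ := if s(pC, pU) = f₀ then ζ + 1 else g2 s(pC, pU) with hγ_def
    have hγζ : γ ≠ ζ := by
      by_cases hh : s(pC, pU) = f₀
      · rw [hγ_def, if_pos hh]
        exact fin3_succ_ne ζ
      · rw [hγ_def, if_neg hh]
        exact hg2 _ _ (mem_del.2 ⟨pCU_mem, hh⟩)
          (mem_del.2 ⟨pCD_mem, Ne.symm hf₀cd⟩) pCU_ne_pCD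
          ⟨pC, Sym2.mem_mk_left _ _, Sym2.mem_mk_left _ _⟩
    obtain ⟨π, hπinj, hπγ, hπζ₁, hπζ₂⟩ := perm3_b γ ζ α₀ μ₁ μ₂ hγζ
    refine glue_master g1 (fun s => π (g2 s)) (π ζ) {Sym2.map (kap k) f₀} hnA hnB
      ?_ ?_ ?_ ?_ ?_
    · intro e f he hf heab hfab heD hfD hef hsh
      exact hg1 e f (mem_del.2 ⟨he, heab⟩) (mem_del.2 ⟨hf, hfab⟩) hef hsh
    · intro e f he hf hecd hfcd heD hfD hef hsh hh
      refine hg2 e f (mem_del.2 ⟨he, ?_⟩) (mem_del.2 ⟨hf, ?_⟩) hef hsh (hπinj hh)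
      · exact fun h2 => heD (by rw [h2]; exact rfl)
      · exact fun h2 => hfD (by rw [h2]; exact rfl)
    · intro hAN_D hPU_D
      have hPUne : s(pC, pU) ≠ f₀ := fun hh => hPU_D (by rw [hh]; exact rfl)
      intro hh
      apply hπγ
      rw [hγ_def, if_neg hPUne]
      exact hh.symm
    · rintro x (rfl | rfl) hBx_D hd_D
      · exact fun hh => hπζ₁ hh.symm
      · exact fun hh => hπζ₂ hh.symm
    · rintro p (rfl | rfl) hDp_D hd_D hh
      · have hne : s(pD, pM1) ≠ f₀ := fun h2 => hDp_D (by rw [h2]; exact rfl)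
        exact hg2 _ _ (mem_del.2 ⟨pDM1_mem, hne⟩)
          (mem_del.2 ⟨pCD_mem, Ne.symm hf₀cd⟩) pDM1_ne_pCD
          ⟨pD, Sym2.mem_mk_left _ _, Sym2.mem_mk_right _ _⟩ (hπinj hh)
      · have hne : s(pD, pN) ≠ f₀ := fun h2 => hDp_D (by rw [h2]; exact rfl)
        exact hg2 _ _ (mem_del.2 ⟨pDN_mem, hne⟩)
          (mem_del.2 ⟨pCD_mem, Ne.symm hf₀cd⟩) pDN_ne_pCD
          ⟨pD, Sym2.mem_mk_left _ _, Sym2.mem_mk_right _ _⟩ (hπinj hh)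
  · -- CASE III : d is the new cross edge at B
    rw [Set.mem_singleton_iff] at hd
    subst hd
    obtain ⟨g1, hg1⟩ := total_of_ec (by omega) (ihdel s(A k, B k) hABmem)
    obtain ⟨g2, hg2⟩ := total_of_ec (by omega) (pstar_del s(pC, pD) pCD_mem)
    set α₀ := g1 s(A k, N k) with hα₀_def
    set γ := g2 s(pC, pU) with hγ_def
    obtain ⟨π, hπinj, hπγ⟩ := perm3_c γ α₀
    refine glue_master g1 (fun s => π (g2 s)) α₀
      {s(emb k (B k), kap k pD)} hnA hnB ?_ ?_ ?_ ?_ ?_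
    · intro e f he hf heab hfab heD hfD hef hsh
      exact hg1 e f (mem_del.2 ⟨he, heab⟩) (mem_del.2 ⟨hf, hfab⟩) hef hsh
    · intro e f he hf hecd hfcd heD hfD hef hsh hh
      exact hg2 e f (mem_del.2 ⟨he, hecd⟩) (mem_del.2 ⟨hf, hfcd⟩) hef hsh (hπinj hh)
    · intro hAN_D hPU_D hh
      exact hπγ hh.symm
    · rintro x hx hBx_D hd_D
      exact absurd rfl hd_D
    · rintro p hp hDp_D hd_D
      exact absurd rfl hd_D

lemma step_ec4 (k : ℕ)
    (hnA : (J k).neighborSet (A k) = {B k, N k})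
    (hnB : (J k).neighborSet (B k) = {A k, M1 k, M2 k})
    (ihec4 : EdgeColorable (J k) 4) :
    EdgeColorable (J (k+1)) 4 := by
  have hABmem := AB_mem hnA
  have hANmem := AN_mem hnA
  have hBM1mem := BM1_mem hnB
  have hBM2mem := BM2_mem hnB
  obtain ⟨g1, hg1⟩ := total_of_ec (by omega) ihec4
  obtain ⟨g2, hg2⟩ := total_of_ec (by omega) pstar_ec4
  set α := g1 s(A k, B k) with hα_def
  set α₀ := g1 s(A k, N k) with hα₀_def
  set ζ := g2 s(pC, pD) with hζ_def
  set γ := g2 s(pC, pU) with hγ_def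
  have hγζ : γ ≠ ζ := hg2 _ _ pCU_mem pCD_mem pCU_ne_pCD
    ⟨pC, Sym2.mem_mk_left _ _, Sym2.mem_mk_left _ _⟩
  have hαα₀ : α ≠ α₀ := hg1 _ _ hABmem hANmem (AB_ne_AN k)
    ⟨A k, Sym2.mem_mk_left _ _, Sym2.mem_mk_left _ _⟩
  obtain ⟨π, hπinj, hπζ, hπγ⟩ := perm4 ζ γ α α₀ hγζ
  have := glue_master g1 (fun s => π (g2 s)) α (∅ : Set (Sym2 (VT (k+1)))) hnA hnB
    (fun e f he hf heab hfab _ _ hef hsh => hg1 e f he hf hef hsh)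
    (fun e f he hf hecd hfcd _ _ hef hsh hh => hg2 e f he hf hef hsh (hπinj hh))
    (fun _ _ hh => hπγ hh.symm)
    ?_ ?_
  · rwa [SimpleGraph.deleteEdges_empty] at this
  · rintro x (rfl | rfl) _ _ <;>
    · refine hg1 _ _ ?_ hABmem (sBx_ne_AB (by first | exact M1_ne_A k | exact M2_ne_A k))
        ⟨B k, Sym2.mem_mk_left _ _, Sym2.mem_mk_right _ _⟩
      first | exact hBM1mem | exact hBM2mem
  · rintro p (rfl | rfl) _ _ hh
    · rw [← hπζ] at hh
      exact hg2 _ _ pDM1_mem pCD_mem pDM1_ne_pCD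
        ⟨pD, Sym2.mem_mk_left _ _, Sym2.mem_mk_right _ _⟩ (hπinj hh)
    · rw [← hπζ] at hh
      exact hg2 _ _ pDN_mem pCD_mem pDN_ne_pCD
        ⟨pD, Sym2.mem_mk_left _ _, Sym2.mem_mk_right _ _⟩ (hπinj hh)

lemma mem_emb_edge {k : ℕ} {e : Sym2 (VT k)} (he : e ∈ (J k).edgeSet)
    (hene : e ≠ s(A k, B k)) : Sym2.map (emb k) e ∈ (J (k+1)).edgeSet := by
  rw [edge_decomp]
  exact Or.inl (Or.inl ⟨e, ⟨he, hene⟩, rfl⟩)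

lemma mem_kap_edge {k : ℕ} {f : Sym2 PV} (hf : f ∈ PStar.edgeSet)
    (hfne : f ≠ s(pC, pD)) : Sym2.map (kap k) f ∈ (J (k+1)).edgeSet := by
  rw [edge_decomp]
  exact Or.inl (Or.inr ⟨f, ⟨hf, hfne⟩, rfl⟩)

lemma step_nec3 (k : ℕ)
    (hnA : (J k).neighborSet (A k) = {B k, N k})
    (hnB : (J k).neighborSet (B k) = {A k, M1 k, M2 k})
    (ihnec3 : ¬ EdgeColorable (J k) 3) :
    ¬ EdgeColorable (J (k+1)) 3 := by
  intro hec
  obtain ⟨T, hT⟩ := total_of_ec (by omega) hec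
  have hdedge : s(emb k (B k), kap k pD) ∈ (J (k+1)).edgeSet :=
    (SimpleGraph.mem_edgeSet _).2 ((adj_emb_kap (by decide)).2 (Or.inr ⟨rfl, rfl⟩))
  set α := T s(emb k (B k), kap k pD) with hα_def
  set α₀ := T (Sym2.map (emb k) s(A k, N k)) with hα₀_def
  have hANmem' : Sym2.map (emb k) s(A k, N k) ∈ (J (k+1)).edgeSet :=
    mem_emb_edge (AN_mem hnA) (AB_ne_AN k).symm
  by_cases hcase : α = α₀
  · -- transfer the coloring to P*, contradiction with pstar_not_ec3
    apply pstar_not_ec3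
    apply ec_of_total (fun s => if s = s(pC, pD) then α else T (Sym2.map (kap k) s))
    have main : ∀ f, f ∈ PStar.edgeSet → f ≠ s(pC, pD) →
        (∃ v, v ∈ s(pC, pD) ∧ v ∈ f) → α ≠ T (Sym2.map (kap k) f) := by
      rintro f hf hfne ⟨w, hw1, hw2⟩
      rcases Sym2.mem_iff.1 hw1 with rfl | rfl
      · rcases edge_at_pC hf hw2 with hcc | hcc
        · exact absurd hcc hfne
        · rw [hcc, hcase, hα₀_def]
          intro hh
          refine hT _ _ hANmem' (mem_kap_edge pCU_mem pCU_ne_pCD) ?_ ?_ hh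
          · rw [Sym2.map_pair_eq, Sym2.map_pair_eq]
            intro h2
            rcases Sym2.eq_iff.1 h2 with ⟨-, h3⟩ | ⟨h3, -⟩
            · exact emb_ne_kap k (N k) (by decide) h3
            · exact emb_ne_kap k (A k) (by decide) h3
          · refine ⟨emb k (A k), ?_, ?_⟩
            · rw [Sym2.map_pair_eq]; exact Sym2.mem_mk_left _ _
            · rw [Sym2.map_pair_eq, ← kap_pC]; exact Sym2.mem_mk_left _ _
      · rcases edge_at_pD hf hw2 with hcc | hcc | hcc
        · exact absurd hcc hfne
        · rw [hcc]
          refine hT _ _ hdedge (mem_kap_edge pDM1_mem pDM1_ne_pCD)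
            (map_kap_ne_dedge (by decide)).symm ?_
          refine ⟨kap k pD, Sym2.mem_mk_right _ _, ?_⟩
          rw [Sym2.map_pair_eq]; exact Sym2.mem_mk_left _ _
        · rw [hcc]
          refine hT _ _ hdedge (mem_kap_edge pDN_mem pDN_ne_pCD)
            (map_kap_ne_dedge (by decide)).symm ?_
          refine ⟨kap k pD, Sym2.mem_mk_right _ _, ?_⟩
          rw [Sym2.map_pair_eq]; exact Sym2.mem_mk_left _ _
    intro e f he hf hef hsh
    dsimp only
    obtain ⟨v, hv1, hv2⟩ := hsh
    by_cases he' : e = s(pC, pD) <;> by_cases hf' : f = s(pC, pD)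
    · exact absurd (he'.trans hf'.symm) hef
    · rw [if_pos he', if_neg hf']
      subst he'
      exact main f hf hf' ⟨v, hv1, hv2⟩
    · rw [if_neg he', if_pos hf']
      subst hf'
      exact fun hh => (main e he he' ⟨v, hv2, hv1⟩) hh.symm
    · rw [if_neg he', if_neg hf']
      refine hT _ _ (mem_kap_edge he he') (mem_kap_edge hf hf')
        (fun hh => hef (Sym2.map.injective (kap_inj k) hh))
        ⟨kap k v, Sym2.mem_map.2 ⟨v, hv1, rfl⟩, Sym2.mem_map.2 ⟨v, hv2, rfl⟩⟩
  · -- transfer the coloring to J k, contradiction with the inductive hypothesis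
    apply ihnec3
    apply ec_of_total (fun s => if s = s(A k, B k) then α else T (Sym2.map (emb k) s))
    have main : ∀ f, f ∈ (J k).edgeSet → f ≠ s(A k, B k) →
        (∃ v, v ∈ s(A k, B k) ∧ v ∈ f) → α ≠ T (Sym2.map (emb k) f) := by
      rintro f hf hfne ⟨w, hw1, hw2⟩
      rcases Sym2.mem_iff.1 hw1 with rfl | rfl
      · rcases edge_at_A hnA hf hw2 with hcc | hcc
        · exact absurd hcc hfne
        · rw [hcc]
          exact hcase
      · rcases edge_at_B hnB hf hw2 with hcc | hcc | hcc
        · exact absurd hcc hfne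
        · rw [hcc]
          refine hT _ _ hdedge (mem_emb_edge (BM1_mem hnB) (sBx_ne_AB (M1_ne_A k)))
            (map_emb_ne_dedge _).symm ?_
          refine ⟨emb k (B k), Sym2.mem_mk_left _ _, ?_⟩
          rw [Sym2.map_pair_eq]; exact Sym2.mem_mk_left _ _
        · rw [hcc]
          refine hT _ _ hdedge (mem_emb_edge (BM2_mem hnB) (sBx_ne_AB (M2_ne_A k)))
            (map_emb_ne_dedge _).symm ?_
          refine ⟨emb k (B k), Sym2.mem_mk_left _ _, ?_⟩
          rw [Sym2.map_pair_eq]; exact Sym2.mem_mk_left _ _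
    intro e f he hf hef hsh
    dsimp only
    obtain ⟨v, hv1, hv2⟩ := hsh
    by_cases he' : e = s(A k, B k) <;> by_cases hf' : f = s(A k, B k)
    · exact absurd (he'.trans hf'.symm) hef
    · rw [if_pos he', if_neg hf']
      subst he'
      exact main f hf hf' ⟨v, hv1, hv2⟩
    · rw [if_neg he', if_pos hf']
      subst hf'
      exact fun hh => (main e he he' ⟨v, hv2, hv1⟩) hh.symm
    · rw [if_neg he', if_neg hf']
      refine hT _ _ (mem_emb_edge he he') (mem_emb_edge hf hf')
        (fun hh => hef (Sym2.map.injective (emb_inj k) hh))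
        ⟨emb k v, Sym2.mem_map.2 ⟨v, hv1, rfl⟩, Sym2.mem_map.2 ⟨v, hv2, rfl⟩⟩

/-! ### base case facts -/

lemma nbhd_comap' {V W : Type*} (e : V ≃ W) (G : SimpleGraph W) (v : V) :
    (G.comap ⇑e).neighborSet v = ⇑e.symm '' (G.neighborSet (e v)) := by
  ext w
  simp only [SimpleGraph.mem_neighborSet, SimpleGraph.comap_adj, Set.mem_image]
  constructor
  · intro h; exact ⟨e w, h, by simp⟩
  · rintro ⟨u, hu, rfl⟩; simpa using hu

lemma nbhd_pA : PStar.neighborSet pA = {pB, pN} := by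
  ext q; simpa using adj_pA q

lemma nbhd_pB : PStar.neighborSet pB = {pA, pM1, pU} := by
  ext q; simpa using adj_pB q

lemma J_zero : J 0 = PStar.comap ⇑e0 := rfl

lemma nbhdA_base : (J 0).neighborSet (A 0) = {B 0, N 0} := by
  rw [J_zero, nbhd_comap' e0 PStar (A 0), show e0 (A 0) = pA from rfl, nbhd_pA,
    Set.image_insert_eq, Set.image_singleton]
  rfl

lemma nbhdB_base : (J 0).neighborSet (B 0) = {A 0, M1 0, M2 0} := by
  rw [J_zero, nbhd_comap' e0 PStar (B 0), show e0 (B 0) = pB from rfl, nbhd_pB,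
    Set.image_insert_eq, Set.image_insert_eq, Set.image_singleton]
  rfl

structure JInv (k : ℕ) : Prop where
  hnA : (J k).neighborSet (A k) = {B k, N k}
  hnB : (J k).neighborSet (B k) = {A k, M1 k, M2 k}
  degAll : ∀ v, deg (J k) v ≤ 3
  degO : deg (J k) (Sum.inl pO1) = 3 ∧ deg (J k) (Sum.inl pO2) = 3 ∧
    deg (J k) (Sum.inl pD) = 3
  ec4 : EdgeColorable (J k) 4
  nec3 : ¬ EdgeColorable (J k) 3
  del : ∀ e ∈ (J k).edgeSet, EdgeColorable ((J k).deleteEdges {e}) 3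
  count : (J k).edgeSet.ncard = 11 * k + 12

lemma jinv_zero : JInv 0 := by
  refine ⟨nbhdA_base, nbhdB_base, ?_, ?_, ?_, ?_, ?_, ?_⟩
  · intro v
    rw [J_zero, deg_comap e0 PStar v]
    exact pstar_deg _
  · refine ⟨?_, ?_, ?_⟩ <;>
    · rw [J_zero, deg_comap e0 PStar _, deg_eq_card]
      first
        | exact pstar_deg3.1
        | exact pstar_deg3.2.1
        | exact pstar_deg3.2.2
  · exact (ec_comap_iff e0 PStar).2 pstar_ec4
  · exact fun h => pstar_not_ec3 ((ec_comap_iff e0 PStar).1 h)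
  · intro d hd
    rw [J_zero, comap_deleteEdges e0 PStar d]
    refine (ec_comap_iff e0 _).2 (pstar_del _ ?_)
    exact (comap_mem_edgeSet e0 PStar d).1 hd
  · rw [J_zero, edgeSet_ncard_comap e0 PStar, pstar_edge_ncard]

lemma inl_ne_cst {k : ℕ} {p : PV} {q : PV'} (h : p ≠ q.1) :
    (Sum.inl p : VT k) ≠ cst q k := by
  cases k with
  | zero =>
    simp only [cst, ne_eq, Sum.inl.injEq]
    exact h
  | succ k => simp [cst, mkL]

lemma jinv_succ (k : ℕ) (I : JInv k) : JInv (k+1) := by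
  refine ⟨?_, ?_, ?_, ?_, step_ec4 k I.hnA I.hnB I.ec4,
    step_nec3 k I.hnA I.hnB I.nec3, step_del k I.hnA I.hnB I.del,
    edge_count k (AB_mem I.hnA) I.count⟩
  · rw [show A (k+1) = kap k pA from A_succ k,
      nbhd_kap (by decide) (by decide), nbhd_pA,
      Set.image_insert_eq, Set.image_singleton, ← B_succ, ← N_succ]
  · rw [show B (k+1) = kap k pB from B_succ k,
      nbhd_kap (by decide) (by decide), nbhd_pB,
      Set.image_insert_eq, Set.image_insert_eq, Set.image_singleton,
      ← A_succ, ← M1_succ, ← M2_succ]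
  · intro v
    rcases vt_cases v with ⟨x, rfl⟩ | ⟨q, hq, rfl⟩
    · by_cases hxA : x = A k
      · subst hxA; rw [deg_succ_A I.hnA]; omega
      · by_cases hxB : x = B k
        · subst hxB; rw [deg_succ_B I.hnB]
        · rw [deg_succ_emb hxA hxB]; exact I.degAll x
    · by_cases hqD : q = pD
      · subst hqD; rw [deg_succ_pD]
      · rw [deg_succ_kap hq hqD]; exact pstar_deg q
  · have key : ∀ p : PV, p ≠ pA → p ≠ pB →
        deg (J (k+1)) (Sum.inl p) = deg (J k) (Sum.inl p) := by
      intro p h1 h2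
      have := deg_succ_emb (k := k) (x := Sum.inl p)
        (inl_ne_cst h1) (inl_ne_cst h2)
      exact this
    refine ⟨?_, ?_, ?_⟩ <;> rw [key _ (by decide) (by decide)]
    · exact I.degO.1
    · exact I.degO.2.1
    · exact I.degO.2.2

lemma jinv (k : ℕ) : JInv k := by
  induction k with
  | zero => exact jinv_zero
  | succ k ih => exact jinv_succ k ih

lemma not_ec2_of_deg3_off {W : Type*} {G : SimpleGraph W} {e : Sym2 W} {w : W}
    (hw : deg G w = 3) (hwe : w ∉ e) : ¬ EdgeColorable (G.deleteEdges {e}) 2 := by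
  obtain ⟨a, b, c, hab, hac, hbc, hset⟩ := Set.ncard_eq_three.1 hw
  have hmem : ∀ x, x ∈ ({a, b, c} : Set W) → (G.deleteEdges {e}).Adj w x := by
    intro x hx
    rw [← hset] at hx
    rw [SimpleGraph.deleteEdges_adj]
    refine ⟨hx, ?_⟩
    simp only [Set.mem_singleton_iff]
    intro hh
    exact hwe (hh ▸ Sym2.mem_mk_left _ _)
  exact not_ec_two (hmem a (Or.inl rfl)) (hmem b (Or.inr (Or.inl rfl)))
    (hmem c (Or.inr (Or.inr rfl))) hab hac hbc

lemma exists_deg3_off {k : ℕ} (e : Sym2 (VT k)) :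
    ∃ w : VT k, deg (J k) w = 3 ∧ w ∉ e := by
  have I := jinv k
  induction e using Sym2.ind with
  | _ x y =>
    have hmem : ∀ w : VT k, w ∈ s(x, y) ↔ w = x ∨ w = y := fun w => Sym2.mem_iff
    by_cases c1 : (Sum.inl pO1 : VT k) = x ∨ (Sum.inl pO1 : VT k) = y
    · by_cases c2 : (Sum.inl pO2 : VT k) = x ∨ (Sum.inl pO2 : VT k) = y
      · refine ⟨Sum.inl pD, I.degO.2.2, ?_⟩
        rw [hmem]
        have h12 : (Sum.inl pO1 : VT k) ≠ Sum.inl pO2 := by simp; decide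
        have hd1 : (Sum.inl pD : VT k) ≠ Sum.inl pO1 := by simp; decide
        have hd2 : (Sum.inl pD : VT k) ≠ Sum.inl pO2 := by simp; decide
        rintro (rfl | rfl) <;>
          rcases c1 with h | h <;> rcases c2 with h' | h' <;>
            first
              | exact hd1 h.symm
              | exact hd2 h'.symm
              | exact h12 (h.trans h'.symm)
      · refine ⟨Sum.inl pO2, I.degO.2.1, ?_⟩
        rw [hmem]; exact c2
    · refine ⟨Sum.inl pO1, I.degO.1, ?_⟩
      rw [hmem]; exact c1

lemma J_critical (k : ℕ) : IsCritical 3 (J k) := by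
  have I := jinv k
  refine ⟨I.degAll, ⟨Sum.inl pO1, I.degO.1⟩, chromIndex_eq I.ec4 I.nec3, ?_⟩
  intro e he
  obtain ⟨w, hw3, hwe⟩ := exists_deg3_off e
  exact chromIndex_eq (I.del e he) (not_ec2_of_deg3_off hw3 hwe)

lemma exists_critical (k : ℕ) : ∃ G : SimpleGraph (Fin (8 * k + 9)),
    IsCritical 3 G ∧ G.edgeSet.ncard = 11 * k + 12 := by
  have I := jinv k
  obtain ⟨hdeg, ⟨v₀, hv₀⟩, hchrom, hdel⟩ := J_critical k
  have eqv : Fin (8 * k + 9) ≃ VT k := (Fintype.equivFinOfCardEq (card_VT k)).symm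
  refine ⟨(J k).comap ⇑eqv, ⟨?_, ?_, ?_, ?_⟩, ?_⟩
  · intro v
    rw [deg_comap eqv (J k) v]
    exact hdeg _
  · refine ⟨eqv.symm v₀, ?_⟩
    rw [deg_comap eqv (J k) _, Equiv.apply_symm_apply]
    exact hv₀
  · rw [chromIndex_comap eqv (J k)]
    exact hchrom
  · intro d hd
    rw [comap_deleteEdges eqv (J k) d, chromIndex_comap eqv]
    exact hdel _ ((comap_mem_edgeSet eqv (J k) d).1 hd)
  · rw [edgeSet_ncard_comap eqv (J k)]
    exact I.count

lemma avg_formula (k : ℕ) :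
    (2 * (11 * k + 12) : ℝ) / (8 * k + 9) = 2 + 3/4 - (3/4) / (8 * k + 9) := by
  have hpos : (8 * (k : ℝ) + 9) ≠ 0 := by positivity
  field_simp
  ring

theorem stmt_4' :
    (∀ k : ℕ, ∃ G : SimpleGraph (Fin (8 * k + 9)),
      IsCritical 3 G ∧ G.edgeSet.ncard = 11 * k + 12) ∧
    (∀ k : ℕ, (2 * (11 * k + 12) : ℝ) / (8 * k + 9) < 2 + 3/4) ∧
    Filter.Tendsto (fun k : ℕ => (2 * (11 * k + 12) : ℝ) / (8 * k + 9))
      Filter.atTop (nhds (2 + 3/4)) := by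
  refine ⟨exists_critical, ?_, ?_⟩
  · intro k
    rw [avg_formula k]
    have hpos : (0:ℝ) < (3/4) / (8 * k + 9) := by positivity
    linarith
  · have h1 : Filter.Tendsto (fun k : ℕ => (8 * (k:ℝ) + 9)) Filter.atTop Filter.atTop := by
      apply Filter.tendsto_atTop_add_const_right
      exact (Filter.tendsto_id.const_mul_atTop (by norm_num)).comp
        tendsto_natCast_atTop_atTop
    have h2 : Filter.Tendsto (fun k : ℕ => (3/4 : ℝ) / (8 * k + 9))
        Filter.atTop (nhds 0) := Filter.Tendsto.div_atTop tendsto_const_nhds h1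
    have h3 := Filter.Tendsto.sub (tendsto_const_nhds
      (x := (2 + 3/4 : ℝ)) (f := Filter.atTop)) h2
    rw [sub_zero] at h3
    refine Filter.Tendsto.congr (fun k => (avg_formula k).symm) h3

/-- For every `k` there is a 3-critical graph with `8k + 9`
vertices and `11k + 12` edges; consequently there is an infinite sequence of
3-critical graphs whose average degrees approach `2 + 3/4` from below. -/
theorem stmt_4 :
    (∀ k : ℕ, ∃ G : SimpleGraph (Fin (8 * k + 9)),
      IsCritical 3 G ∧ G.edgeSet.ncard = 11 * k + 12) ∧
    (∀ k : ℕ, (2 * (11 * k + 12) : ℝ) / (8 * k + 9) < 2 + 3/4) ∧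
    Filter.Tendsto (fun k : ℕ => (2 * (11 * k + 12) : ℝ) / (8 * k + 9))
      Filter.atTop (nhds (2 + 3/4)) := by
  exact stmt_4'
end

section
/- (Vizing's Adjacency Lemma) Let G be a Δ-critical graph. If u and v are vertices of G with uv ∈ E(G), then the number of neighbors of u having degree Δ is at least max{2, Δ − d(v) + 1}. -/
namespace VAL

variable {V : Type} {G : SimpleGraph V} {Δ : ℕ} {u v : V}

/-- A proper partial edge coloring of `G` with the edge `uv` uncolored. -/
structure PC (G : SimpleGraph V) (Δ : ℕ) (u v : V) where
  c : Sym2 V → Option (Fin Δ)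
  dom_uv : c s(u,v) = none
  supp : ∀ ⦃e⦄, e ∉ G.edgeSet → c e = none
  dom : ∀ ⦃x y⦄, G.Adj x y → s(x,y) ≠ s(u,v) → (c s(x,y)).isSome
  proper : ∀ ⦃x y₁ y₂ α⦄, G.Adj x y₁ → G.Adj x y₂ →
    c s(x,y₁) = some α → c s(x,y₂) = some α → y₁ = y₂

/-- Color `α` appears on an edge at `x`. -/
def present (f : PC G Δ u v) (x : V) (α : Fin Δ) : Prop :=
  ∃ y, G.Adj x y ∧ f.c s(x,y) = some α

lemma not_ext (hnc : ¬ EdgeColorable G Δ) (huv : G.Adj u v) (f : PC G Δ u v) (α : Fin Δ)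
    (hu : ¬ present f u α) (hv : ¬ present f v α) : False := by
  classical
  apply hnc
  have hrep : ∀ (e : G.edgeSet) (x : V), x ∈ (e : Sym2 V) →
      ∃ y, G.Adj x y ∧ (e : Sym2 V) = s(x,y) := by
    rintro ⟨e, he⟩ x hx
    induction e with
    | _ a b =>
      rcases Sym2.mem_iff.mp hx with rfl | rfl
      · exact ⟨b, he, rfl⟩
      · exact ⟨a, ((G.mem_edgeSet).mp he).symm, Sym2.eq_swap⟩
  have hsome : ∀ (e : G.edgeSet), (e : Sym2 V) ≠ s(u,v) → (f.c e).isSome := by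
    rintro ⟨e, he⟩ hne
    induction e with
    | _ a b => exact f.dom ((G.mem_edgeSet).mp he) hne
  refine ⟨fun e => if h : (e : Sym2 V) = s(u,v) then α else (f.c e).get (hsome e h), ?_⟩
  rintro e₁ e₂ hne ⟨x, hx1, hx2⟩ hCeq
  dsimp only at hCeq
  by_cases h1 : (e₁ : Sym2 V) = s(u,v) <;> by_cases h2 : (e₂ : Sym2 V) = s(u,v)
  · exact hne (Subtype.ext (h1.trans h2.symm))
  · -- e₁ = uv, e₂ colored, value α
    rw [dif_pos h1, dif_neg h2] at hCeq
    obtain ⟨y, hy, hey⟩ := hrep e₂ x hx2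
    have hcx : f.c s(x,y) = some α := by
      rw [← hey]; rw [Option.eq_some_iff_get_eq]; exact ⟨hsome e₂ h2, hCeq.symm⟩
    have hx' : x = u ∨ x = v := by
      have := h1 ▸ hx1; exact Sym2.mem_iff.mp this
    rcases hx' with rfl | rfl
    · exact hu ⟨y, hy, hcx⟩
    · exact hv ⟨y, hy, hcx⟩
  · rw [dif_neg h1, dif_pos h2] at hCeq
    obtain ⟨y, hy, hey⟩ := hrep e₁ x hx1
    have hcx : f.c s(x,y) = some α := by
      rw [← hey]; rw [Option.eq_some_iff_get_eq]; exact ⟨hsome e₁ h1, hCeq⟩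
    have hx' : x = u ∨ x = v := by
      have := h2 ▸ hx2; exact Sym2.mem_iff.mp this
    rcases hx' with rfl | rfl
    · exact hu ⟨y, hy, hcx⟩
    · exact hv ⟨y, hy, hcx⟩
  · rw [dif_neg h1, dif_neg h2] at hCeq
    obtain ⟨y₁, hy₁, hey₁⟩ := hrep e₁ x hx1
    obtain ⟨y₂, hy₂, hey₂⟩ := hrep e₂ x hx2
    set β := (f.c e₁).get (hsome e₁ h1) with hβ
    have hc1 : f.c s(x,y₁) = some β := by
      rw [← hey₁, Option.eq_some_iff_get_eq]; exact ⟨hsome e₁ h1, rfl⟩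
    have hc2 : f.c s(x,y₂) = some β := by
      rw [← hey₂, Option.eq_some_iff_get_eq]; exact ⟨hsome e₂ h2, hCeq.symm⟩
    have : y₁ = y₂ := f.proper hy₁ hy₂ hc1 hc2
    exact hne (Subtype.ext (by rw [hey₁, hey₂, this]))

lemma not_colorable {k : ℕ} (h : sInf {n | EdgeColorable G n} = k + 1) :
    ¬ EdgeColorable G k := fun hc => by
  have := Nat.sInf_le (show k ∈ {n | EdgeColorable G n} from hc)
  omega

lemma colorable_of_chromIndex [Fintype V] {H : SimpleGraph V} {k : ℕ}
    (h : sInf {n | EdgeColorable H n} = k) : EdgeColorable H k := by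
  classical
  have hne : {n | EdgeColorable H n}.Nonempty := by
    refine ⟨Fintype.card H.edgeSet, ?_⟩
    refine ⟨fun e => (Fintype.equivFin H.edgeSet) e, fun e₁ e₂ hne _ hC => hne ?_⟩
    exact (Fintype.equivFin H.edgeSet).injective hC
  have := Nat.sInf_mem hne
  rwa [h] at this

/-- Build a partial coloring of `G` minus `uv` from a `Δ`-edge-coloring of
`G.deleteEdges {s(u,v)}`. -/
lemma exists_PC [Fintype V] (huv : G.Adj u v) (hΔ : 0 < Δ)
    (hdel : sInf {n | EdgeColorable (G.deleteEdges {s(u,v)}) n} = Δ) :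
    Nonempty (PC G Δ u v) := by
  classical
  set H := G.deleteEdges {s(u,v)} with hH
  obtain ⟨C, hC⟩ := colorable_of_chromIndex hdel
  have hHE : H.edgeSet = G.edgeSet \ {s(u,v)} := G.edgeSet_deleteEdges {s(u,v)}
  refine ⟨⟨fun e => if h : e ∈ H.edgeSet then some (C ⟨e, h⟩) else none, ?_, ?_, ?_, ?_⟩⟩
  · rw [dif_neg]; rw [hHE]; simp
  · intro e he
    rw [dif_neg]; rw [hHE]; exact fun h => he h.1
  · intro x y hxy hne
    rw [dif_pos]; · rfl
    · rw [hHE]; exact ⟨G.mem_edgeSet.mpr hxy, hne⟩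
  · intro x y₁ y₂ α h₁ h₂ hc₁ hc₂
    by_cases m₁ : s(x,y₁) ∈ H.edgeSet
    · by_cases m₂ : s(x,y₂) ∈ H.edgeSet
      · rw [dif_pos m₁] at hc₁; rw [dif_pos m₂] at hc₂
        by_cases heq : (⟨s(x,y₁), m₁⟩ : H.edgeSet) = ⟨s(x,y₂), m₂⟩
        · have : s(x,y₁) = s(x,y₂) := congrArg Subtype.val heq
          exact Sym2.congr_right.mp this
        · exact absurd (Option.some_injective _ (hc₁.trans hc₂.symm))
            (hC _ _ heq ⟨x, Sym2.mem_mk_left x y₁, Sym2.mem_mk_left x y₂⟩)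
      · rw [dif_neg m₂] at hc₂; exact absurd hc₂ (by simp)
    · rw [dif_neg m₁] at hc₁; exact absurd hc₁ (by simp)

/-! ### Kempe chains -/

/-- The subgraph of edges colored `γ` or `δ`. -/
def KG (f : PC G Δ u v) (γ δ : Fin Δ) : SimpleGraph V where
  Adj x y := G.Adj x y ∧ (f.c s(x,y) = some γ ∨ f.c s(x,y) = some δ)
  symm := ⟨by rintro x y ⟨h1, h2⟩; rw [Sym2.eq_swap] at h2; exact ⟨h1.symm, h2⟩⟩
  loopless := ⟨by rintro x ⟨h1, _⟩; exact G.irrefl h1⟩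

lemma reach_other {f : PC G Δ u v} {γ δ : Fin Δ} {z₀ x y : V} (hadj : G.Adj x y)
    (hcol : f.c s(x,y) = some γ ∨ f.c s(x,y) = some δ)
    (hy : (KG f γ δ).Reachable z₀ y) : (KG f γ δ).Reachable z₀ x :=
  hy.trans (SimpleGraph.Adj.reachable ⟨hadj.symm, by rwa [Sym2.eq_swap]⟩)

open scoped Classical in
/-- Swap colors `γ` and `δ` on the Kempe chain through `z₀`. -/
noncomputable def swapc (f : PC G Δ u v) (γ δ : Fin Δ) (z₀ : V) : Sym2 V → Option (Fin Δ) :=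
  fun e => if (f.c e = some γ ∨ f.c e = some δ) ∧ (∃ x ∈ e, (KG f γ δ).Reachable z₀ x)
    then (if f.c e = some γ then some δ else some γ) else f.c e

lemma swapc_eq_of_not {f : PC G Δ u v} {γ δ : Fin Δ} {z₀ : V} {e : Sym2 V}
    (h : ¬ (f.c e = some γ ∨ f.c e = some δ)) : swapc f γ δ z₀ e = f.c e := by
  rw [swapc, if_neg]; exact fun hc => h hc.1

lemma adj_of_colored {f : PC G Δ u v} {x y : V} {α : Fin Δ}
    (h : f.c s(x,y) = some α) : G.Adj x y := by
  by_contra hn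
  rw [f.supp (fun hm => hn (G.mem_edgeSet.mp hm))] at h
  exact absurd h (by simp)

lemma swapc_unreach {f : PC G Δ u v} {γ δ : Fin Δ} {z₀ x : V}
    (hx : ¬ (KG f γ δ).Reachable z₀ x) (y : V) :
    swapc f γ δ z₀ s(x,y) = f.c s(x,y) := by
  rw [swapc, if_neg]
  rintro ⟨hcol, w, hw, hr⟩
  rcases Sym2.mem_iff.mp hw with rfl | rfl
  · exact hx hr
  · rcases hcol with h | h
    · exact hx (reach_other (adj_of_colored h) (Or.inl h) hr)
    · exact hx (reach_other (adj_of_colored h) (Or.inr h) hr)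

/-- The swapped coloring is again a proper partial coloring. -/
noncomputable def swapPC (f : PC G Δ u v) (γ δ : Fin Δ) (hne : γ ≠ δ) (z₀ : V) :
    PC G Δ u v where
  c := swapc f γ δ z₀
  dom_uv := by
    rw [swapc_eq_of_not, f.dom_uv]
    rw [f.dom_uv]; rintro (h | h) <;> exact absurd h (by simp)
  supp := by
    intro e he
    rw [swapc_eq_of_not, f.supp he]
    rw [f.supp he]; rintro (h | h) <;> exact absurd h (by simp)
  dom := by
    intro x y hxy hneuv
    rw [swapc]
    split
    · split <;> rfl
    · exact f.dom hxy hneuv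
  proper := by
    intro x y₁ y₂ α h₁ h₂ hc₁ hc₂
    rw [swapc] at hc₁ hc₂
    by_cases k₁ : (f.c s(x,y₁) = some γ ∨ f.c s(x,y₁) = some δ) ∧
        (∃ w ∈ s(x,y₁), (KG f γ δ).Reachable z₀ w)
    · rw [if_pos k₁] at hc₁
      have hxreach : (KG f γ δ).Reachable z₀ x := by
        obtain ⟨w, hw, hr⟩ := k₁.2
        rcases Sym2.mem_iff.mp hw with rfl | rfl
        · exact hr
        · exact reach_other h₁ k₁.1 hr
      by_cases k₂ : (f.c s(x,y₂) = some γ ∨ f.c s(x,y₂) = some δ) ∧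
          (∃ w ∈ s(x,y₂), (KG f γ δ).Reachable z₀ w)
      · rw [if_pos k₂] at hc₂
        -- both swapped
        by_cases g₁ : f.c s(x,y₁) = some γ <;> by_cases g₂ : f.c s(x,y₂) = some γ
        · exact f.proper h₁ h₂ g₁ g₂
        · rw [if_pos g₁] at hc₁; rw [if_neg g₂] at hc₂
          exact absurd (Option.some_injective _ (hc₂.trans hc₁.symm)) hne
        · rw [if_neg g₁] at hc₁; rw [if_pos g₂] at hc₂
          exact absurd (Option.some_injective _ (hc₁.trans hc₂.symm)) hne
        · exact f.proper h₁ h₂ (k₁.1.resolve_left g₁) (k₂.1.resolve_left g₂)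
      · -- e₁ swapped, e₂ not: impossible
        rw [if_neg k₂] at hc₂
        exfalso
        apply k₂
        constructor
        · split at hc₁
          · exact Or.inr (hc₂.trans hc₁.symm)
          · exact Or.inl (hc₂.trans hc₁.symm)
        · exact ⟨x, Sym2.mem_mk_left x y₂, hxreach⟩
    · rw [if_neg k₁] at hc₁
      by_cases k₂ : (f.c s(x,y₂) = some γ ∨ f.c s(x,y₂) = some δ) ∧
          (∃ w ∈ s(x,y₂), (KG f γ δ).Reachable z₀ w)
      · rw [if_pos k₂] at hc₂
        have hxreach : (KG f γ δ).Reachable z₀ x := by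
          obtain ⟨w, hw, hr⟩ := k₂.2
          rcases Sym2.mem_iff.mp hw with rfl | rfl
          · exact hr
          · exact reach_other h₂ k₂.1 hr
        exfalso
        apply k₁
        constructor
        · split at hc₂
          · exact Or.inr (hc₁.trans hc₂.symm)
          · exact Or.inl (hc₁.trans hc₂.symm)
        · exact ⟨x, Sym2.mem_mk_left x y₁, hxreach⟩
      · rw [if_neg k₂] at hc₂
        exact f.proper h₁ h₂ hc₁ hc₂

lemma swapPC_c {f : PC G Δ u v} {γ δ : Fin Δ} {hne : γ ≠ δ} {z₀ : V} :
    (swapPC f γ δ hne z₀).c = swapc f γ δ z₀ := rfl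

lemma present_swap_unreach {f : PC G Δ u v} {γ δ : Fin Δ} {hne : γ ≠ δ} {z₀ x : V}
    (hx : ¬ (KG f γ δ).Reachable z₀ x) (β : Fin Δ) :
    present (swapPC f γ δ hne z₀) x β ↔ present f x β := by
  unfold present
  constructor <;> rintro ⟨y, hy, hc⟩ <;> refine ⟨y, hy, ?_⟩
  · rwa [swapPC_c, swapc_unreach hx] at hc
  · rwa [swapPC_c, swapc_unreach hx]

lemma present_swap_other {f : PC G Δ u v} {γ δ : Fin Δ} {hne : γ ≠ δ} {z₀ x : V}
    {β : Fin Δ} (hβγ : β ≠ γ) (hβδ : β ≠ δ) :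
    present (swapPC f γ δ hne z₀) x β ↔ present f x β := by
  unfold present
  have key : ∀ e, (swapc f γ δ z₀ e = some β ↔ f.c e = some β) := by
    intro e
    rw [swapc]
    split
    · rename_i hcond
      constructor
      · intro h
        split at h
        · exact absurd (Option.some_injective _ h.symm) hβδ
        · exact absurd (Option.some_injective _ h.symm) hβγ
      · intro h
        rcases hcond.1 with h' | h'
        · exact absurd (Option.some_injective _ (h.symm.trans h')) hβγ
        · exact absurd (Option.some_injective _ (h.symm.trans h')) hβδ
    · rfl
  constructor
  · rintro ⟨y, hy, hc⟩; exact ⟨y, hy, (key _).mp hc⟩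
  · rintro ⟨y, hy, hc⟩; exact ⟨y, hy, (key _).mpr hc⟩

lemma present_swap_reach_gd {f : PC G Δ u v} {γ δ : Fin Δ} {hne : γ ≠ δ} {z₀ x : V}
    (hx : (KG f γ δ).Reachable z₀ x) :
    present (swapPC f γ δ hne z₀) x γ ↔ present f x δ := by
  unfold present
  constructor
  · rintro ⟨y, hy, hc⟩
    refine ⟨y, hy, ?_⟩
    rw [swapPC_c, swapc] at hc
    split at hc
    · split at hc
      · exact absurd (Option.some_injective _ hc) (Ne.symm hne)
      · rename_i hcond _
        exact hcond.1.resolve_left (by assumption)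
    · exfalso
      rename_i hcond
      exact hcond ⟨Or.inl hc, ⟨x, Sym2.mem_mk_left x y, hx⟩⟩
  · rintro ⟨y, hy, hc⟩
    refine ⟨y, hy, ?_⟩
    rw [swapPC_c, swapc, if_pos ⟨Or.inr hc, ⟨x, Sym2.mem_mk_left x y, hx⟩⟩, if_neg]
    intro h
    exact hne (Option.some_injective _ (h.symm.trans hc))

lemma present_swap_reach_dg {f : PC G Δ u v} {γ δ : Fin Δ} {hne : γ ≠ δ} {z₀ x : V}
    (hx : (KG f γ δ).Reachable z₀ x) :
    present (swapPC f γ δ hne z₀) x δ ↔ present f x γ := by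
  unfold present
  constructor
  · rintro ⟨y, hy, hc⟩
    refine ⟨y, hy, ?_⟩
    rw [swapPC_c, swapc] at hc
    split at hc
    · split at hc
      · assumption
      · exact absurd (Option.some_injective _ hc) hne
    · exfalso
      rename_i hcond
      exact hcond ⟨Or.inr hc, ⟨x, Sym2.mem_mk_left x y, hx⟩⟩
  · rintro ⟨y, hy, hc⟩
    exact ⟨y, hy, by rw [swapPC_c, swapc, if_pos ⟨Or.inl hc, ⟨x, Sym2.mem_mk_left x y, hx⟩⟩, if_pos hc]⟩

/-! ### Components of max-degree-two graphs -/

lemma crossing {H : SimpleGraph V} (S : Set V) : ∀ {a b : V} (_ : H.Walk a b),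
    a ∉ S → b ∈ S → ∃ p q, H.Adj p q ∧ p ∉ S ∧ q ∈ S := by
  intro a b w
  induction w with
  | nil => intro ha hb; exact absurd hb ha
  | @cons x y z h q ih =>
    intro ha hb
    by_cases hy : y ∈ S
    · exact ⟨x, y, h, ha, hy⟩
    · exact ih hy hb

lemma second_vertex {H : SimpleGraph V} {a b : V} (p : H.Walk a b) (hne : a ≠ b) :
    ∃ n, H.Adj a n ∧ n ∈ p.support := by
  cases p with
  | nil => exact absurd rfl hne
  | cons h q => exact ⟨_, h, by simp⟩

lemma internal_two_nbrs {H : SimpleGraph V} {y : V} :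
    ∀ {a b : V} (p : H.Walk a b), p.IsPath → y ∈ p.support → y ≠ a → y ≠ b →
    ∃ n₁ n₂, n₁ ≠ n₂ ∧ H.Adj y n₁ ∧ H.Adj y n₂ ∧ n₁ ∈ p.support ∧ n₂ ∈ p.support := by
  intro a b p
  induction p with
  | nil => intro _ hy hya _; simp at hy; exact absurd hy hya
  | @cons w x z hadj q ih =>
    intro hp hy hya hyb
    rw [SimpleGraph.Walk.support_cons] at hy
    rcases List.mem_cons.mp hy with rfl | hy'
    · exact absurd rfl hya
    · rw [SimpleGraph.Walk.cons_isPath_iff] at hp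
      by_cases hyx : y = x
      · subst hyx
        obtain ⟨n, hn, hnmem⟩ := second_vertex q hyb
        refine ⟨w, n, ?_, hadj.symm, hn, by simp, ?_⟩
        · rintro rfl; exact hp.2 hnmem
        · rw [SimpleGraph.Walk.support_cons]; exact List.mem_cons_of_mem _ hnmem
      · obtain ⟨n₁, n₂, hne, ha₁, ha₂, hm₁, hm₂⟩ := ih hp.1 hy' hyx hyb
        exact ⟨n₁, n₂, hne, ha₁, ha₂,
          by rw [SimpleGraph.Walk.support_cons]; exact List.mem_cons_of_mem _ hm₁,
          by rw [SimpleGraph.Walk.support_cons]; exact List.mem_cons_of_mem _ hm₂⟩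

/-- In a graph of maximum degree two, three distinct "near-leaves" cannot lie in a
common connected component. -/
lemma pathfact {H : SimpleGraph V} {x₁ x₂ x₃ : V}
    (hmax : ∀ x a b c', H.Adj x a → H.Adj x b → H.Adj x c' → a = b ∨ a = c' ∨ b = c')
    (h1 : ∀ a b, H.Adj x₁ a → H.Adj x₁ b → a = b)
    (h2 : ∀ a b, H.Adj x₂ a → H.Adj x₂ b → a = b)
    (h3 : ∀ a b, H.Adj x₃ a → H.Adj x₃ b → a = b)
    (d12 : x₁ ≠ x₂) (d13 : x₁ ≠ x₃) (d23 : x₂ ≠ x₃)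
    (r12 : H.Reachable x₁ x₂) (r13 : H.Reachable x₁ x₃) : False := by
  classical
  obtain ⟨w0⟩ := r12
  set p : H.Walk x₁ x₂ := (w0.toPath : H.Walk x₁ x₂) with hpdef
  have hp : p.IsPath := w0.toPath.2
  have hx3 : x₃ ∉ p.support := by
    intro hmem
    obtain ⟨n₁, n₂, hne, ha₁, ha₂, _, _⟩ :=
      internal_two_nbrs p hp hmem (Ne.symm d13) (Ne.symm d23)
    exact hne (h3 _ _ ha₁ ha₂)
  obtain ⟨w1⟩ := r13
  obtain ⟨a, b, hab, haS, hbS⟩ :=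
    crossing {y | y ∈ p.support} w1.reverse hx3 (by simp)
  have hbS' : b ∈ p.support := hbS
  by_cases hb1 : b = x₁
  · subst hb1
    obtain ⟨n, hn, hnmem⟩ := second_vertex p d12
    have : a = n := h1 a n (hab.symm) hn
    exact haS (by rw [Set.mem_setOf_eq, this]; exact hnmem)
  · by_cases hb2 : b = x₂
    · subst hb2
      obtain ⟨n, hn, hnmem⟩ := second_vertex p.reverse (Ne.symm d12)
      rw [SimpleGraph.Walk.support_reverse] at hnmem
      have hnmem' : n ∈ p.support := List.mem_reverse.mp hnmem
      have : a = n := h2 a n (hab.symm) hn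
      exact haS (by rw [Set.mem_setOf_eq, this]; exact hnmem')
    · obtain ⟨n₁, n₂, hne, ha₁, ha₂, hm₁, hm₂⟩ := internal_two_nbrs p hp hbS' hb1 hb2
      rcases hmax b n₁ n₂ a ha₁ ha₂ hab.symm with h | h | h
      · exact hne h
      · exact haS (by rw [Set.mem_setOf_eq, ← h]; exact hm₁)
      · exact haS (by rw [Set.mem_setOf_eq, ← h]; exact hm₂)

/-! ### Vizing fans -/

/-- Fan chains at `u` starting from `v`: each vertex is joined to `u` by an edge whose
color is missing at the previous vertex. -/
inductive Ch (f : PC G Δ u v) : List V → Prop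
  | base : Ch f [v]
  | step {z w : V} {l : List V} {γ : Fin Δ} : Ch f (w :: l) → G.Adj u z →
      f.c s(u,z) = some γ → ¬ present f w γ → Ch f (z :: w :: l)

lemma ch_mem_adj (huv : G.Adj u v) {f : PC G Δ u v} {l : List V} (h : Ch f l) :
    ∀ x ∈ l, G.Adj u x := by
  induction h with
  | base =>
    intro x hx
    rcases List.mem_singleton.mp hx with rfl
    exact huv
  | step hch hadj hc hp ih =>
    intro x hx
    rcases List.mem_cons.mp hx with rfl | hx'
    · exact hadj
    · exact ih x hx'

lemma ch_suffix' {f : PC G Δ u v} {l : List V} (h : Ch f l) :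
    ∀ l₁ l₂ : List V, l = l₁ ++ l₂ → l₂ ≠ [] → Ch f l₂ := by
  induction h with
  | base =>
    intro l₁ l₂ heq hne
    cases l₁ with
    | nil => rw [List.nil_append] at heq; rw [← heq]; exact Ch.base
    | cons a t =>
      rw [List.cons_append] at heq
      have := (List.cons.injEq _ _ _ _).mp heq
      exact absurd (List.append_eq_nil_iff.mp this.2.symm).2 hne
  | @step z w l γ hch hadj hc hp ih =>
    intro l₁ l₂ heq hne
    cases l₁ with
    | nil => rw [List.nil_append] at heq; rw [← heq]; exact Ch.step hch hadj hc hp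
    | cons a t =>
      rw [List.cons_append] at heq
      have := (List.cons.injEq _ _ _ _).mp heq
      exact ih t l₂ this.2 hne

lemma ch_dedup {f : PC G Δ u v} :
    ∀ n (l : List V), l.length ≤ n → Ch f l →
    ∃ l', Ch f l' ∧ l'.Nodup ∧ l'.head? = l.head? ∧ l' ⊆ l ∧ l'.length ≤ l.length := by
  intro n
  induction n with
  | zero =>
    intro l hlen hch
    cases hch <;> simp at hlen
  | succ n ih =>
    intro l hlen hch
    cases hch with
    | base => exact ⟨[v], Ch.base, List.nodup_singleton v, rfl, fun a ha => ha, le_rfl⟩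
    | @step z w l' γ hch hadj hc hp =>
      by_cases hz : z ∈ w :: l'
      · obtain ⟨l₁, l₂, heq⟩ := List.append_of_mem hz
        have hchz : Ch f (z :: l₂) := ch_suffix' hch l₁ (z :: l₂) heq (by simp)
        have hlen2 : (z :: l₂).length ≤ (w :: l').length := by
          rw [heq]; simp only [List.length_cons, List.length_append]; omega
        obtain ⟨l'', h1, h2, h3, h4, h5⟩ := ih (z :: l₂)
          (by have ha := hlen; have hb := hlen2
              simp only [List.length_cons] at ha hb ⊢; omega) hchz
        refine ⟨l'', h1, h2, by rw [h3]; rfl, ?_, ?_⟩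
        · intro a ha
          have : a ∈ z :: l₂ := h4 ha
          rcases List.mem_cons.mp this with rfl | h
          · exact List.mem_cons_self
          · refine List.mem_cons_of_mem _ ?_
            rw [heq]
            exact List.mem_append_right _ (List.mem_cons_of_mem _ h)
        · calc l''.length ≤ (z :: l₂).length := h5
            _ ≤ (w :: l').length := hlen2
            _ ≤ (z :: w :: l').length := by simp
      · obtain ⟨l'', h1, h2, h3, h4, h5⟩ := ih (w :: l') (by simp at hlen ⊢; omega) hch
        cases l'' with
        | nil => exact absurd h3.symm (by simp)
        | cons b t =>
          have hbw : b = w := by simpa using h3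
          subst hbw
          refine ⟨z :: b :: t, Ch.step h1 hadj hc hp, ?_, rfl, ?_, by simpa using h5⟩
          · exact List.nodup_cons.mpr ⟨fun hmem => hz (h4 hmem), h2⟩
          · intro a ha
            rcases List.mem_cons.mp ha with rfl | h
            · exact List.mem_cons_self
            · exact List.mem_cons_of_mem _ (h4 h)

/-! ### Recoloring a single fan edge -/

open scoped Classical in
noncomputable def recolor (f : PC G Δ u v) (z : V) (δ : Fin Δ) (hadj : G.Adj u z)
    (hzv : z ≠ v) (hu : ¬ present f u δ) (hz : ¬ present f z δ) : PC G Δ u v where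
  c := fun e => if e = s(u,z) then some δ else f.c e
  dom_uv := by
    rw [if_neg, f.dom_uv]
    intro h
    rcases Sym2.eq_iff.mp h with ⟨_, h2⟩ | ⟨h1, _⟩
    · exact hzv h2.symm
    · exact hadj.ne h1
  supp := by
    intro e he
    rw [if_neg, f.supp he]
    rintro rfl
    exact he (G.mem_edgeSet.mpr hadj)
  dom := by
    intro x y hxy hne
    split
    · rfl
    · exact f.dom hxy hne
  proper := by
    intro x y₁ y₂ α h₁ h₂ hc₁ hc₂
    by_cases k₁ : s(x,y₁) = s(u,z) <;> by_cases k₂ : s(x,y₂) = s(u,z)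
    · exact Sym2.congr_right.mp (k₁.trans k₂.symm)
    · rw [if_pos k₁] at hc₁; rw [if_neg k₂] at hc₂
      have hα : α = δ := (Option.some_injective _ hc₁).symm
      subst hα
      exfalso
      rcases Sym2.eq_iff.mp k₁ with ⟨hx, _⟩ | ⟨hx, _⟩
      · subst hx; exact hu ⟨y₂, h₂, hc₂⟩
      · subst hx; exact hz ⟨y₂, h₂, hc₂⟩
    · rw [if_neg k₁] at hc₁; rw [if_pos k₂] at hc₂
      have hα : α = δ := (Option.some_injective _ hc₂).symm
      subst hα
      exfalso
      rcases Sym2.eq_iff.mp k₂ with ⟨hx, _⟩ | ⟨hx, _⟩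
      · subst hx; exact hu ⟨y₁, h₁, hc₁⟩
      · subst hx; exact hz ⟨y₁, h₁, hc₁⟩
    · rw [if_neg k₁] at hc₁; rw [if_neg k₂] at hc₂
      exact f.proper h₁ h₂ hc₁ hc₂

open scoped Classical in
lemma recolor_c {f : PC G Δ u v} {z : V} {δ : Fin Δ} {hadj : G.Adj u z}
    {hzv : z ≠ v} {hu : ¬ present f u δ} {hz : ¬ present f z δ} {e : Sym2 V} :
    (recolor f z δ hadj hzv hu hz).c e = if e = s(u,z) then some δ else f.c e := rfl

lemma recolor_c_ne {f : PC G Δ u v} {z : V} {δ : Fin Δ} {hadj : G.Adj u z}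
    {hzv : z ≠ v} {hu : ¬ present f u δ} {hz : ¬ present f z δ} {e : Sym2 V}
    (h : e ≠ s(u,z)) : (recolor f z δ hadj hzv hu hz).c e = f.c e := by
  rw [recolor_c, if_neg h]

lemma present_recolor_of_ne {f : PC G Δ u v} {z : V} {δ : Fin Δ} {hadj : G.Adj u z}
    {hzv : z ≠ v} {hu : ¬ present f u δ} {hz : ¬ present f z δ} {x : V}
    (hxu : x ≠ u) (hxz : x ≠ z) (β : Fin Δ) :
    present (recolor f z δ hadj hzv hu hz) x β ↔ present f x β := by
  have key : ∀ t, s(x,t) ≠ s(u,z) := by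
    intro t h
    rcases Sym2.eq_iff.mp h with ⟨h1, _⟩ | ⟨h1, _⟩
    · exact hxu h1
    · exact hxz h1
  constructor <;> rintro ⟨y, hy, hc⟩ <;> refine ⟨y, hy, ?_⟩
  · rwa [recolor_c_ne (key y)] at hc
  · rwa [recolor_c_ne (key y)]

lemma present_recolor_u {f : PC G Δ u v} {z : V} {δ γ : Fin Δ} {hadj : G.Adj u z}
    {hzv : z ≠ v} {hu : ¬ present f u δ} {hz : ¬ present f z δ}
    (hc : f.c s(u,z) = some γ) (hgd : γ ≠ δ) :
    ¬ present (recolor f z δ hadj hzv hu hz) u γ := by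
  rintro ⟨y, hy, hcy⟩
  by_cases h : s(u,y) = s(u,z)
  · rw [recolor_c, if_pos h] at hcy
    exact hgd (Option.some_injective _ hcy).symm
  · rw [recolor_c_ne h] at hcy
    exact h (by rw [f.proper hy hadj hcy hc])

/-! ### Chain transfer between colorings -/

lemma ch_congr {f f' : PC G Δ u v} : ∀ {l : List V}, Ch f l →
    (∀ x ∈ l, f'.c s(u,x) = f.c s(u,x)) →
    (∀ x ∈ l, ∀ β, present f' x β ↔ present f x β) → Ch f' l := by
  intro l h
  induction h with
  | base => exact fun _ _ => Ch.base
  | @step z w l γ hch hadj hc hp ih =>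
    intro he hpres
    refine Ch.step (γ := γ) (ih (fun x hx => he x (List.mem_cons_of_mem _ hx))
        (fun x hx => hpres x (List.mem_cons_of_mem _ hx))) hadj ?_ ?_
    · rw [he z (List.mem_cons_self)]; exact hc
    · intro hp'
      exact hp ((hpres w (List.mem_cons_of_mem _ (List.mem_cons_self)) γ).mp hp')

lemma ch_break {f f' : PC G Δ u v} : ∀ {l : List V}, Ch f l →
    (∀ x ∈ l, f'.c s(u,x) = f.c s(u,x)) →
    Ch f' l ∨ ∃ y ∈ l.tail, ∃ β x', ¬ present f y β ∧ present f' y β ∧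
      G.Adj u x' ∧ f.c s(u,x') = some β := by
  intro l h
  induction h with
  | base => exact fun _ => Or.inl Ch.base
  | @step z w l γ hch hadj hc hp ih =>
    intro he
    rcases ih (fun x hx => he x (List.mem_cons_of_mem _ hx)) with hch' | ⟨y, hy, rest⟩
    · by_cases hpw : present f' w γ
      · exact Or.inr ⟨w, List.mem_cons_self, γ, z, hp, hpw, hadj, hc⟩
      · exact Or.inl (Ch.step hch' hadj (by rw [he z (List.mem_cons_self)]; exact hc) hpw)
    · exact Or.inr ⟨y, List.mem_cons_of_mem _ hy, rest⟩

/-! ### The shifting argument -/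

lemma shift (hnc : ¬ EdgeColorable G Δ) (huv : G.Adj u v) :
    ∀ n (f : PC G Δ u v) (z : V) (l : List V) (δ : Fin Δ), Ch f (z :: l) →
    (z :: l).Nodup → (z :: l).length ≤ n →
    ¬ present f z δ → ¬ present f u δ → False := by
  intro n
  induction n with
  | zero => intro f z l δ _ _ hlen _ _; simp at hlen
  | succ n ih =>
    intro f z l δ hch hnd hlen hz hu
    cases hch with
    | base => exact not_ext hnc huv f δ hu hz
    | @step z w l' γ hch' hadj hc hp =>
      have hzu : u ≠ z := hadj.ne
      have hzv : z ≠ v := by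
        rintro rfl
        rw [f.dom_uv] at hc
        exact absurd hc (by simp)
      have hgd : γ ≠ δ := by rintro rfl; exact hu ⟨z, hadj, hc⟩
      have hznl : z ∉ w :: l' := (List.nodup_cons.mp hnd).1
      set f' := recolor f z δ hadj hzv hu hz with hf'
      have hedge : ∀ x ∈ w :: l', f'.c s(u,x) = f.c s(u,x) := by
        intro x hx
        refine recolor_c_ne ?_
        intro h
        rcases Sym2.eq_iff.mp h with ⟨_, h2⟩ | ⟨h1, _⟩
        · rw [h2] at hx; exact hznl hx
        · exact hzu h1
      have hpres : ∀ x ∈ w :: l', ∀ β, present f' x β ↔ present f x β := by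
        intro x hx β
        exact present_recolor_of_ne (ch_mem_adj huv hch' x hx).ne'
          (fun h => hznl (by rw [← h]; exact hx)) β
      have hch'' : Ch f' (w :: l') := ch_congr hch' hedge hpres
      refine ih f' w l' γ hch'' (List.nodup_cons.mp hnd).2 (by simp at hlen ⊢; omega) ?_ ?_
      · intro h
        exact hp ((hpres w (List.mem_cons_self) γ).mp h)
      · exact present_recolor_u hc hgd

/-! ### The Kempe-chain argument -/

lemma L2 (hnc : ¬ EdgeColorable G Δ) (huv : G.Adj u v) :
    ∀ n (f : PC G Δ u v) (z : V) (l : List V) (δ γ : Fin Δ),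
    ¬ present f u γ → Ch f (z :: l) → (z :: l).Nodup → (z :: l).length ≤ n →
    ¬ present f z δ → ¬ (KG f γ δ).Reachable z u → False := by
  intro n
  induction n using Nat.strong_induction_on with
  | _ n ih =>
  intro f z l δ γ hu hch hnd hlen hz hreach
  by_cases hpz : present f z γ
  case neg => exact shift hnc huv (z :: l).length f z l γ hch hnd le_rfl hpz hu
  have hgd : γ ≠ δ := by rintro rfl; exact hz hpz
  set f' := swapPC f γ δ hgd z with hf'
  have hedge : ∀ x ∈ z :: l, f'.c s(u,x) = f.c s(u,x) := by
    intro x hx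
    exact swapc_unreach hreach x
  have hu' : ¬ present f' u γ := fun h => hu ((present_swap_unreach hreach γ).mp h)
  have hz' : ¬ present f' z γ :=
    fun h => hz ((present_swap_reach_gd (SimpleGraph.Reachable.refl z)).mp h)
  rcases ch_break hch hedge with hch' | ⟨y, hy, β, x', hnpf, hpf', hadjx, hcx⟩
  · exact shift hnc huv (z :: l).length f' z l γ hch' hnd le_rfl hz' hu'
  · have hyreach : (KG f γ δ).Reachable z y := by
      by_contra hnr
      exact hnpf ((present_swap_unreach hnr β).mp hpf')
    have hβ : β = γ ∨ β = δ := by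
      by_contra hb
      push_neg at hb
      exact hnpf ((present_swap_other hb.1 hb.2).mp hpf')
    rcases hβ with rfl | rfl
    · exact hu ⟨x', hadjx, hcx⟩
    · have hyl : y ∈ l := hy
      obtain ⟨l₁, l₂, heq⟩ := List.append_of_mem hyl
      have hchy : Ch f (y :: l₂) :=
        ch_suffix' hch (z :: l₁) (y :: l₂) (by rw [heq]; rfl) (by simp)
      have hndy : (y :: l₂).Nodup := by
        rw [heq] at hnd
        exact (List.nodup_cons.mp hnd).2.of_append_right
      have hlt : (y :: l₂).length < n := by
        have h1 : (z :: l).length ≤ n := hlen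
        have h2 : l.length = l₁.length + (l₂.length + 1) := by rw [heq]; simp
        simp only [List.length_cons] at h1 ⊢
        omega
      have hnry : ¬ (KG f γ β).Reachable y u := fun h => hreach (hyreach.trans h)
      exact ih (y :: l₂).length hlt f y l₂ β γ hu hchy hndy le_rfl hnpf hnry

/-! ### Elementarity of the fan -/

lemma zp_adj (huv : G.Adj u v) {f : PC G Δ u v} {z : V} (h : ∃ l, Ch f (z :: l)) :
    G.Adj u z := by
  obtain ⟨l, hch⟩ := h
  exact ch_mem_adj huv hch z (List.mem_cons_self)

lemma elem_u (hnc : ¬ EdgeColorable G Δ) (huv : G.Adj u v) {f : PC G Δ u v} {z : V}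
    {δ : Fin Δ} (hZ : ∃ l, Ch f (z :: l)) (hδ : ¬ present f z δ) : present f u δ := by
  by_contra hu
  obtain ⟨l, hch⟩ := hZ
  obtain ⟨l', h1, h2, h3, _, _⟩ := ch_dedup (z :: l).length (z :: l) le_rfl hch
  cases l' with
  | nil => exact absurd h3.symm (by simp)
  | cons b t =>
    have hbz : b = z := by simpa using h3
    subst hbz
    exact shift hnc huv (b :: t).length f b t δ h1 h2 le_rfl hδ hu

lemma elem_two (hnc : ¬ EdgeColorable G Δ) (huv : G.Adj u v) {f : PC G Δ u v}
    {z₁ z₂ : V} {δ : Fin Δ} (hγex : ∃ γ, ¬ present f u γ)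
    (hZ1 : ∃ l, Ch f (z₁ :: l)) (hZ2 : ∃ l, Ch f (z₂ :: l)) (hne : z₁ ≠ z₂)
    (h1 : ¬ present f z₁ δ) (h2 : ¬ present f z₂ δ) : False := by
  obtain ⟨γ, hγ⟩ := hγex
  have hp1 : present f z₁ γ := by
    by_contra hq; exact hγ (elem_u hnc huv hZ1 hq)
  have hgd : γ ≠ δ := fun h => h1 (h ▸ hp1)
  set H := KG f γ δ with hH
  have leafγ : ∀ x : V, ¬ present f x γ → ∀ a b, H.Adj x a → H.Adj x b → a = b := by
    rintro x hx a b ⟨ha, hca⟩ ⟨hb, hcb⟩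
    have ca : f.c s(x,a) = some δ := by
      rcases hca with h | h
      · exact absurd ⟨a, ha, h⟩ hx
      · exact h
    have cb : f.c s(x,b) = some δ := by
      rcases hcb with h | h
      · exact absurd ⟨b, hb, h⟩ hx
      · exact h
    exact f.proper ha hb ca cb
  have leafδ : ∀ x : V, ¬ present f x δ → ∀ a b, H.Adj x a → H.Adj x b → a = b := by
    rintro x hx a b ⟨ha, hca⟩ ⟨hb, hcb⟩
    have ca : f.c s(x,a) = some γ := by
      rcases hca with h | h
      · exact h
      · exact absurd ⟨a, ha, h⟩ hx
    have cb : f.c s(x,b) = some γ := by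
      rcases hcb with h | h
      · exact h
      · exact absurd ⟨b, hb, h⟩ hx
    exact f.proper ha hb ca cb
  have hmax : ∀ x a b c', H.Adj x a → H.Adj x b → H.Adj x c' → a = b ∨ a = c' ∨ b = c' := by
    rintro x a b c' ⟨ha, hca⟩ ⟨hb, hcb⟩ ⟨hc, hcc⟩
    rcases hca with p1 | p1 <;> rcases hcb with p2 | p2 <;> rcases hcc with p3 | p3
    · exact Or.inl (f.proper ha hb p1 p2)
    · exact Or.inl (f.proper ha hb p1 p2)
    · exact Or.inr (Or.inl (f.proper ha hc p1 p3))
    · exact Or.inr (Or.inr (f.proper hb hc p2 p3))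
    · exact Or.inr (Or.inr (f.proper hb hc p2 p3))
    · exact Or.inr (Or.inl (f.proper ha hc p1 p3))
    · exact Or.inl (f.proper ha hb p1 p2)
    · exact Or.inl (f.proper ha hb p1 p2)
  have applyL2 : ∀ z : V, (∃ l, Ch f (z :: l)) → ¬ present f z δ →
      ¬ H.Reachable z u → False := by
    intro z hZ hzd hnr
    obtain ⟨l, hch⟩ := hZ
    obtain ⟨l', c1, c2, c3, _, _⟩ := ch_dedup (z :: l).length (z :: l) le_rfl hch
    cases l' with
    | nil => exact absurd c3.symm (by simp)
    | cons b t =>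
      have hbz : b = z := by simpa using c3
      subst hbz
      exact L2 hnc huv (b :: t).length f b t δ γ hγ c1 c2 le_rfl hzd hnr
  by_cases r1 : H.Reachable z₁ u
  · by_cases r2 : H.Reachable z₂ u
    · exact pathfact hmax (leafγ u hγ) (leafδ z₁ h1) (leafδ z₂ h2)
        (zp_adj huv hZ1).ne (zp_adj huv hZ2).ne hne r1.symm r2.symm
    · exact applyL2 z₂ hZ2 h2 r2
  · exact applyL2 z₁ hZ1 h1 r1

/-! ### Counting -/

lemma card_present_le [Fintype V] (f : PC G Δ u v) (x : V) (P : Finset (Fin Δ))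
    (hP : ∀ α ∈ P, present f x α) : P.card ≤ deg G x := by
  classical
  rw [deg, Set.ncard_eq_toFinset_card']
  refine Finset.card_le_card_of_injOn
    (fun α => if h : present f x α then h.choose else x) ?_ ?_
  · intro α hα
    have h : present f x α := hP α hα
    dsimp only
    rw [dif_pos h]
    exact Set.mem_toFinset.mpr h.choose_spec.1
  · intro α₁ hα₁ α₂ hα₂ heq
    have hp₁ : present f x α₁ := hP α₁ hα₁
    have hp₂ : present f x α₂ := hP α₂ hα₂
    dsimp only at heq
    rw [dif_pos hp₁, dif_pos hp₂] at heq
    have c₁ := hp₁.choose_spec.2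
    have c₂ := hp₂.choose_spec.2
    rw [heq] at c₁
    exact Option.some_injective _ (c₁.symm.trans c₂)

lemma card_present_le_erase [Fintype V] (f : PC G Δ u v) (x ex : V)
    (hex : f.c s(x,ex) = none) (hexnb : G.Adj x ex) (P : Finset (Fin Δ))
    (hP : ∀ α ∈ P, present f x α) : P.card + 1 ≤ deg G x := by
  classical
  rw [deg, Set.ncard_eq_toFinset_card']
  have hexmem : ex ∈ (G.neighborSet x).toFinset := Set.mem_toFinset.mpr hexnb
  have key : P.card ≤ ((G.neighborSet x).toFinset.erase ex).card := by
    refine Finset.card_le_card_of_injOn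
      (fun α => if h : present f x α then h.choose else x) ?_ ?_
    · intro α hα
      have h : present f x α := hP α hα
      dsimp only
      rw [dif_pos h]
      refine Finset.mem_erase.mpr ⟨?_, Set.mem_toFinset.mpr h.choose_spec.1⟩
      intro heq
      have := h.choose_spec.2
      rw [heq, hex] at this
      exact absurd this (by simp)
    · intro α₁ hα₁ α₂ hα₂ heq
      have hp₁ : present f x α₁ := hP α₁ hα₁
      have hp₂ : present f x α₂ := hP α₂ hα₂
      dsimp only at heq
      rw [dif_pos hp₁, dif_pos hp₂] at heq
      have c₁ := hp₁.choose_spec.2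
      have c₂ := hp₂.choose_spec.2
      rw [heq] at c₁
      exact Option.some_injective _ (c₁.symm.trans c₂)
  rw [Finset.card_erase_of_mem hexmem] at key
  have hpos : 1 ≤ (G.neighborSet x).toFinset.card :=
    Finset.card_pos.mpr ⟨ex, hexmem⟩
  omega

end VAL


/-- Vizing's Adjacency Lemma: If `G` is `Δ`-critical and
`uv ∈ E(G)`, then `u` has at least `max 2 (Δ - d(v) + 1)` neighbors of
degree `Δ`. -/
theorem stmt_5 {V : Type} [Fintype V] (Δ : ℕ) (hΔ : 2 ≤ Δ)
    (G : SimpleGraph V) (hG : IsCritical Δ G) (u v : V) (huv : G.Adj u v) :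
    max 2 (Δ - deg G v + 1) ≤ (G.neighborSet u ∩ {w | deg G w = Δ}).ncard := by
  classical
  obtain ⟨hdegle, -, hchrom, hdel⟩ := hG
  have hnc : ¬ EdgeColorable G Δ := VAL.not_colorable hchrom
  obtain ⟨f⟩ := VAL.exists_PC huv (by omega)
    (hdel s(u,v) (G.mem_edgeSet.mpr huv))
  set ZF : Finset V := Finset.univ.filter (fun z => ∃ l, VAL.Ch f (z :: l)) with hZF
  have hmemZF : ∀ z, z ∈ ZF ↔ ∃ l, VAL.Ch f (z :: l) := by
    intro z; rw [hZF, Finset.mem_filter]; simp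
  have hvZ : v ∈ ZF := (hmemZF v).mpr ⟨[], VAL.Ch.base⟩
  set missF : V → Finset (Fin Δ) :=
    (fun x => Finset.univ.filter (fun α => ¬ VAL.present f x α)) with hmissF
  have hmemmiss : ∀ x α, α ∈ missF x ↔ ¬ VAL.present f x α := by
    intro x α; rw [hmissF, Finset.mem_filter]; simp
  set presF : V → Finset (Fin Δ) :=
    (fun x => Finset.univ.filter (fun α => VAL.present f x α)) with hpresF
  have hmempres : ∀ x α, α ∈ presF x ↔ VAL.present f x α := by
    intro x α; rw [hpresF, Finset.mem_filter]; simp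
  have cardmp : ∀ x, (presF x).card + (missF x).card = Δ := by
    intro x
    rw [hmissF, hpresF]
    have := Finset.card_filter_add_card_filter_not
      (s := (Finset.univ : Finset (Fin Δ))) (p := fun α => VAL.present f x α)
    simpa using this
  have hdegv : deg G v ≤ Δ := hdegle v
  have hmissv : Δ - deg G v + 1 ≤ (missF v).card := by
    have h1 := VAL.card_present_le_erase f v u (by rw [Sym2.eq_swap]; exact f.dom_uv)
      huv.symm (presF v) (fun α hα => (hmempres v α).mp hα)
    have h2 := cardmp v
    omega
  have hγex : ∃ γ, ¬ VAL.present f u γ := by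
    have h1 := VAL.card_present_le_erase f u v f.dom_uv huv (presF u)
      (fun α hα => (hmempres u α).mp hα)
    have h2 := cardmp u
    have h3 : deg G u ≤ Δ := hdegle u
    obtain ⟨γ, hγ⟩ := Finset.card_pos.mp (by omega : 0 < (missF u).card)
    exact ⟨γ, (hmemmiss u γ).mp hγ⟩
  have hmissz : ∀ z, Δ - deg G z ≤ (missF z).card := by
    intro z
    have h1 := VAL.card_present_le f z (presF z) (fun α hα => (hmempres z α).mp hα)
    have h2 := cardmp z
    omega
  set S : Finset (Fin Δ) := ZF.biUnion missF with hS
  have hdisj : ∀ z₁ ∈ ZF, ∀ z₂ ∈ ZF, z₁ ≠ z₂ → Disjoint (missF z₁) (missF z₂) := by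
    intro z₁ hz₁ z₂ hz₂ hne
    rw [Finset.disjoint_left]
    intro δ hδ₁ hδ₂
    exact VAL.elem_two hnc huv hγex ((hmemZF z₁).mp hz₁) ((hmemZF z₂).mp hz₂) hne
      ((hmemmiss z₁ δ).mp hδ₁) ((hmemmiss z₂ δ).mp hδ₂)
  have cardS : S.card = ∑ z ∈ ZF, (missF z).card := Finset.card_biUnion hdisj
  have cardSle : S.card ≤ (ZF.erase v).card := by
    refine Finset.card_le_card_of_injOn
      (fun δ => if h : VAL.present f u δ then h.choose else u) ?_ ?_
    · intro δ hδ
      obtain ⟨z, hz, hδz⟩ := Finset.mem_biUnion.mp hδ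
      have hδz' : ¬ VAL.present f z δ := (hmemmiss z δ).mp hδz
      have hpu : VAL.present f u δ := VAL.elem_u hnc huv ((hmemZF z).mp hz) hδz'
      dsimp only
      rw [dif_pos hpu]
      obtain ⟨hadjy, hcy⟩ := hpu.choose_spec
      refine Finset.mem_erase.mpr ⟨?_, ?_⟩
      · intro heq
        rw [heq, f.dom_uv] at hcy
        exact absurd hcy (by simp)
      · refine (hmemZF _).mpr ?_
        obtain ⟨l, hch⟩ := (hmemZF z).mp hz
        exact ⟨z :: l, VAL.Ch.step hch hadjy hcy hδz'⟩
    · intro δ₁ hδ₁ δ₂ hδ₂ heq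
      obtain ⟨z₁', hz₁', hm₁⟩ := Finset.mem_biUnion.mp hδ₁
      obtain ⟨z₂', hz₂', hm₂⟩ := Finset.mem_biUnion.mp hδ₂
      have hp₁ : VAL.present f u δ₁ := VAL.elem_u hnc huv ((hmemZF _).mp hz₁')
        ((hmemmiss _ δ₁).mp hm₁)
      have hp₂ : VAL.present f u δ₂ := VAL.elem_u hnc huv ((hmemZF _).mp hz₂')
        ((hmemmiss _ δ₂).mp hm₂)
      dsimp only at heq
      rw [dif_pos hp₁, dif_pos hp₂] at heq
      have c₁ := hp₁.choose_spec.2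
      have c₂ := hp₂.choose_spec.2
      rw [heq] at c₁
      exact Option.some_injective _ (c₁.symm.trans c₂)
  have hsum : ∑ z ∈ ZF.erase v, (missF z).card + (missF v).card = ∑ z ∈ ZF, (missF z).card :=
    Finset.sum_erase_add ZF _ hvZ
  set D : Finset V := (ZF.erase v).filter (fun z => deg G z = Δ) with hD
  have hsplit : D.card + ((ZF.erase v).filter (fun z => ¬ deg G z = Δ)).card
      = (ZF.erase v).card := by
    rw [hD]
    exact Finset.card_filter_add_card_filter_not (p := fun z => deg G z = Δ)
  have hlow : ((ZF.erase v).filter (fun z => ¬ deg G z = Δ)).card ≤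
      ∑ z ∈ ZF.erase v, (missF z).card := by
    calc ((ZF.erase v).filter (fun z => ¬ deg G z = Δ)).card
        = ∑ _z ∈ (ZF.erase v).filter (fun z => ¬ deg G z = Δ), 1 := by simp
      _ ≤ ∑ z ∈ (ZF.erase v).filter (fun z => ¬ deg G z = Δ), (missF z).card := by
          refine Finset.sum_le_sum ?_
          intro z hz
          have hzne : ¬ deg G z = Δ := (Finset.mem_filter.mp hz).2
          have h1 := hmissz z
          have h2 := hdegle z
          omega
      _ ≤ ∑ z ∈ ZF.erase v, (missF z).card :=
          Finset.sum_le_sum_of_subset (Finset.filter_subset _ _)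
  have hDbound : Δ - deg G v + 1 ≤ D.card := by omega
  set T : Finset V := Finset.univ.filter (fun w => G.Adj u w ∧ deg G w = Δ) with hT
  have hmemT : ∀ w, w ∈ T ↔ G.Adj u w ∧ deg G w = Δ := by
    intro w; rw [hT, Finset.mem_filter]; simp
  have hsubDT : D ⊆ T := by
    intro z hz
    rw [hD, Finset.mem_filter] at hz
    obtain ⟨hz1, hz2⟩ := hz
    have hzZF := Finset.mem_of_mem_erase hz1
    exact (hmemT z).mpr ⟨VAL.zp_adj huv ((hmemZF z).mp hzZF), hz2⟩
  have hvD : v ∉ D := fun h => (Finset.mem_erase.mp (Finset.mem_filter.mp h).1).1 rfl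
  have hset : G.neighborSet u ∩ {w | deg G w = Δ} = ↑T := by
    ext x
    rw [Set.mem_inter_iff, Finset.mem_coe, hmemT x]
    exact Iff.rfl
  rw [hset, Set.ncard_coe_finset]
  have hTcard : D.card ≤ T.card := Finset.card_le_card hsubDT
  refine max_le ?_ ?_
  · by_cases hdv : deg G v = Δ
    · have hvT : v ∈ T := (hmemT v).mpr ⟨huv, hdv⟩
      have hins : insert v D ⊆ T := Finset.insert_subset hvT hsubDT
      have h5 := Finset.card_le_card hins
      rw [Finset.card_insert_of_notMem hvD] at h5
      omega
    · have : deg G v < Δ := lt_of_le_of_ne hdegv hdv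
      omega
  · omega
end

section
/- No 3-critical graph G contains five distinct vertices v1, v2, v3, v4, v5 such that v1 and v5 have degree 2 in G, v2, v3, v4 have degree 3 in G, and v1v2, v2v3, v3v4, v4v1, v3v5 are all edges of G (that is, a 4-cycle through a 2-vertex v1 whose opposite vertex v3 has a 2-neighbor v5). -/
open SimpleGraph

open SimpleGraph

open Classical in
noncomputable def patchF {V : Type} (e0 e1 e2 e3 e4 : Sym2 V) (m x1 x2 x3 x4 : Fin 3)
    (D : Sym2 V → Fin 3) : Sym2 V → Fin 3 :=
  fun x => if x = e0 then m else if x = e1 then x1 else if x = e2 then x2 else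
    if x = e3 then x3 else if x = e4 then x4 else D x

section patchF
variable {V : Type} (e0 e1 e2 e3 e4 : Sym2 V) (m x1 x2 x3 x4 : Fin 3) (D : Sym2 V → Fin 3)
  {x : Sym2 V}

lemma patchF_at0 (h : x = e0) : patchF e0 e1 e2 e3 e4 m x1 x2 x3 x4 D x = m := by
  unfold patchF; rw [if_pos h]

lemma patchF_at1 (h0 : x ≠ e0) (h : x = e1) : patchF e0 e1 e2 e3 e4 m x1 x2 x3 x4 D x = x1 := by
  unfold patchF; rw [if_neg h0, if_pos h]

lemma patchF_at2 (h0 : x ≠ e0) (h1 : x ≠ e1) (h : x = e2) :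
    patchF e0 e1 e2 e3 e4 m x1 x2 x3 x4 D x = x2 := by
  unfold patchF; rw [if_neg h0, if_neg h1, if_pos h]

lemma patchF_at3 (h0 : x ≠ e0) (h1 : x ≠ e1) (h2 : x ≠ e2) (h : x = e3) :
    patchF e0 e1 e2 e3 e4 m x1 x2 x3 x4 D x = x3 := by
  unfold patchF; rw [if_neg h0, if_neg h1, if_neg h2, if_pos h]

lemma patchF_at4 (h0 : x ≠ e0) (h1 : x ≠ e1) (h2 : x ≠ e2) (h3 : x ≠ e3) (h : x = e4) :
    patchF e0 e1 e2 e3 e4 m x1 x2 x3 x4 D x = x4 := by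
  unfold patchF; rw [if_neg h0, if_neg h1, if_neg h2, if_neg h3, if_pos h]

lemma patchF_atD (h0 : x ≠ e0) (h1 : x ≠ e1) (h2 : x ≠ e2) (h3 : x ≠ e3) (h4 : x ≠ e4) :
    patchF e0 e1 e2 e3 e4 m x1 x2 x3 x4 D x = D x := by
  unfold patchF; rw [if_neg h0, if_neg h1, if_neg h2, if_neg h3, if_neg h4]

end patchF

open Classical in
noncomputable def totalize {V : Type} (G' : SimpleGraph V) (D : G'.edgeSet → Fin 3) :
    Sym2 V → Fin 3 :=
  fun x => if h : x ∈ G'.edgeSet then D ⟨x, h⟩ else 0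

lemma totalize_coe {V : Type} (G' : SimpleGraph V) (D : G'.edgeSet → Fin 3)
    (f : G'.edgeSet) : totalize G' D (f : Sym2 V) = D f := by
  unfold totalize; rw [dif_pos f.2]

lemma totalize_mem {V : Type} (G' : SimpleGraph V) (D : G'.edgeSet → Fin 3)
    (x : Sym2 V) (h : x ∈ G'.edgeSet) : totalize G' D x = D ⟨x, h⟩ := by
  unfold totalize; rw [dif_pos h]

private lemma neSymL {V : Type} {p q r s : V} (h1 : p ≠ r) (h2 : p ≠ s) :
    s(p, q) ≠ s(r, s) := by
  intro h
  rw [Sym2.eq_iff] at h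
  rcases h with ⟨h, -⟩ | ⟨h, -⟩
  exacts [h1 h, h2 h]

private lemma neSymR {V : Type} {p q r s : V} (h1 : q ≠ r) (h2 : q ≠ s) :
    s(p, q) ≠ s(r, s) := by
  intro h
  rw [Sym2.eq_iff] at h
  rcases h with ⟨-, h⟩ | ⟨-, h⟩
  exacts [h2 h, h1 h]


private lemma cross_edge {V : Type} {H : SimpleGraph V} {S : Set V} {u x : V}
    (w : H.Walk u x) (hu : u ∉ S) (hx : x ∈ S) :
    ∃ t z, H.Adj t z ∧ t ∉ S ∧ z ∈ S := by
  induction w with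
  | nil => exact absurd hx hu
  | @cons a b c h q ih =>
    by_cases hb : b ∈ S
    · exact ⟨a, b, h, hu, hb⟩
    · exact ih hb hx

private lemma int_two {V : Type} {H : SimpleGraph V} {x y : V} (p : H.Walk x y)
    (hp : p.IsPath) (z : V) (hz : z ∈ p.support) (hzx : z ≠ x) (hzy : z ≠ y) :
    ∃ n1 n2, H.Adj z n1 ∧ H.Adj z n2 ∧ n1 ≠ n2 ∧ n1 ∈ p.support ∧ n2 ∈ p.support := by
  revert hp hz hzx hzy
  induction p with
  | nil =>
    intro hp hz hzx hzy
    simp only [Walk.support_nil, List.mem_singleton] at hz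
    exact absurd hz hzx
  | @cons a b c h q ih =>
    intro hp hz hzx hzy
    rw [Walk.support_cons, List.mem_cons] at hz
    rcases hz with hz | hz
    · exact absurd hz hzx
    rcases (Walk.cons_isPath_iff h q).mp hp with ⟨hq, ha⟩
    by_cases hzb : z = b
    · subst hzb
      have hnn : ¬ q.Nil := Walk.not_nil_of_ne hzy
      refine ⟨a, q.getVert 1, h.symm, q.adj_snd hnn, ?_, ?_, ?_⟩
      · rintro rfl
        apply ha
        rw [Walk.mem_support_iff_exists_getVert]
        refine ⟨1, rfl, ?_⟩
        rw [Walk.not_nil_iff_lt_length] at hnn; omega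
      · rw [Walk.support_cons, List.mem_cons]; exact Or.inl rfl
      · rw [Walk.support_cons, List.mem_cons]
        refine Or.inr ?_
        rw [Walk.mem_support_iff_exists_getVert]
        refine ⟨1, rfl, ?_⟩
        rw [Walk.not_nil_iff_lt_length] at hnn; omega
    · obtain ⟨n1, n2, h1, h2, h3, h4, h5⟩ := ih hq hz hzb hzy
      exact ⟨n1, n2, h1, h2, h3, by rw [Walk.support_cons, List.mem_cons]; exact Or.inr h4,
        by rw [Walk.support_cons, List.mem_cons]; exact Or.inr h5⟩

private lemma three_leaves {V : Type} {H : SimpleGraph V}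
    (hdeg : ∀ z a b c, H.Adj z a → H.Adj z b → H.Adj z c → a = b ∨ a = c ∨ b = c)
    {u x y : V}
    (hu : ∀ p q, H.Adj u p → H.Adj u q → p = q)
    (hx : ∀ p q, H.Adj x p → H.Adj x q → p = q)
    (hy : ∀ p q, H.Adj y p → H.Adj y q → p = q)
    (hux : u ≠ x) (huy : u ≠ y) (hxy : x ≠ y)
    (h1 : H.Reachable u x) (h2 : H.Reachable u y) : False := by
  classical
  obtain ⟨w0⟩ := h1.symm.trans h2
  obtain ⟨p, hp⟩ : ∃ p : H.Walk x y, p.IsPath := ⟨w0.bypass, w0.bypass_isPath⟩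
  have hunot : u ∉ p.support := by
    intro hmem
    obtain ⟨n1, n2, a1, a2, hne, _, _⟩ := int_two p hp u hmem hux huy
    exact hne (hu n1 n2 a1 a2)
  obtain ⟨w1⟩ := h1
  obtain ⟨t, z, hadj, htn, hzs⟩ := cross_edge (S := {v | v ∈ p.support}) w1 hunot
    (by exact p.start_mem_support)
  have hzs' : z ∈ p.support := hzs
  by_cases hzx : z = x
  · subst hzx
    have hnn : ¬ p.Nil := Walk.not_nil_of_ne hxy
    have hadj2 : H.Adj z (p.getVert 1) := p.adj_snd hnn
    have : t = p.getVert 1 := hx t _ hadj.symm hadj2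
    apply htn
    show t ∈ p.support
    rw [this, Walk.mem_support_iff_exists_getVert]
    refine ⟨1, rfl, ?_⟩
    rw [Walk.not_nil_iff_lt_length] at hnn; omega
  · by_cases hzy : z = y
    · subst hzy
      have hnn : ¬ p.reverse.Nil := Walk.not_nil_of_ne (Ne.symm hxy)
      have hadj2 : H.Adj z (p.reverse.getVert 1) := p.reverse.adj_snd hnn
      have : t = p.reverse.getVert 1 := hy t _ hadj.symm hadj2
      apply htn
      show t ∈ p.support
      have hmem : p.reverse.getVert 1 ∈ p.reverse.support := by
        rw [Walk.mem_support_iff_exists_getVert]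
        refine ⟨1, rfl, ?_⟩
        rw [Walk.not_nil_iff_lt_length] at hnn; omega
      rw [Walk.support_reverse, List.mem_reverse] at hmem
      rw [this]; exact hmem
    · obtain ⟨n1, n2, a1, a2, hne, hm1, hm2⟩ := int_two p hp z hzs' hzx hzy
      rcases hdeg z t n1 n2 hadj.symm a1 a2 with h' | h' | h'
      · exact htn (show t ∈ p.support from h' ▸ hm1)
      · exact htn (show t ∈ p.support from h' ▸ hm2)
      · exact hne h'


open Classical in
/-- Kempe swap of colors `ca`,`cc` on edges touching `R`. -/
noncomputable def swapC {V : Type} (G' : SimpleGraph V) (C : G'.edgeSet → Fin 3)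
    (ca cc : Fin 3) (R : Set V) : G'.edgeSet → Fin 3 :=
  fun e => if (C e = ca ∨ C e = cc) ∧ (∃ v ∈ (e : Sym2 V), v ∈ R) then
    (if C e = ca then cc else ca) else C e

private lemma swap_proper {V : Type} {G' : SimpleGraph V} {C : G'.edgeSet → Fin 3}
    {ca cc : Fin 3} (hne : ca ≠ cc) {R : Set V}
    (hC : ∀ e₁ e₂ : G'.edgeSet, e₁ ≠ e₂ → (∃ v, v ∈ (e₁ : Sym2 V) ∧ v ∈ (e₂ : Sym2 V)) →
      C e₁ ≠ C e₂)
    (hR : ∀ v u, v ∈ R → (∃ h : G'.Adj v u, C ⟨s(v,u), h⟩ = ca ∨ C ⟨s(v,u), h⟩ = cc) → u ∈ R) :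
    ∀ e₁ e₂ : G'.edgeSet, e₁ ≠ e₂ → (∃ v, v ∈ (e₁ : Sym2 V) ∧ v ∈ (e₂ : Sym2 V)) →
      swapC G' C ca cc R e₁ ≠ swapC G' C ca cc R e₂ := by
  classical
  -- if an edge is swapped, every endpoint of it is in R
  have hend : ∀ (e : G'.edgeSet) (v : V), v ∈ (e : Sym2 V) →
      ((C e = ca ∨ C e = cc) ∧ (∃ w ∈ (e : Sym2 V), w ∈ R)) → v ∈ R := by
    rintro e v hv ⟨hcol, w, hw, hwR⟩
    obtain ⟨w', hw'⟩ := Sym2.mem_iff_exists.mp hw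
    have hvmem : v = w ∨ v = w' := by
      rw [hw', Sym2.mem_iff] at hv; exact hv
    rcases hvmem with rfl | rfl
    · exact hwR
    · have hadj : G'.Adj w v := by
        have := e.2
        rw [hw'] at this
        exact (G'.mem_edgeSet).mp this
      refine hR w v hwR ⟨hadj, ?_⟩
      have : (⟨s(w,v), hadj⟩ : G'.edgeSet) = e := Subtype.ext hw'.symm
      rw [this]; exact hcol
  intro e₁ e₂ hne12 hshare
  obtain ⟨v, hv1, hv2⟩ := hshare
  have hCne : C e₁ ≠ C e₂ := hC e₁ e₂ hne12 ⟨v, hv1, hv2⟩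
  unfold swapC
  by_cases h1 : (C e₁ = ca ∨ C e₁ = cc) ∧ (∃ w ∈ (e₁ : Sym2 V), w ∈ R) <;>
  by_cases h2 : (C e₂ = ca ∨ C e₂ = cc) ∧ (∃ w ∈ (e₂ : Sym2 V), w ∈ R)
  · rw [if_pos h1, if_pos h2]
    rcases h1.1 with hc1 | hc1 <;> rcases h2.1 with hc2 | hc2
    · exact absurd (hc1.trans hc2.symm) hCne
    · rw [if_pos hc1, if_neg (by rw [hc2]; exact fun h => hne h.symm)]; exact hne.symm
    · rw [if_neg (by rw [hc1]; exact fun h => hne h.symm), if_pos hc2]; exact hne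
    · exact absurd (hc1.trans hc2.symm) hCne
  · -- e₁ swapped, e₂ not
    rw [if_pos h1, if_neg h2]
    have hvR : v ∈ R := hend e₁ v hv1 h1
    have hc2 : ¬(C e₂ = ca ∨ C e₂ = cc) := fun hc => h2 ⟨hc, v, hv2, hvR⟩
    push_neg at hc2
    rcases h1.1 with hc1 | hc1
    · rw [if_pos hc1]; exact fun h => hc2.2 h.symm
    · rw [if_neg (by rw [hc1]; exact fun h => hne h.symm)]; exact fun h => hc2.1 h.symm
  · rw [if_neg h1, if_pos h2]
    have hvR : v ∈ R := hend e₂ v hv2 h2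
    have hc1 : ¬(C e₁ = ca ∨ C e₁ = cc) := fun hc => h1 ⟨hc, v, hv1, hvR⟩
    push_neg at hc1
    rcases h2.1 with hc2 | hc2
    · rw [if_pos hc2]; exact hc1.2
    · rw [if_neg (by rw [hc2]; exact fun h => hne h.symm)]; exact hc1.1
  · rw [if_neg h1, if_neg h2]; exact hCne

section swapCvals
variable {V : Type} {G' : SimpleGraph V} {C : G'.edgeSet → Fin 3} {ca cc : Fin 3} {R : Set V}

lemma swapC_pos_ca (f : G'.edgeSet) (h : C f = ca) (hv : ∃ v ∈ (f : Sym2 V), v ∈ R) :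
    swapC G' C ca cc R f = cc := by
  unfold swapC; rw [if_pos ⟨Or.inl h, hv⟩, if_pos h]

lemma swapC_pos_cc (f : G'.edgeSet) (h : C f = cc) (hne : C f ≠ ca)
    (hv : ∃ v ∈ (f : Sym2 V), v ∈ R) : swapC G' C ca cc R f = ca := by
  unfold swapC; rw [if_pos ⟨Or.inr h, hv⟩, if_neg hne]

lemma swapC_not_col (f : G'.edgeSet) (h1 : C f ≠ ca) (h2 : C f ≠ cc) :
    swapC G' C ca cc R f = C f := by
  unfold swapC
  rw [if_neg]
  rintro ⟨hc | hc, -⟩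
  exacts [h1 hc, h2 hc]

lemma swapC_not_mem (f : G'.edgeSet) (h : ¬ ∃ v ∈ (f : Sym2 V), v ∈ R) :
    swapC G' C ca cc R f = C f := by
  unfold swapC
  rw [if_neg]
  rintro ⟨-, hv⟩
  exact h hv

end swapCvals

def kempeH {V : Type} (G' : SimpleGraph V) (C : G'.edgeSet → Fin 3) (ca cc : Fin 3) :
    SimpleGraph V where
  Adj p q := ∃ h : G'.Adj p q, C ⟨s(p,q), h⟩ = ca ∨ C ⟨s(p,q), h⟩ = cc
  symm := ⟨by
    rintro p q ⟨h, hcol⟩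
    refine ⟨h.symm, ?_⟩
    have hv : (⟨s(q,p), h.symm⟩ : G'.edgeSet) = ⟨s(p,q), h⟩ := Subtype.ext Sym2.eq_swap
    rw [hv]; exact hcol⟩
  loopless := ⟨by rintro p ⟨h, -⟩; exact G'.irrefl h⟩

lemma kempeH_adj {V : Type} {G' : SimpleGraph V} {C : G'.edgeSet → Fin 3} {ca cc : Fin 3}
    {p q : V} : (kempeH G' C ca cc).Adj p q ↔
      ∃ h : G'.Adj p q, C ⟨s(p,q), h⟩ = ca ∨ C ⟨s(p,q), h⟩ = cc := Iff.rfl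

private lemma local_ext {V : Type} {G : SimpleGraph V} {G' : SimpleGraph V}
    {v1 v2 v3 v4 v5 x2 x4 w : V}
    (hG'E : G'.edgeSet = G.edgeSet \ {s(v3, v5)})
    (n12 : v1 ≠ v2) (n13 : v1 ≠ v3) (n14 : v1 ≠ v4) (n15 : v1 ≠ v5)
    (n23 : v2 ≠ v3) (n24 : v2 ≠ v4) (n25 : v2 ≠ v5)
    (n34 : v3 ≠ v4) (n35 : v3 ≠ v5) (n45 : v4 ≠ v5)
    (hx2v1 : x2 ≠ v1) (hx2v2 : x2 ≠ v2) (hx2v3 : x2 ≠ v3)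
    (hx4v1 : x4 ≠ v1) (hx4v3 : x4 ≠ v3) (hx4v4 : x4 ≠ v4)
    (hwv3 : w ≠ v3) (hwv5 : w ≠ v5)
    (inc1 : ∀ e ∈ G.edgeSet, v1 ∈ e → e = s(v1,v2) ∨ e = s(v4,v1))
    (inc2 : ∀ e ∈ G.edgeSet, v2 ∈ e → e = s(v1,v2) ∨ e = s(v2,v3) ∨ e = s(v2,x2))
    (inc3 : ∀ e ∈ G.edgeSet, v3 ∈ e → e = s(v2,v3) ∨ e = s(v3,v4) ∨ e = s(v3,v5))
    (inc4 : ∀ e ∈ G.edgeSet, v4 ∈ e → e = s(v3,v4) ∨ e = s(v4,v1) ∨ e = s(v4,x4))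
    (inc5 : ∀ e ∈ G.edgeSet, v5 ∈ e → e = s(v3,v5) ∨ e = s(v5,w))
    (e2x e4x e5w : G'.edgeSet)
    (he2x : (e2x : Sym2 V) = s(v2,x2)) (he4x : (e4x : Sym2 V) = s(v4,x4))
    (he5w : (e5w : Sym2 V) = s(v5,w))
    (D : G'.edgeSet → Fin 3)
    (hD : ∀ f₁ f₂ : G'.edgeSet, f₁ ≠ f₂ →
      (∃ v, v ∈ (f₁ : Sym2 V) ∧ v ∈ (f₂ : Sym2 V)) → D f₁ ≠ D f₂)
    (α' a' b' β' m : Fin 3)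
    (hc1 : α' ≠ a') (hc2 : a' ≠ b') (hc3 : b' ≠ β') (hc4 : β' ≠ α')
    (hα2 : α' ≠ D e2x) (ha2 : a' ≠ D e2x) (hb4 : b' ≠ D e4x) (hβ4 : β' ≠ D e4x)
    (hma : m ≠ a') (hmb : m ≠ b') (hmw : m ≠ D e5w) :
    EdgeColorable G 3 := by
  classical
  -- Sym2 inequality facts
  have q1 : s(v1,v2) ≠ s(v3,v5) := neSymL n13 n15
  have q2 : s(v2,v3) ≠ s(v3,v5) := neSymL n23 n25
  have q3 : s(v3,v4) ≠ s(v3,v5) := neSymR n34.symm n45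
  have q4 : s(v4,v1) ≠ s(v3,v5) := neSymL n34.symm n45
  have q5 : s(v2,x2) ≠ s(v3,v5) := neSymL n23 n25
  have q6 : s(v4,x4) ≠ s(v3,v5) := neSymL n34.symm n45
  have q7 : s(v5,w) ≠ s(v3,v5) := neSymR hwv3 hwv5
  have q8 : s(v2,v3) ≠ s(v1,v2) := neSymR n13.symm n23.symm
  have q9 : s(v3,v4) ≠ s(v1,v2) := neSymL n13.symm n23.symm
  have q10 : s(v3,v4) ≠ s(v2,v3) := neSymR n24.symm n34.symm
  have q11 : s(v4,v1) ≠ s(v1,v2) := neSymL n14.symm n24.symm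
  have q12 : s(v4,v1) ≠ s(v2,v3) := neSymL n24.symm n34.symm
  have q13 : s(v4,v1) ≠ s(v3,v4) := neSymR n13 n14
  have q14 : s(v2,x2) ≠ s(v1,v2) := neSymR hx2v1 hx2v2
  have q15 : s(v2,x2) ≠ s(v2,v3) := neSymR hx2v2 hx2v3
  have q16 : s(v2,x2) ≠ s(v3,v4) := neSymL n23 n24
  have q17 : s(v2,x2) ≠ s(v4,v1) := neSymL n24 n12.symm
  have q18 : s(v4,x4) ≠ s(v1,v2) := neSymL n14.symm n24.symm
  have q19 : s(v4,x4) ≠ s(v2,v3) := neSymL n24.symm n34.symm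
  have q20 : s(v4,x4) ≠ s(v3,v4) := neSymR hx4v3 hx4v4
  have q21 : s(v4,x4) ≠ s(v4,v1) := neSymR hx4v4 hx4v1
  have q22 : s(v5,w) ≠ s(v1,v2) := neSymL n15.symm n25.symm
  have q23 : s(v5,w) ≠ s(v2,v3) := neSymL n25.symm n35.symm
  have q24 : s(v5,w) ≠ s(v3,v4) := neSymL n35.symm n45.symm
  have q25 : s(v5,w) ≠ s(v4,v1) := neSymL n45.symm n15.symm
  set T : Sym2 V → Fin 3 :=
    patchF s(v3,v5) s(v1,v2) s(v2,v3) s(v3,v4) s(v4,v1) m α' a' b' β' (totalize G' D)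
    with hT
  -- values on the three unchanged named edges
  have ev2x : T s(v2,x2) = D e2x := by
    rw [hT, patchF_atD _ _ _ _ _ _ _ _ _ _ _ q5 q14 q15 q16 q17, ← he2x, totalize_coe]
  have ev4x : T s(v4,x4) = D e4x := by
    rw [hT, patchF_atD _ _ _ _ _ _ _ _ _ _ _ q6 q18 q19 q20 q21, ← he4x, totalize_coe]
  have ev5w : T s(v5,w) = D e5w := by
    rw [hT, patchF_atD _ _ _ _ _ _ _ _ _ _ _ q7 q22 q23 q24 q25, ← he5w, totalize_coe]
  have ev0 : T s(v3,v5) = m := by rw [hT, patchF_at0]; rfl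
  have ev1 : T s(v1,v2) = α' := by rw [hT, patchF_at1 _ _ _ _ _ _ _ _ _ _ _ q1 rfl]
  have evA : T s(v2,v3) = a' := by rw [hT, patchF_at2 _ _ _ _ _ _ _ _ _ _ _ q2 q8 rfl]
  have evB : T s(v3,v4) = b' := by rw [hT, patchF_at3 _ _ _ _ _ _ _ _ _ _ _ q3 q9 q10 rfl]
  have evβ : T s(v4,v1) = β' := by rw [hT, patchF_at4 _ _ _ _ _ _ _ _ _ _ _ q4 q11 q12 q13 rfl]
  have keyv : ∀ (f₁ f₂ : G.edgeSet), f₁ ≠ f₂ → ∀ v, v ∈ (f₁ : Sym2 V) → v ∈ (f₂ : Sym2 V) →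
      ((f₁ : Sym2 V) = s(v3,v5) ∨ (f₁ : Sym2 V) = s(v1,v2) ∨ (f₁ : Sym2 V) = s(v2,v3) ∨
        (f₁ : Sym2 V) = s(v3,v4) ∨ (f₁ : Sym2 V) = s(v4,v1)) →
      T (f₁ : Sym2 V) ≠ T (f₂ : Sym2 V) := by
    intro f₁ f₂ hne v hv1 hv2 hsp
    have hneq : ∀ (x : Sym2 V), (f₁ : Sym2 V) = x → (f₂ : Sym2 V) = x → False := by
      intro x h1 h2
      exact hne (Subtype.ext (h1.trans h2.symm))
    rcases hsp with h1 | h1 | h1 | h1 | h1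
    · -- f₁ = v3v5, value m
      rw [h1, ev0]
      have hv : v = v3 ∨ v = v5 := by rw [h1, Sym2.mem_iff] at hv1; exact hv1
      rcases hv with rfl | rfl
      · rcases inc3 _ f₂.2 hv2 with h2 | h2 | h2
        · rw [h2, evA]; exact hma
        · rw [h2, evB]; exact hmb
        · exact absurd (hneq _ h1 h2) not_false
      · rcases inc5 _ f₂.2 hv2 with h2 | h2
        · exact absurd (hneq _ h1 h2) not_false
        · rw [h2, ev5w]; exact hmw
    · -- f₁ = v1v2, value α'
      rw [h1, ev1]
      have hv : v = v1 ∨ v = v2 := by rw [h1, Sym2.mem_iff] at hv1; exact hv1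
      rcases hv with rfl | rfl
      · rcases inc1 _ f₂.2 hv2 with h2 | h2
        · exact absurd (hneq _ h1 h2) not_false
        · rw [h2, evβ]; exact hc4.symm
      · rcases inc2 _ f₂.2 hv2 with h2 | h2 | h2
        · exact absurd (hneq _ h1 h2) not_false
        · rw [h2, evA]; exact hc1
        · rw [h2, ev2x]; exact hα2
    · -- f₁ = v2v3, value a'
      rw [h1, evA]
      have hv : v = v2 ∨ v = v3 := by rw [h1, Sym2.mem_iff] at hv1; exact hv1
      rcases hv with rfl | rfl
      · rcases inc2 _ f₂.2 hv2 with h2 | h2 | h2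
        · rw [h2, ev1]; exact hc1.symm
        · exact absurd (hneq _ h1 h2) not_false
        · rw [h2, ev2x]; exact ha2
      · rcases inc3 _ f₂.2 hv2 with h2 | h2 | h2
        · exact absurd (hneq _ h1 h2) not_false
        · rw [h2, evB]; exact hc2
        · rw [h2, ev0]; exact hma.symm
    · -- f₁ = v3v4, value b'
      rw [h1, evB]
      have hv : v = v3 ∨ v = v4 := by rw [h1, Sym2.mem_iff] at hv1; exact hv1
      rcases hv with rfl | rfl
      · rcases inc3 _ f₂.2 hv2 with h2 | h2 | h2
        · rw [h2, evA]; exact hc2.symm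
        · exact absurd (hneq _ h1 h2) not_false
        · rw [h2, ev0]; exact hmb.symm
      · rcases inc4 _ f₂.2 hv2 with h2 | h2 | h2
        · exact absurd (hneq _ h1 h2) not_false
        · rw [h2, evβ]; exact hc3
        · rw [h2, ev4x]; exact hb4
    · -- f₁ = v4v1, value β'
      rw [h1, evβ]
      have hv : v = v4 ∨ v = v1 := by rw [h1, Sym2.mem_iff] at hv1; exact hv1
      rcases hv with rfl | rfl
      · rcases inc4 _ f₂.2 hv2 with h2 | h2 | h2
        · rw [h2, evB]; exact hc3.symm
        · exact absurd (hneq _ h1 h2) not_false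
        · rw [h2, ev4x]; exact hβ4
      · rcases inc1 _ f₂.2 hv2 with h2 | h2
        · rw [h2, ev1]; exact hc4
        · exact absurd (hneq _ h1 h2) not_false
  refine ⟨fun e => T (e : Sym2 V), ?_⟩
  intro f₁ f₂ hne hsh
  obtain ⟨v, hv1, hv2⟩ := hsh
  by_cases hs1 : (f₁ : Sym2 V) = s(v3,v5) ∨ (f₁ : Sym2 V) = s(v1,v2) ∨
      (f₁ : Sym2 V) = s(v2,v3) ∨ (f₁ : Sym2 V) = s(v3,v4) ∨ (f₁ : Sym2 V) = s(v4,v1)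
  · exact keyv f₁ f₂ hne v hv1 hv2 hs1
  by_cases hs2 : (f₂ : Sym2 V) = s(v3,v5) ∨ (f₂ : Sym2 V) = s(v1,v2) ∨
      (f₂ : Sym2 V) = s(v2,v3) ∨ (f₂ : Sym2 V) = s(v3,v4) ∨ (f₂ : Sym2 V) = s(v4,v1)
  · exact (keyv f₂ f₁ hne.symm v hv2 hv1 hs2).symm
  push_neg at hs1 hs2
  obtain ⟨s10, s11, s12, s13, s14⟩ := hs1
  obtain ⟨s20, s21, s22, s23, s24⟩ := hs2
  have hm1 : (f₁ : Sym2 V) ∈ G'.edgeSet := by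
    rw [hG'E]; exact ⟨f₁.2, by simpa using s10⟩
  have hm2 : (f₂ : Sym2 V) ∈ G'.edgeSet := by
    rw [hG'E]; exact ⟨f₂.2, by simpa using s20⟩
  show T _ ≠ T _
  rw [hT, patchF_atD _ _ _ _ _ _ _ _ _ _ _ s10 s11 s12 s13 s14,
    patchF_atD _ _ _ _ _ _ _ _ _ _ _ s20 s21 s22 s23 s24,
    totalize_mem _ _ _ hm1, totalize_mem _ _ _ hm2]
  refine hD _ _ ?_ ⟨v, hv1, hv2⟩
  intro h
  have : (f₁ : Sym2 V) = (f₂ : Sym2 V) := Subtype.mk_eq_mk.mp h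
  exact hne (Subtype.ext this)

/-- No 3-critical graph contains a 4-cycle `v1 v2 v3 v4` through
a 2-vertex `v1` whose opposite vertex `v3` has a 2-neighbor `v5`. -/
theorem stmt_9 {V : Type} [Fintype V] (G : SimpleGraph V) (hG : IsCritical 3 G) :
    ¬ ∃ v1 v2 v3 v4 v5 : V,
      [v1, v2, v3, v4, v5].Pairwise (· ≠ ·) ∧
      deg G v1 = 2 ∧ deg G v5 = 2 ∧
      deg G v2 = 3 ∧ deg G v3 = 3 ∧ deg G v4 = 3 ∧
      G.Adj v1 v2 ∧ G.Adj v2 v3 ∧ G.Adj v3 v4 ∧ G.Adj v4 v1 ∧ G.Adj v3 v5 := by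
  classical
  rintro ⟨v1, v2, v3, v4, v5, hpw, hd1, hd5, hd2, hd3, hd4, a12, a23, a34, a41, a35⟩
  obtain ⟨hmax, -, hchi, hdel⟩ := hG
  simp only [List.pairwise_cons, List.mem_cons, List.mem_singleton, List.not_mem_nil] at hpw
  obtain ⟨h1, h2, h3, h4, -⟩ := hpw
  have n12 : v1 ≠ v2 := h1 v2 (by simp)
  have n13 : v1 ≠ v3 := h1 v3 (by simp)
  have n14 : v1 ≠ v4 := h1 v4 (by simp)
  have n15 : v1 ≠ v5 := h1 v5 (by simp)
  have n23 : v2 ≠ v3 := h2 v3 (by simp)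
  have n24 : v2 ≠ v4 := h2 v4 (by simp)
  have n25 : v2 ≠ v5 := h2 v5 (by simp)
  have n34 : v3 ≠ v4 := h3 v4 (by simp)
  have n35 : v3 ≠ v5 := h3 v5 (by simp)
  have n45 : v4 ≠ v5 := h4 v5 (by simp)
  clear h1 h2 h3 h4
  -- neighbour-set structure
  have pair2 : ∀ (v p q : V), p ≠ q → G.Adj v p → G.Adj v q → deg G v = 2 →
      G.neighborSet v = {p, q} := by
    intro v p q hpq hp hq hdg
    unfold deg at hdg
    refine (Set.eq_of_subset_of_ncard_le ?_ ?_ (Set.toFinite _)).symm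
    · rintro z (rfl | rfl)
      exacts [hp, hq]
    · rw [Set.ncard_pair hpq, hdg]
  have triple3 : ∀ (v p q r : V), p ≠ q → p ≠ r → q ≠ r → G.Adj v p → G.Adj v q →
      G.Adj v r → deg G v = 3 → G.neighborSet v = {p, q, r} := by
    intro v p q r hpq hpr hqr hp hq hr hdg
    unfold deg at hdg
    refine (Set.eq_of_subset_of_ncard_le ?_ ?_ (Set.toFinite _)).symm
    · rintro z (rfl | rfl | rfl)
      exacts [hp, hq, hr]
    · have hpm : p ∉ ({q, r} : Set V) := by
        simp only [Set.mem_insert_iff, Set.mem_singleton_iff]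
        push_neg
        exact ⟨hpq, hpr⟩
      have h3 : ({p, q, r} : Set V).ncard = 3 := by
        rw [Set.ncard_insert_of_notMem hpm (Set.toFinite _), Set.ncard_pair hqr]
      rw [h3, hdg]
  have third3 : ∀ (v p q : V), p ≠ q → G.Adj v p → G.Adj v q → deg G v = 3 →
      ∃ x, x ≠ p ∧ x ≠ q ∧ x ≠ v ∧ G.neighborSet v = {p, q, x} := by
    intro v p q hpq hp hq hdg
    have hnsub : ¬ (G.neighborSet v ⊆ {p, q}) := by
      intro h
      have hle := Set.ncard_le_ncard h ((Set.finite_singleton q).insert p)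
      rw [Set.ncard_pair hpq] at hle
      unfold deg at hdg
      omega
    obtain ⟨x, hxm, hxn⟩ := Set.not_subset.mp hnsub
    simp only [Set.mem_insert_iff, Set.mem_singleton_iff, not_or] at hxn
    have hxv : x ≠ v := fun h => G.irrefl (h ▸ hxm)
    refine ⟨x, hxn.1, hxn.2, hxv, ?_⟩
    exact triple3 v p q x hpq (fun h => hxn.1 h.symm) (fun h => hxn.2 h.symm) hp hq hxm hdg
  have N1 : G.neighborSet v1 = {v2, v4} := pair2 v1 v2 v4 n24 a12 a41.symm hd1
  have N3 : G.neighborSet v3 = {v2, v4, v5} :=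
    triple3 v3 v2 v4 v5 n24 n25 n45 a23.symm a34 a35 hd3
  obtain ⟨x2, hx2v1, hx2v3, hx2v2, N2⟩ := third3 v2 v1 v3 n13 a12.symm a23 hd2
  obtain ⟨x4, hx4v3, hx4v1, hx4v4, N4⟩ := third3 v4 v3 v1 n13.symm a34.symm a41 hd4
  obtain ⟨w, hwv3, hwv5, N5⟩ : ∃ w, w ≠ v3 ∧ w ≠ v5 ∧ G.neighborSet v5 = {v3, w} := by
    have hnsub : ¬ (G.neighborSet v5 ⊆ {v3}) := by
      intro h
      have hle := Set.ncard_le_ncard h (Set.finite_singleton v3)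
      rw [Set.ncard_singleton] at hle
      unfold deg at hd5
      omega
    obtain ⟨w, hwm, hwn⟩ := Set.not_subset.mp hnsub
    simp only [Set.mem_singleton_iff] at hwn
    have hwv : w ≠ v5 := fun h => G.irrefl (h ▸ hwm)
    exact ⟨w, hwn, hwv, pair2 v5 v3 w (fun h => hwn h.symm) a35.symm hwm hd5⟩
  -- incidence
  have incgen : ∀ (v : V) (e : Sym2 V), e ∈ G.edgeSet → v ∈ e →
      ∃ u, u ∈ G.neighborSet v ∧ e = s(v, u) := by
    intro v e he hv
    induction e with
    | _ x y =>
      rw [Sym2.mem_iff] at hv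
      rw [SimpleGraph.mem_edgeSet] at he
      rcases hv with rfl | rfl
      · exact ⟨y, he, rfl⟩
      · exact ⟨x, he.symm, Sym2.eq_swap⟩
  have inc1 : ∀ e ∈ G.edgeSet, v1 ∈ e → e = s(v1,v2) ∨ e = s(v4,v1) := by
    intro e he hv
    obtain ⟨u, hu, rfl⟩ := incgen v1 e he hv
    rw [N1] at hu
    simp only [Set.mem_insert_iff, Set.mem_singleton_iff] at hu
    rcases hu with rfl | rfl
    · exact Or.inl rfl
    · exact Or.inr Sym2.eq_swap
  have inc2 : ∀ e ∈ G.edgeSet, v2 ∈ e → e = s(v1,v2) ∨ e = s(v2,v3) ∨ e = s(v2,x2) := by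
    intro e he hv
    obtain ⟨u, hu, rfl⟩ := incgen v2 e he hv
    rw [N2] at hu
    simp only [Set.mem_insert_iff, Set.mem_singleton_iff] at hu
    rcases hu with rfl | rfl | rfl
    · exact Or.inl Sym2.eq_swap
    · exact Or.inr (Or.inl rfl)
    · exact Or.inr (Or.inr rfl)
  have inc3 : ∀ e ∈ G.edgeSet, v3 ∈ e → e = s(v2,v3) ∨ e = s(v3,v4) ∨ e = s(v3,v5) := by
    intro e he hv
    obtain ⟨u, hu, rfl⟩ := incgen v3 e he hv
    rw [N3] at hu
    simp only [Set.mem_insert_iff, Set.mem_singleton_iff] at hu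
    rcases hu with rfl | rfl | rfl
    · exact Or.inl Sym2.eq_swap
    · exact Or.inr (Or.inl rfl)
    · exact Or.inr (Or.inr rfl)
  have inc4 : ∀ e ∈ G.edgeSet, v4 ∈ e → e = s(v3,v4) ∨ e = s(v4,v1) ∨ e = s(v4,x4) := by
    intro e he hv
    obtain ⟨u, hu, rfl⟩ := incgen v4 e he hv
    rw [N4] at hu
    simp only [Set.mem_insert_iff, Set.mem_singleton_iff] at hu
    rcases hu with rfl | rfl | rfl
    · exact Or.inl Sym2.eq_swap
    · exact Or.inr (Or.inl rfl)
    · exact Or.inr (Or.inr rfl)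
  have inc5 : ∀ e ∈ G.edgeSet, v5 ∈ e → e = s(v3,v5) ∨ e = s(v5,w) := by
    intro e he hv
    obtain ⟨u, hu, rfl⟩ := incgen v5 e he hv
    rw [N5] at hu
    simp only [Set.mem_insert_iff, Set.mem_singleton_iff] at hu
    rcases hu with rfl | rfl
    · exact Or.inl Sym2.eq_swap
    · exact Or.inr rfl
  -- adjacency to the third neighbours
  have a2x : G.Adj v2 x2 := by
    have : x2 ∈ G.neighborSet v2 := by rw [N2]; simp
    exact this
  have a4x : G.Adj v4 x4 := by
    have : x4 ∈ G.neighborSet v4 := by rw [N4]; simp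
    exact this
  have a5w : G.Adj v5 w := by
    have : w ∈ G.neighborSet v5 := by rw [N5]; simp
    exact this
  -- the graph with one edge deleted, and its 3-edge-colouring
  set G' : SimpleGraph V := G.deleteEdges {s(v3,v5)} with hG'def
  have hG'E : G'.edgeSet = G.edgeSet \ {s(v3,v5)} := SimpleGraph.edgeSet_deleteEdges _
  have hnc : ¬ EdgeColorable G 3 := by
    intro h
    have hle : sInf {n | EdgeColorable G n} ≤ 3 := Nat.sInf_le h
    have : chromIndex G ≤ 3 := hle
    omega
  have hcur : chromIndex G' = 3 := hdel _ ((G.mem_edgeSet).mpr a35)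
  obtain ⟨C, hC⟩ : EdgeColorable G' 3 := by
    have hne0 : {n | EdgeColorable G' n}.Nonempty := by
      by_contra hemp
      rw [Set.not_nonempty_iff_eq_empty] at hemp
      have : chromIndex G' = 0 := by unfold chromIndex; rw [hemp, Nat.sInf_empty]
      omega
    have hmem := Nat.sInf_mem hne0
    have heq : sInf {n | EdgeColorable G' n} = 3 := hcur
    rw [heq] at hmem
    exact hmem
    -- the seven relevant edges of G'
  have mke : ∀ (p q : V), G.Adj p q → s(p,q) ≠ s(v3,v5) → s(p,q) ∈ G'.edgeSet := by
    intro p q h hne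
    rw [hG'E]
    exact ⟨(G.mem_edgeSet).mpr h, by simpa using hne⟩
  set e12 : G'.edgeSet := ⟨s(v1,v2), mke v1 v2 a12 (neSymL n13 n15)⟩ with he12def
  set e23 : G'.edgeSet := ⟨s(v2,v3), mke v2 v3 a23 (neSymL n23 n25)⟩ with he23def
  set e34 : G'.edgeSet := ⟨s(v3,v4), mke v3 v4 a34 (neSymR n34.symm n45)⟩ with he34def
  set e41 : G'.edgeSet := ⟨s(v4,v1), mke v4 v1 a41 (neSymL n34.symm n45)⟩ with he41def
  set e2x : G'.edgeSet := ⟨s(v2,x2), mke v2 x2 a2x (neSymL n23 n25)⟩ with he2xdef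
  set e4x : G'.edgeSet := ⟨s(v4,x4), mke v4 x4 a4x (neSymL n34.symm n45)⟩ with he4xdef
  set e5w : G'.edgeSet := ⟨s(v5,w), mke v5 w a5w (neSymR hwv3 hwv5)⟩ with he5wdef
  -- basic colour distinctions
  have hCne : ∀ (f₁ f₂ : G'.edgeSet) (v : V), (f₁ : Sym2 V) ≠ (f₂ : Sym2 V) →
      v ∈ (f₁ : Sym2 V) → v ∈ (f₂ : Sym2 V) → C f₁ ≠ C f₂ := by
    intro f₁ f₂ v hne hm1 hm2
    exact hC f₁ f₂ (fun h => hne (congrArg Subtype.val h)) ⟨v, hm1, hm2⟩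
  have memL : ∀ p q : V, p ∈ s(p,q) := fun p q => Sym2.mem_iff.mpr (Or.inl rfl)
  have memR : ∀ p q : V, q ∈ s(p,q) := fun p q => Sym2.mem_iff.mpr (Or.inr rfl)
  have dA : C e12 ≠ C e23 :=
    hCne _ _ v2 (neSymR n13.symm n23.symm).symm (memR v1 v2) (memL v2 v3)
  have dB : C e23 ≠ C e34 :=
    hCne _ _ v3 (neSymL n23 n24) (memR v2 v3) (memL v3 v4)
  have dC : C e34 ≠ C e41 :=
    hCne _ _ v4 (neSymR n13 n14).symm (memR v3 v4) (memL v4 v1)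
  have dD : C e41 ≠ C e12 :=
    hCne _ _ v1 (neSymL n14.symm n24.symm) (memR v4 v1) (memL v1 v2)
  have dE : C e2x ≠ C e12 :=
    hCne _ _ v2 (neSymR hx2v1 hx2v2) (memL v2 x2) (memR v1 v2)
  have dF : C e2x ≠ C e23 :=
    hCne _ _ v2 (neSymR hx2v2 hx2v3) (memL v2 x2) (memL v2 v3)
  have dG : C e4x ≠ C e34 :=
    hCne _ _ v4 (neSymR hx4v3 hx4v4) (memL v4 x4) (memR v3 v4)
  have dH : C e4x ≠ C e41 :=
    hCne _ _ v4 (neSymR hx4v4 hx4v1) (memL v4 x4) (memL v4 v1)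
  -- the packaged local-recolouring step
  have LOC : ∀ (D : G'.edgeSet → Fin 3),
      (∀ f₁ f₂ : G'.edgeSet, f₁ ≠ f₂ →
        (∃ v, v ∈ (f₁ : Sym2 V) ∧ v ∈ (f₂ : Sym2 V)) → D f₁ ≠ D f₂) →
      ∀ α' a' b' β' m : Fin 3,
      α' ≠ a' → a' ≠ b' → b' ≠ β' → β' ≠ α' →
      α' ≠ D e2x → a' ≠ D e2x → b' ≠ D e4x → β' ≠ D e4x →
      m ≠ a' → m ≠ b' → m ≠ D e5w → False := by
    intro D hD α' a' b' β' m h1 h2 h3 h4 h5 h6 h7 h8 h9 h10 h11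
    exact hnc (local_ext hG'E n12 n13 n14 n15 n23 n24 n25 n34 n35 n45
      hx2v1 hx2v2 hx2v3 hx4v1 hx4v3 hx4v4 hwv3 hwv5 inc1 inc2 inc3 inc4 inc5
      e2x e4x e5w rfl rfl rfl D hD α' a' b' β' m h1 h2 h3 h4 h5 h6 h7 h8 h9 h10 h11)
  by_cases hw1 : C e5w = C e23 ∨ C e5w = C e34
  · -- easy case: the colour of the pendant edge at v5 appears at v3
    obtain ⟨m, hm1, hm2⟩ : ∃ m : Fin 3, m ≠ C e23 ∧ m ≠ C e34 := by
      have : ∀ p q : Fin 3, p ≠ q → ∃ m, m ≠ p ∧ m ≠ q := by decide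
      exact this _ _ dB
    refine LOC C hC (C e12) (C e23) (C e34) (C e41) m dA dB dC dD dE.symm dF.symm dG.symm
      dH.symm hm1 hm2 ?_
    rcases hw1 with h | h <;> rw [h]
    exacts [hm1, hm2]
  push_neg at hw1
  obtain ⟨hwa, hwb⟩ := hw1
  have fin3 : ∀ p q r x : Fin 3, p ≠ q → p ≠ r → q ≠ r → (x = p ∨ x = q ∨ x = r) := by decide
  have hg2 : C e2x = C e34 ∨ C e2x = C e5w := by
    rcases fin3 (C e23) (C e34) (C e5w) (C e2x) dB hwa.symm hwb.symm with h | h | h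
    · exact absurd h dF
    · exact Or.inl h
    · exact Or.inr h
  have hg4 : C e4x = C e23 ∨ C e4x = C e5w := by
    rcases fin3 (C e23) (C e34) (C e5w) (C e4x) dB hwa.symm hwb.symm with h | h | h
    · exact Or.inl h
    · exact absurd h dG
    · exact Or.inr h
  have hcacw : C e23 ≠ C e5w := hwa.symm
  rcases hg4 with hg4 | hg4
  · rcases hg2 with hg2 | hg2
    · -- γ2 = b, γ4 = a
      exact LOC C hC (C e5w) (C e23) (C e5w) (C e34) (C e34)
        hwa hwa.symm hwb hwb.symm
        (by rw [hg2]; exact hwb) (by rw [hg2]; exact dB)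
        (by rw [hg4]; exact hwa) (by rw [hg4]; exact dB.symm)
        dB.symm hwb.symm hwb.symm
    · -- γ2 = c', γ4 = a
      exact LOC C hC (C e23) (C e34) (C e5w) (C e34) (C e23)
        dB hwb.symm hwb dB.symm
        (by rw [hg2]; exact hcacw) (by rw [hg2]; exact hwb.symm)
        (by rw [hg4]; exact hwa) (by rw [hg4]; exact dB.symm)
        dB hwa.symm hwa.symm
  · rcases hg2 with hg2 | hg2
    · -- γ2 = b, γ4 = c'
      exact LOC C hC (C e23) (C e5w) (C e23) (C e34) (C e34)
        hcacw hwa dB dB.symm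
        (by rw [hg2]; exact dB) (by rw [hg2]; exact hwb)
        (by rw [hg4]; exact hwa.symm) (by rw [hg4]; exact hwb.symm)
        hwb.symm dB.symm hwb.symm
    · -- γ2 = γ4 = c' : the Kempe-chain case
            -- γ2 = γ4 = c' : the Kempe-chain case.  First pin down the cycle colours.
      have hα : C e12 = C e34 := by
        rcases fin3 (C e23) (C e34) (C e5w) (C e12) dB hwa.symm hwb.symm with h | h | h
        · exact absurd h dA
        · exact h
        · exact absurd (hg2.trans h.symm) dE
      have hβ : C e41 = C e23 := by
        rcases fin3 (C e23) (C e34) (C e5w) (C e41) dB hwa.symm hwb.symm with h | h | h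
        · exact h
        · exact absurd h.symm dC
        · exact absurd (hg4.trans h.symm) dH
      set H : SimpleGraph V := kempeH G' C (C e23) (C e5w) with hHdef
      set R : Set V := {v | H.Reachable v1 v} with hRdef
      have hmemR : ∀ v, v ∈ R ↔ H.Reachable v1 v := fun v => Iff.rfl
      have hRcl : ∀ p q : V, p ∈ R →
          (∃ h : G'.Adj p q, C ⟨s(p,q), h⟩ = C e23 ∨ C ⟨s(p,q), h⟩ = C e5w) → q ∈ R := by
        intro p q hp hh
        exact (hmemR q).mpr (((hmemR p).mp hp).trans
          (SimpleGraph.Adj.reachable (kempeH_adj.mpr hh)))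
      have hDprop := swap_proper hcacw hC hRcl
      set D : G'.edgeSet → Fin 3 := swapC G' C (C e23) (C e5w) R with hDdef
      -- Kempe-graph adjacencies
      have hH23 : H.Adj v2 v3 := kempeH_adj.mpr ⟨G'.mem_edgeSet.mp e23.2, Or.inl rfl⟩
      have hH14 : H.Adj v1 v4 := by
        refine kempeH_adj.mpr ⟨(G'.mem_edgeSet.mp e41.2).symm, Or.inl ?_⟩
        have he : (⟨s(v1,v4), (G'.mem_edgeSet.mp e41.2).symm⟩ : G'.edgeSet) = e41 :=
          Subtype.ext Sym2.eq_swap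
        rw [he]
        exact hβ
      have hH2x : H.Adj v2 x2 := by
        refine kempeH_adj.mpr ⟨G'.mem_edgeSet.mp e2x.2, Or.inr ?_⟩
        exact hg2
      have hH5w : H.Adj v5 w := by
        refine kempeH_adj.mpr ⟨G'.mem_edgeSet.mp e5w.2, Or.inr ?_⟩
        exact rfl
      have hv1R : v1 ∈ R := (hmemR v1).mpr ⟨SimpleGraph.Walk.nil⟩
      have hv4R : v4 ∈ R := (hmemR v4).mpr hH14.reachable
      have hv2Rof3 : v3 ∈ R → v2 ∈ R :=
        fun h => (hmemR v2).mpr (((hmemR v3).mp h).trans hH23.symm.reachable)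
      have hv3Rof2 : v2 ∈ R → v3 ∈ R :=
        fun h => (hmemR v3).mpr (((hmemR v2).mp h).trans hH23.reachable)
      have hv5Rofw : w ∈ R → v5 ∈ R :=
        fun h => (hmemR v5).mpr (((hmemR w).mp h).trans hH5w.symm.reachable)
      have hx2to2 : x2 ∈ R → v2 ∈ R :=
        fun h => (hmemR v2).mpr (((hmemR x2).mp h).trans hH2x.symm.reachable)
      -- unconditional values of the swapped colouring
      have hD4x : D e4x = C e23 :=
        swapC_pos_cc e4x hg4 (fun h => hcacw (h.symm.trans hg4)) ⟨v4, memL v4 x4, hv4R⟩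
      by_cases h3R : v3 ∈ R <;> by_cases h5R : v5 ∈ R
      · -- v3 and v5 both in the chain of v1 : impossible (three leaves)
        have hdeg3 : ∀ z p q r : V, H.Adj z p → H.Adj z q → H.Adj z r →
            p = q ∨ p = r ∨ q = r := by
          intro z p q r hp hq hr
          by_contra hcon
          push_neg at hcon
          obtain ⟨hpq, hpr, hqr⟩ := hcon
          obtain ⟨g1, c1⟩ := kempeH_adj.mp hp
          obtain ⟨g2, c2⟩ := kempeH_adj.mp hq
          obtain ⟨g3, c3⟩ := kempeH_adj.mp hr
          have mkne : ∀ (p' q' : V) (gp : G'.Adj z p') (gq : G'.Adj z q'), p' ≠ q' →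
              (⟨s(z,p'), G'.mem_edgeSet.mpr gp⟩ : G'.edgeSet) ≠ ⟨s(z,q'), G'.mem_edgeSet.mpr gq⟩ := by
            intro p' q' gp gq hne hh
            have hh2 : s(z,p') = s(z,q') := Subtype.mk_eq_mk.mp hh
            rw [Sym2.eq_iff] at hh2
            rcases hh2 with ⟨-, hh2⟩ | ⟨hh2, -⟩
            · exact hne hh2
            · exact gq.ne hh2
          have k12 := hC _ _ (mkne p q g1 g2 hpq) ⟨z, memL z p, memL z q⟩
          have k13 := hC _ _ (mkne p r g1 g3 hpr) ⟨z, memL z p, memL z r⟩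
          have k23 := hC _ _ (mkne q r g2 g3 hqr) ⟨z, memL z q, memL z r⟩
          rcases c1 with c1 | c1 <;> rcases c2 with c2 | c2 <;> rcases c3 with c3 | c3 <;>
            first
              | exact k12 (c1.trans c2.symm)
              | exact k13 (c1.trans c3.symm)
              | exact k23 (c2.trans c3.symm)
        have leaf1 : ∀ p, H.Adj v1 p → p = v4 := by
          intro p hp
          obtain ⟨g, c⟩ := kempeH_adj.mp hp
          have g' := g
          rw [hG'def, SimpleGraph.deleteEdges_adj] at g'
          rcases inc1 _ ((G.mem_edgeSet).mpr g'.1) (memL v1 p) with h2 | h2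
          · exfalso
            have hp2 : p = v2 := by
              rw [Sym2.eq_iff] at h2
              rcases h2 with ⟨-, h⟩ | ⟨h, -⟩
              · exact h
              · exact absurd h n12
            subst hp2
            rcases c with c | c
            · exact dA c
            · exact hwb (hα.symm.trans c).symm
          · rw [Sym2.eq_iff] at h2
            rcases h2 with ⟨h, -⟩ | ⟨-, h⟩
            · exact absurd h n14
            · exact h
        have leaf3 : ∀ p, H.Adj v3 p → p = v2 := by
          intro p hp
          obtain ⟨g, c⟩ := kempeH_adj.mp hp
          have g' := g
          rw [hG'def, SimpleGraph.deleteEdges_adj] at g'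
          rcases inc3 _ ((G.mem_edgeSet).mpr g'.1) (memL v3 p) with h2 | h2 | h2
          · rw [Sym2.eq_iff] at h2
            rcases h2 with ⟨h, -⟩ | ⟨-, h⟩
            · exact absurd h n23.symm
            · exact h
          · exfalso
            have hp4 : p = v4 := by
              rw [Sym2.eq_iff] at h2
              rcases h2 with ⟨-, h⟩ | ⟨h, -⟩
              · exact h
              · exact absurd h n34
            subst hp4
            rcases c with c | c
            · exact dB c.symm
            · exact hwb c.symm
          · exact absurd (by rw [h2]; exact Set.mem_singleton _) g'.2
        have leaf5 : ∀ p, H.Adj v5 p → p = w := by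
          intro p hp
          obtain ⟨g, c⟩ := kempeH_adj.mp hp
          have g' := g
          rw [hG'def, SimpleGraph.deleteEdges_adj] at g'
          rcases inc5 _ ((G.mem_edgeSet).mpr g'.1) (memL v5 p) with h2 | h2
          · exact absurd (by rw [h2]; exact Set.mem_singleton _) g'.2
          · rw [Sym2.eq_iff] at h2
            rcases h2 with ⟨-, h⟩ | ⟨h, -⟩
            · exact h
            · exact absurd h hwv5.symm
        exact three_leaves hdeg3
          (fun p q hp hq => (leaf1 p hp).trans (leaf1 q hq).symm)
          (fun p q hp hq => (leaf3 p hp).trans (leaf3 q hq).symm)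
          (fun p q hp hq => (leaf5 p hp).trans (leaf5 q hq).symm)
          n13 n15 n35 ((hmemR v3).mp h3R) ((hmemR v5).mp h5R)
      · -- v3 ∈ R, v5 ∉ R
        have hD2x : D e2x = C e23 :=
          swapC_pos_cc e2x hg2 dF ⟨v2, memL v2 x2, hv2Rof3 h3R⟩
        have hD5w : D e5w = C e5w := by
          refine swapC_not_mem e5w ?_
          rintro ⟨v, hv, hvR⟩
          have hv' : v = v5 ∨ v = w := Sym2.mem_iff.mp hv
          rcases hv' with rfl | rfl
          · exact h5R hvR
          · exact h5R (hv5Rofw hvR)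
        exact LOC D hDprop (C e34) (C e5w) (C e34) (C e5w) (C e23)
          hwb.symm hwb hwb.symm hwb
          (by rw [hD2x]; exact dB.symm) (by rw [hD2x]; exact hwa)
          (by rw [hD4x]; exact dB.symm) (by rw [hD4x]; exact hwa)
          hcacw dB (by rw [hD5w]; exact hcacw)
      · -- v3 ∉ R, v5 ∈ R
        have hv2nR : v2 ∉ R := fun h => h3R (hv3Rof2 h)
        have hD2x : D e2x = C e2x := by
          refine swapC_not_mem e2x ?_
          rintro ⟨v, hv, hvR⟩
          have hv' : v = v2 ∨ v = x2 := Sym2.mem_iff.mp hv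
          rcases hv' with rfl | rfl
          · exact hv2nR hvR
          · exact hv2nR (hx2to2 hvR)
        have hD5w : D e5w = C e23 :=
          swapC_pos_cc e5w rfl hwa ⟨v5, memL v5 w, h5R⟩
        exact LOC D hDprop (C e34) (C e23) (C e34) (C e5w) (C e5w)
          dB.symm dB hwb.symm hwb
          (by rw [hD2x, hg2]; exact hwb.symm) (by rw [hD2x, hg2]; exact hcacw)
          (by rw [hD4x]; exact dB.symm) (by rw [hD4x]; exact hwa)
          hwa hwb (by rw [hD5w]; exact hwa)
      · -- v3 ∉ R, v5 ∉ R
        have hv2nR : v2 ∉ R := fun h => h3R (hv3Rof2 h)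
        have hD2x : D e2x = C e2x := by
          refine swapC_not_mem e2x ?_
          rintro ⟨v, hv, hvR⟩
          have hv' : v = v2 ∨ v = x2 := Sym2.mem_iff.mp hv
          rcases hv' with rfl | rfl
          · exact hv2nR hvR
          · exact hv2nR (hx2to2 hvR)
        have hD5w : D e5w = C e5w := by
          refine swapC_not_mem e5w ?_
          rintro ⟨v, hv, hvR⟩
          have hv' : v = v5 ∨ v = w := Sym2.mem_iff.mp hv
          rcases hv' with rfl | rfl
          · exact h5R hvR
          · exact h5R (hv5Rofw hvR)
        exact LOC D hDprop (C e23) (C e34) (C e5w) (C e34) (C e23)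
          dB hwb.symm hwb dB.symm
          (by rw [hD2x, hg2]; exact hcacw) (by rw [hD2x, hg2]; exact hwb.symm)
          (by rw [hD4x]; exact hwa) (by rw [hD4x]; exact dB.symm)
          dB hcacw (by rw [hD5w]; exact hcacw)
end
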